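/- arXiv:math/9803094 — 9 statements merged into one kernel-verified Lean document; each statement's English description precedes it below -/
import Mathlib

section
/- Every elementary lattice simplex of dimension at most 2 is basic: if k ≤ 2, n_0,…,n_k ∈ ℤ^r are affinely independent and {y − n_0 : y ∈ conv({n_0,…,n_k})} ∩ N_s = {0, n_1−n_0, …, n_k−n_0}, then {n_1−n_0,…,n_k−n_0} is a ℤ-basis of N_s. -/
noncomputable section

/-- coordinatewise cast of an integer vector into `ℝ^r` -/
def castZR {r : ℕ} (v : Fin r → ℤ) : Fin r → ℝ := fun j => (v j : ℝ)

lemma castZR_sub {r : ℕ} (v w : Fin r → ℤ) : castZR (v - w) = castZR v - castZR w := by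
  funext j; simp [castZR]

lemma castZR_zero {r : ℕ} : castZR (0 : Fin r → ℤ) = 0 := by
  funext j; simp [castZR]

lemma castZR_inj {r : ℕ} {v w : Fin r → ℤ} (h : castZR v = castZR w) : v = w := by
  funext j
  have := congrFun h j
  simp only [castZR, Int.cast_inj] at this
  exact this

lemma castZR_sum_zsmul {r : ℕ} {ι : Type*} [Fintype ι] (m : ι → ℤ) (f : ι → Fin r → ℤ) :
    castZR (∑ i, m i • f i) = ∑ i, (m i : ℝ) • castZR (f i) := by
  funext j
  simp only [castZR, Finset.sum_apply, Pi.smul_apply, smul_eq_mul]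
  push_cast
  rfl

/-- **Elementary lattice simplices of dimension at most 2 are basic.**
If `k ≤ 2`, `n 0, …, n k ∈ ℤ^r` are affinely independent and
`{y − n 0 : y ∈ conv({n 0,…,n k})} ∩ N_s = {0, n 1 − n 0, …, n k − n 0}`
(where `N_s = span_ℝ({n i − n 0}) ∩ ℤ^r`), then the differences
`n 1 − n 0, …, n k − n 0` form a `ℤ`-basis of `N_s`. -/
theorem elementary_simplex_dim_le_two_is_basic
    (r k : ℕ) (hr : 1 ≤ r) (hk2 : k ≤ 2) (hk : k ≤ r)
    (n : Fin (k + 1) → (Fin r → ℤ))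
    (haff : AffineIndependent ℝ (fun i => castZR (n i)))
    (helem :
      {v : Fin r → ℤ |
          castZR v ∈ Submodule.span ℝ
            (Set.range (fun i : Fin k => castZR (n i.succ - n 0))) ∧
          castZR v + castZR (n 0) ∈
            convexHull ℝ (Set.range (fun i => castZR (n i)))}
        = Set.range (fun i : Fin (k + 1) => n i - n 0)) :
    LinearIndependent ℤ (fun i : Fin k => n i.succ - n 0) ∧
    ∀ v : Fin r → ℤ,
      castZR v ∈ Submodule.span ℝ
          (Set.range (fun i : Fin k => castZR (n i.succ - n 0)))
        ↔ v ∈ Submodule.span ℤ (Set.range (fun i : Fin k => n i.succ - n 0)) := by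
  classical
  set E : Fin k → (Fin r → ℤ) := fun i => n i.succ - n 0 with hEdef
  set cE : Fin k → (Fin r → ℝ) := fun i => castZR (n i.succ - n 0) with hcEdef
  have hcE_eq : ∀ i, cE i = castZR (E i) := fun i => rfl
  have hcE_sub : ∀ i, cE i = castZR (n i.succ) - castZR (n 0) := by
    intro i; rw [hcEdef]; exact castZR_sub _ _
  -- ℝ-linear independence of cE
  have hli : LinearIndependent ℝ cE := by
    have h1 := (affineIndependent_iff_linearIndependent_vsub ℝ
      (fun i => castZR (n i)) 0).mp haff
    have h2 := h1.comp
      (fun i : Fin k => (⟨i.succ, Fin.succ_ne_zero i⟩ : {x : Fin (k+1) // x ≠ 0}))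
      (by intro a b hab
          have := congrArg Subtype.val hab
          simpa [Fin.succ_inj] using this)
    convert h2 using 1
    funext i
    simp [hcE_sub i, Function.comp, vsub_eq_sub]
    all_goals rfl
  -- uniqueness of real coefficients
  have huniq : ∀ a b : Fin k → ℝ, ∑ i, a i • cE i = ∑ i, b i • cE i → a = b := by
    intro a b hab
    have h0 : ∑ i, (a - b) i • cE i = 0 := by
      simp only [Pi.sub_apply, sub_smul, Finset.sum_sub_distrib, hab, sub_self]
    have := Fintype.linearIndependent_iff.mp hli (a - b) h0
    funext i
    have hi := this i
    simpa [sub_eq_zero] using hi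
  -- convex hull membership
  have hhull : ∀ t : Fin k → ℝ, (∀ i, 0 ≤ t i) → ∑ i, t i ≤ 1 →
      (∑ i, t i • cE i) + castZR (n 0) ∈
        convexHull ℝ (Set.range fun i => castZR (n i)) := by
    intro t ht hts
    set w : Fin (k+1) → ℝ := Fin.cases (1 - ∑ i, t i) t with hw
    have hsum : ∑ j, w j • castZR (n j) = (∑ i, t i • cE i) + castZR (n 0) := by
      rw [Fin.sum_univ_succ]
      have hterm : ∀ i : Fin k, t i • cE i = t i • castZR (n i.succ) - t i • castZR (n 0) := by
        intro i; rw [hcE_sub i, smul_sub]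
      simp only [hterm, Finset.sum_sub_distrib, ← Finset.sum_smul]
      simp only [hw, Fin.cases_zero, Fin.cases_succ]
      module
    rw [← hsum]
    apply Convex.sum_mem (convex_convexHull ℝ _)
    · intro j _
      induction j using Fin.cases with
      | zero => simpa [hw] using hts
      | succ i => simpa [hw] using ht i
    · rw [Fin.sum_univ_succ]
      simp [hw]
    · intro j _
      exact subset_convexHull ℝ _ ⟨j, rfl⟩
  -- key extraction
  have hkey : ∀ (u : Fin r → ℤ) (t : Fin k → ℝ), (∀ i, 0 ≤ t i) → ∑ i, t i ≤ 1 →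
      castZR u = ∑ i, t i • cE i →
      ∃ j : Fin (k+1), u = n j - n 0 := by
    intro u t ht hts hu
    have hmem : u ∈ {v : Fin r → ℤ |
        castZR v ∈ Submodule.span ℝ (Set.range cE) ∧
        castZR v + castZR (n 0) ∈ convexHull ℝ (Set.range (fun i => castZR (n i)))} := by
      constructor
      · rw [hu]
        exact Submodule.sum_mem _ fun i _ =>
          Submodule.smul_mem _ _ (Submodule.subset_span ⟨i, rfl⟩)
      · rw [hu]; exact hhull t ht hts
    rw [helem] at hmem
    obtain ⟨j, hj⟩ := hmem
    exact ⟨j, hj.symm⟩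
  -- ℤ-linear independence
  have hliZ : LinearIndependent ℤ E := by
    rw [Fintype.linearIndependent_iff]
    intro g hg i
    have hc : castZR (∑ i, g i • E i) = castZR 0 := by rw [hg]
    rw [castZR_sum_zsmul, castZR_zero] at hc
    have hz := Fintype.linearIndependent_iff.mp hli (fun i => (g i : ℝ))
      (by simpa [hcE_eq] using hc) i
    exact_mod_cast hz
  refine ⟨hliZ, fun v => ⟨?_, ?_⟩⟩
  · -- hard direction
    intro hv
    obtain ⟨c, hc⟩ := (Submodule.mem_span_range_iff_exists_fun ℝ).mp hv
    set t : Fin k → ℝ := fun i => Int.fract (c i) with htdef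
    have ht0 : ∀ i, 0 ≤ t i := fun i => Int.fract_nonneg _
    have ht1 : ∀ i, t i < 1 := fun i => Int.fract_lt_one _
    set u : Fin r → ℤ := v - ∑ i, ⌊c i⌋ • E i with hudef
    have hcastu : castZR u = ∑ i, t i • cE i := by
      rw [hudef, castZR_sub, castZR_sum_zsmul, ← hc]
      simp only [← hcE_eq]
      rw [← Finset.sum_sub_distrib]
      congr 1
      funext i
      rw [← sub_smul, Int.self_sub_floor]
    -- claim : t = 0
    have ht_zero : t = 0 := by
      by_cases hle : ∑ i, t i ≤ 1
      · obtain ⟨j, hj⟩ := hkey u t ht0 hle hcastu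
        induction j using Fin.cases with
        | zero =>
          have : castZR u = 0 := by rw [hj, sub_self, castZR_zero]
          have h0 : ∑ i, t i • cE i = ∑ i, (0:ℝ) • cE i := by
            rw [← hcastu, this]; simp
          exact huniq t 0 (by simpa using h0)
        | succ i =>
          exfalso
          have hcei : castZR u = cE i := by rw [hj]
          have h1 : ∑ i', t i' • cE i' =
              ∑ i', (fun i' => if i' = i then (1:ℝ) else 0) i' • cE i' := by
            rw [← hcastu, hcei]
            simp [Finset.sum_ite_eq']
          have := congrFun (huniq _ _ h1) i
          simp at this
          exact absurd (this ▸ ht1 i) (lt_irrefl 1)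
      · -- ∑ t > 1 : reflect
        exfalso
        push_neg at hle
        set s : Fin k → ℝ := fun i => 1 - t i with hsdef
        have hs0 : ∀ i, 0 ≤ s i := fun i => by
          have := (ht1 i).le; simp [hsdef]; linarith [ht1 i]
        have hssum : ∑ i, s i = (k : ℝ) - ∑ i, t i := by
          simp [hsdef, Finset.sum_sub_distrib]
        have hssum_le : ∑ i, s i ≤ 1 := by
          rw [hssum]
          have : (k : ℝ) ≤ 2 := by exact_mod_cast hk2
          linarith
        set u' : Fin r → ℤ := (∑ i, E i) - u with hu'def
        have hcastu' : castZR u' = ∑ i, s i • cE i := by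
          rw [hu'def, castZR_sub, hcastu]
          have : castZR (∑ i, E i) = ∑ i, cE i := by
            have := castZR_sum_zsmul (fun _ => (1:ℤ)) E
            simpa [hcE_eq] using this
          rw [this, ← Finset.sum_sub_distrib]
          congr 1
          funext i
          rw [hsdef, sub_smul, one_smul]
        obtain ⟨j, hj⟩ := hkey u' s hs0 hssum_le hcastu'
        induction j using Fin.cases with
        | zero =>
          have : castZR u' = 0 := by rw [hj, sub_self, castZR_zero]
          have h0 := huniq s 0 (by rw [← hcastu', this]; simp)
          -- then ∑ t = k, but k ≥ 1 needed; derive contradiction: each t i = 1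
          have hksum : ∑ i, t i = (k : ℝ) := by
            have := hssum
            rw [h0] at this
            simp at this
            linarith
          -- but each t i < 1, so ∑ t < k unless k = 0; handle both
          rcases Nat.eq_zero_or_pos k with hk0 | hkpos
          · subst hk0; simp at hle; linarith
          · have hi : t ⟨0, hkpos⟩ = 1 := by
              have := congrFun h0 ⟨0, hkpos⟩
              simp [hsdef] at this
              linarith
            exact absurd (hi ▸ ht1 ⟨0, hkpos⟩) (lt_irrefl 1)
        | succ i =>
          have hcei : castZR u' = cE i := by rw [hj]
          have h1 : ∑ i', s i' • cE i' =
              ∑ i', (fun i' => if i' = i then (1:ℝ) else 0) i' • cE i' := by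
            rw [← hcastu', hcei]
            simp [Finset.sum_ite_eq']
          have hs_eq := huniq _ _ h1
          have hsum1 : ∑ i', s i' = 1 := by
            rw [hs_eq]
            simp [Finset.sum_ite_eq']
          rw [hssum] at hsum1
          have : (k : ℝ) ≤ 2 := by exact_mod_cast hk2
          linarith
    -- conclude
    have hu0 : u = 0 := by
      apply castZR_inj
      rw [hcastu, castZR_zero, ht_zero]
      simp
    have hv_eq : v = ∑ i, ⌊c i⌋ • E i := by
      have h := hu0
      rw [hudef] at h
      exact sub_eq_zero.mp h
    rw [hv_eq]
    exact Submodule.sum_mem _ fun i _ =>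
      Submodule.smul_mem _ _ (Submodule.subset_span ⟨i, rfl⟩)
  · -- easy direction
    intro hv
    obtain ⟨c, hc⟩ := (Submodule.mem_span_range_iff_exists_fun ℤ).mp hv
    rw [← hc]
    rw [castZR_sum_zsmul]
    simp only [← hcE_eq]
    exact Submodule.sum_mem _ fun i _ =>
      Submodule.smul_mem _ _ (Submodule.subset_span ⟨i, rfl⟩)
end
end

section
/- (Necessary existence criterion.) Assume that Σ_{i=1}^r y_i ∈ ℤ for every y = (y_1,…,y_r) ∈ N (the Gorenstein condition). If there is a finite family B_1,…,B_m of r-element subsets of s_G ∩ N, each of which is a ℤ-basis of N, such that σ0 = pos(B_1) ∪ … ∪ pos(B_m) (as happens whenever the junior simplex admits a basic triangulation), then Hlb_N(σ0) = s_G ∩ N, i.e. every element of the Hilbert basis of σ0 is either a junior lattice point or one of e_1,…,e_r. -/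
noncomputable section

/-- coordinatewise cast of a rational vector into `ℝ^r` -/
def castQR {r : ℕ} (v : Fin r → ℚ) : Fin r → ℝ := fun i => (v i : ℝ)

/-- `pos(B)` : all linear combinations of the elements of the finite set `B ⊆ ℚ^r`
with nonnegative real coefficients. -/
def posR {r : ℕ} (B : Finset (Fin r → ℚ)) : Set (Fin r → ℝ) :=
  {y | ∃ c : (Fin r → ℚ) → ℝ, (∀ b, 0 ≤ c b) ∧ y = ∑ b ∈ B, c b • castQR b}

lemma castQR_sumQ {r : ℕ} (S : Finset (Fin r → ℚ)) (f : (Fin r → ℚ) → ℚ) :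
    castQR (∑ b ∈ S, f b • b) = ∑ b ∈ S, ((f b : ℝ)) • castQR b := by
  funext j
  simp only [castQR, Finset.sum_apply, Pi.smul_apply, smul_eq_mul]
  push_cast
  rfl

lemma castQR_sumZ {r : ℕ} (S : Finset (Fin r → ℚ)) (f : (Fin r → ℚ) → ℤ) :
    castQR (∑ b ∈ S, f b • b) = ∑ b ∈ S, ((f b : ℝ)) • castQR b := by
  funext j
  simp only [castQR, Finset.sum_apply, Pi.smul_apply]
  simp only [zsmul_eq_mul]
  push_cast
  rfl

lemma linIndep_real {r : ℕ} (S : Finset (Fin r → ℚ)) (hcard : S.card = r)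
    (hli : LinearIndependent ℤ (fun b : (S : Set (Fin r → ℚ)) => (b : Fin r → ℚ))) :
    LinearIndependent ℝ (fun b : (S : Set (Fin r → ℚ)) => castQR (b : Fin r → ℚ)) := by
  have hQ : LinearIndependent ℚ (fun b : (S : Set (Fin r → ℚ)) => (b : Fin r → ℚ)) :=
    (LinearIndependent.iff_fractionRing ℤ ℚ).1 hli
  have hcard' : Fintype.card (S : Set (Fin r → ℚ)) = r := by
    simpa using hcard
  have hspanQ : Submodule.span ℚ
      (Set.range (fun b : (S : Set (Fin r → ℚ)) => (b : Fin r → ℚ))) = ⊤ :=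
    hQ.span_eq_top_of_card_eq_finrank' (by rw [hcard', Module.finrank_fin_fun])
  have hrange : Set.range (fun b : (S : Set (Fin r → ℚ)) => (b : Fin r → ℚ))
      = (S : Set (Fin r → ℚ)) := Subtype.range_coe
  have hspanR : ⊤ ≤ Submodule.span ℝ
      (Set.range (fun b : (S : Set (Fin r → ℚ)) => castQR (b : Fin r → ℚ))) := by
    intro y _
    have hy : y = ∑ j, y j • (Pi.single j (1 : ℝ) : Fin r → ℝ) := by
      funext k
      simp [Pi.single_apply, Finset.sum_apply]
    rw [hy]
    refine Submodule.sum_mem _ (fun j _ => Submodule.smul_mem _ _ ?_)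
    have hmem : (Pi.single j (1 : ℚ) : Fin r → ℚ) ∈
        Submodule.span ℚ (S : Set (Fin r → ℚ)) := by
      rw [hrange] at hspanQ
      rw [hspanQ]; trivial
    obtain ⟨f, -, hf⟩ := Submodule.mem_span_finset.1 hmem
    have hcast : (Pi.single j (1 : ℝ) : Fin r → ℝ)
        = ∑ b ∈ S, ((f b : ℝ)) • castQR b := by
      rw [← castQR_sumQ S f, hf]
      funext k
      simp only [castQR, Pi.single_apply]
      split <;> norm_num
    rw [hcast]
    exact Submodule.sum_mem _ (fun b hb => Submodule.smul_mem _ _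
      (Submodule.subset_span ⟨⟨b, Finset.mem_coe.mpr hb⟩, rfl⟩))
  exact linearIndependent_of_top_le_span_of_card_eq_finrank hspanR
    (by simpa using hcard.trans (Module.finrank_fin_fun ℝ).symm)

/-- **Necessary existence criterion.** Assume the Gorenstein condition (all
coordinate sums of lattice vectors are integers).  If the positive orthant is
covered by cones over `r`-element subsets of `s_G ∩ N` which are `ℤ`-bases of
`N` (as happens whenever the junior simplex admits a basic triangulation),
then the Hilbert basis of `σ0` w.r.t. `N` equals `s_G ∩ N`. -/
theorem hilbert_basis_eq_junior_of_basic_cover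
    (r : ℕ) (hr : 2 ≤ r)
    (N : AddSubgroup (Fin r → ℚ))
    (hZN : ∀ v : Fin r → ℤ, (fun i => (v i : ℚ)) ∈ N)
    (hNd : ∃ d : ℕ, 0 < d ∧ ∀ x ∈ N, ∀ i, ∃ z : ℤ, (d : ℚ) * x i = (z : ℚ))
    (hGor : ∀ x ∈ N, ∃ z : ℤ, ∑ i, x i = (z : ℚ))
    (hexists : ∃ (m : ℕ) (B : Fin m → Finset (Fin r → ℚ)),
        (∀ i, (B i).card = r) ∧
        (∀ i, ∀ b ∈ B i, b ∈ N ∧ (∀ j, 0 ≤ b j) ∧ ∑ j, b j = 1) ∧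
        (∀ i, LinearIndependent ℤ
            (fun b : ((B i : Set (Fin r → ℚ))) => (b : Fin r → ℚ))) ∧
        (∀ i, (Submodule.span ℤ ((B i : Set (Fin r → ℚ))) : Set (Fin r → ℚ))
            = (N : Set (Fin r → ℚ))) ∧
        {y : Fin r → ℝ | ∀ j, 0 ≤ y j} = ⋃ i, posR (B i)) :
    {x : Fin r → ℚ | x ∈ N ∧ (∀ j, 0 ≤ x j) ∧ x ≠ 0 ∧
        ¬ ∃ a b : Fin r → ℚ, a ∈ N ∧ (∀ j, 0 ≤ a j) ∧ a ≠ 0 ∧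
            b ∈ N ∧ (∀ j, 0 ≤ b j) ∧ b ≠ 0 ∧ x = a + b}
      = {x : Fin r → ℚ | x ∈ N ∧ (∀ j, 0 ≤ x j) ∧ ∑ j, x j = 1} := by
  classical
  obtain ⟨m, B, hcard, hjun, hli, hspan, hcover⟩ := hexists
  ext x
  simp only [Set.mem_setOf_eq]
  constructor
  · rintro ⟨hxN, hxpos, hxne, hind⟩
    -- x is in the orthant, hence in some cone
    have hxcone : castQR x ∈ ⋃ i, posR (B i) := by
      rw [← hcover]
      exact fun j => show (0 : ℝ) ≤ (x j : ℝ) by exact_mod_cast hxpos j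
    obtain ⟨_, ⟨i, rfl⟩, c, hc0, hcx⟩ := hxcone
    set S := B i with hS
    -- integer representation of x
    have hxspan : x ∈ Submodule.span ℤ (S : Set (Fin r → ℚ)) := by
      have : x ∈ (Submodule.span ℤ (S : Set (Fin r → ℚ)) : Set (Fin r → ℚ)) := by
        rw [hspan i]; exact hxN
      exact this
    obtain ⟨f, -, hf⟩ := Submodule.mem_span_finset.1 hxspan
    -- real coefficients are unique : c b = f b on S
    have hLI := linIndep_real S (hcard i) (hli i)
    have hzero : ∑ b : (S : Set (Fin r → ℚ)),
        (c b.1 - (f b.1 : ℝ)) • castQR b.1 = 0 := by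
      have h1 : castQR x = ∑ b ∈ S, ((f b : ℝ)) • castQR b := by
        rw [← hf, castQR_sumZ]
      rw [Finset.sum_finset_coe (f := fun b => (c b - (f b : ℝ)) • castQR b)]
      simp only [sub_smul, Finset.sum_sub_distrib]
      rw [← h1, ← hcx, sub_self]
    have hceq : ∀ b ∈ S, c b = (f b : ℝ) := by
      intro b hb
      have h := Fintype.linearIndependent_iff.1 hLI
        (fun b : (S : Set (Fin r → ℚ)) => c b.1 - (f b.1 : ℝ)) hzero
        ⟨b, Finset.mem_coe.mpr hb⟩
      linarith [sub_eq_zero.1 h]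
    -- hence f b ≥ 0
    have hf0 : ∀ b ∈ S, 0 ≤ f b := by
      intro b hb
      have : (0 : ℝ) ≤ (f b : ℝ) := (hceq b hb) ▸ hc0 b
      exact_mod_cast this
    -- coordinate sum of x equals sum of f
    have hxsum : ∑ j, x j = ∑ b ∈ S, (f b : ℚ) := by
      calc ∑ j, x j = ∑ j, ∑ b ∈ S, (f b : ℚ) * b j := by
            rw [← hf]
            refine Finset.sum_congr rfl fun j _ => ?_
            simp [Finset.sum_apply, Pi.smul_apply, zsmul_eq_mul]
        _ = ∑ b ∈ S, (f b : ℚ) * ∑ j, b j := by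
            rw [Finset.sum_comm]
            simp [Finset.mul_sum]
        _ = ∑ b ∈ S, (f b : ℚ) := by
            refine Finset.sum_congr rfl fun b hb => ?_
            rw [(hjun i b hb).2.2, mul_one]
    -- the integer sum of coefficients is at least 1
    have h1le : 1 ≤ ∑ b ∈ S, f b := by
      by_contra h
      push_neg at h
      have hle0 : ∑ b ∈ S, f b ≤ 0 := by omega
      have hge0 : 0 ≤ ∑ b ∈ S, f b := Finset.sum_nonneg hf0
      have hsz : ∑ b ∈ S, f b = 0 := le_antisymm hle0 hge0
      have hall : ∀ b ∈ S, f b = 0 :=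
        (Finset.sum_eq_zero_iff_of_nonneg hf0).1 hsz
      apply hxne
      rw [← hf]
      exact Finset.sum_eq_zero fun b hb => by rw [hall b hb, zero_smul]
    rcases eq_or_lt_of_le h1le with heq | hlt
    · -- sum of coefficients is exactly 1
      refine ⟨hxN, hxpos, ?_⟩
      rw [hxsum]
      rw [show ∑ b ∈ S, ((f b : ℚ)) = ((∑ b ∈ S, f b : ℤ) : ℚ) by push_cast; ring]
      rw [← heq]; norm_num
    · -- sum ≥ 2 : contradiction with indecomposability
      exfalso
      have h2le : 2 ≤ ∑ b ∈ S, f b := hlt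
      -- find b0 with f b0 ≥ 1
      have hb0ex : ∃ b0 ∈ S, 1 ≤ f b0 := by
        by_contra h
        push_neg at h
        have : ∑ b ∈ S, f b ≤ 0 := Finset.sum_nonpos fun b hb => by
          have := h b hb; omega
        omega
      obtain ⟨b0, hb0S, hb01⟩ := hb0ex
      obtain ⟨hb0N, hb0pos, hb0sum⟩ := hjun i b0 hb0S
      -- the decomposition x = b0 + (x - b0)
      have hy : x - b0 = ∑ b ∈ S, (f b - if b = b0 then 1 else 0) • b := by
        have hsingle : ∑ b ∈ S, (if b = b0 then (1 : ℤ) else 0) • b = b0 := by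
          simp only [ite_smul, one_smul, zero_smul]
          rw [Finset.sum_ite_eq' S b0 (fun b => b)]
          simp [hb0S]
        rw [show (∑ b ∈ S, (f b - if b = b0 then 1 else 0) • b)
            = ∑ b ∈ S, (f b • b - (if b = b0 then (1:ℤ) else 0) • b) by
          refine Finset.sum_congr rfl fun b _ => ?_; rw [sub_smul]]
        rw [Finset.sum_sub_distrib, hf, hsingle]
      have hsubpos : ∀ j, 0 ≤ (x - b0) j := by
        intro j
        rw [hy]
        simp only [Finset.sum_apply, Pi.smul_apply]
        refine Finset.sum_nonneg fun b hb => ?_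
        rw [zsmul_eq_mul]
        refine mul_nonneg ?_ ((hjun i b hb).2.1 j)
        have : (0 : ℤ) ≤ f b - if b = b0 then 1 else 0 := by
          by_cases hbb : b = b0
          · subst hbb; simp; omega
          · simp [hbb]; exact hf0 b hb
        exact_mod_cast this
      have hsubsum : ∑ j, (x - b0) j = (∑ b ∈ S, (f b : ℚ)) - 1 := by
        simp only [Pi.sub_apply, Finset.sum_sub_distrib]
        rw [← hxsum, hxsum, hb0sum]
      have hsubne : x - b0 ≠ 0 := by
        intro h0
        have : ∑ j, (x - b0) j = 0 := by rw [h0]; simp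
        rw [hsubsum] at this
        have hc : ((∑ b ∈ S, f b : ℤ) : ℚ) - 1 = 0 := by
          push_cast; push_cast at this; linarith
        have : (∑ b ∈ S, f b : ℤ) = 1 := by exact_mod_cast sub_eq_zero.1 hc
        omega
      have hb0ne : b0 ≠ 0 := by
        intro h0
        rw [h0] at hb0sum
        simpa using hb0sum
      exact hind ⟨b0, x - b0, hb0N, hb0pos, hb0ne, AddSubgroup.sub_mem N hxN hb0N,
        hsubpos, hsubne, by ring⟩
  · rintro ⟨hxN, hxpos, hxsum⟩
    refine ⟨hxN, hxpos, ?_, ?_⟩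
    · intro h; rw [h] at hxsum; simpa using hxsum
    · rintro ⟨a, b, haN, hapos, hane, hbN, hbpos, hbne, hab⟩
      obtain ⟨za, hza⟩ := hGor a haN
      obtain ⟨zb, hzb⟩ := hGor b hbN
      have ha1 : (1 : ℚ) ≤ ∑ j, a j := by
        have h0 : (0 : ℚ) ≤ ∑ j, a j := Finset.sum_nonneg (fun j _ => hapos j)
        have hne : ∑ j, a j ≠ 0 := by
          intro h
          apply hane
          funext j
          have hall := (Finset.sum_eq_zero_iff_of_nonneg (fun k _ => hapos k)).1 h
          exact hall j (Finset.mem_univ j)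
        rw [hza] at h0 hne ⊢
        have : (0 : ℤ) < za := by exact_mod_cast lt_of_le_of_ne h0 (Ne.symm hne)
        exact_mod_cast (by omega : (1 : ℤ) ≤ za)
      have hb1 : (1 : ℚ) ≤ ∑ j, b j := by
        have h0 : (0 : ℚ) ≤ ∑ j, b j := Finset.sum_nonneg (fun j _ => hbpos j)
        have hne : ∑ j, b j ≠ 0 := by
          intro h
          apply hbne
          funext j
          have hall := (Finset.sum_eq_zero_iff_of_nonneg (fun k _ => hbpos k)).1 h
          exact hall j (Finset.mem_univ j)
        rw [hzb] at h0 hne ⊢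
        have : (0 : ℤ) < zb := by exact_mod_cast lt_of_le_of_ne h0 (Ne.symm hne)
        exact_mod_cast (by omega : (1 : ℤ) ≤ zb)
      have hsum2 : ∑ j, x j = ∑ j, a j + ∑ j, b j := by
        rw [hab]
        simp [Finset.sum_add_distrib]
      rw [hxsum] at hsum2
      linarith
end
end

section
/- The lattice points of the junior simplex of the singularity of type (1/l)(1,…,1,l−(r−1)) are exactly the r unit vectors together with the ν collinear points n^(j): s_G ∩ N = {e_1,…,e_r} ∪ {n^(j) : 1 ≤ j ≤ ν}, where n^(j) = (1/l)(j,…,j,l−j(r−1)). -/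
noncomputable section

/-- the generator `(1/l)(1,…,1,l−(r−1))` of the lattice of weights -/
def wgt (l r : ℕ) : Fin r → ℚ :=
  fun i => (if (i : ℕ) + 1 = r then (l : ℚ) - ((r : ℚ) - 1) else 1) / l

/-- membership in the lattice `N = ℤ^r + ℤ·(1/l)(1,…,1,l−(r−1))` -/
def memN (l r : ℕ) (v : Fin r → ℚ) : Prop :=
  ∃ (a : Fin r → ℤ) (c : ℤ), v = (fun i => (a i : ℚ)) + c • wgt l r

/-- the point `n⁽ʲ⁾ = (1/l)(j,…,j,l−j(r−1))` -/
def nj (l r j : ℕ) : Fin r → ℚ :=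
  fun i => (if (i : ℕ) + 1 = r then (l : ℚ) - (j : ℚ) * ((r : ℚ) - 1) else (j : ℚ)) / l

lemma sum_if_last (n : ℕ) (X Y : ℚ) :
    ∑ i : Fin (n+1), (if (i : ℕ) + 1 = n + 1 then X else Y) = X + n * Y := by
  rw [Fin.sum_univ_castSucc]
  have h1 : ∀ j : Fin n, (if ((j.castSucc : Fin (n+1)) : ℕ) + 1 = n + 1 then X else Y) = Y := by
    intro j
    rw [if_neg]
    have := j.isLt
    simp only [Fin.coe_castSucc]
    omega
  rw [Finset.sum_congr rfl fun j _ => h1 j, Finset.sum_const, Finset.card_univ,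
      Fintype.card_fin, if_pos (by simp), nsmul_eq_mul]
  ring

lemma wgt_sum (l n : ℕ) (hl : l ≠ 0) : ∑ k, wgt l (n+1) k = 1 := by
  have h : ∀ k : Fin (n+1), wgt l (n+1) k
      = if (k : ℕ) + 1 = n + 1 then ((l:ℚ) - n)/l else 1/l := by
    intro k; unfold wgt; split <;> push_cast <;> ring
  rw [Finset.sum_congr rfl fun k _ => h k, sum_if_last]
  have : (l:ℚ) ≠ 0 := Nat.cast_ne_zero.mpr hl
  field_simp
  ring

lemma nj_sum (l n j : ℕ) (hl : l ≠ 0) : ∑ k, nj l (n+1) j k = 1 := by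
  have h : ∀ k : Fin (n+1), nj l (n+1) j k
      = if (k : ℕ) + 1 = n + 1 then ((l:ℚ) - j*n)/l else (j:ℚ)/l := by
    intro k; unfold nj; split <;> push_cast <;> ring
  rw [Finset.sum_congr rfl fun k _ => h k, sum_if_last]
  have : (l:ℚ) ≠ 0 := Nat.cast_ne_zero.mpr hl
  field_simp
  ring

/-- The lattice points of the junior simplex of the singularity of type
`(1/l)(1,…,1,l−(r−1))` are exactly the `r` unit vectors together with the
`ν = ⌊l/(r−1)⌋` collinear points `n⁽ʲ⁾`. -/
theorem junior_lattice_points (l r : ℕ) (hr : 2 ≤ r) (hl : r ≤ l) :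
    {v : Fin r → ℚ | memN l r v ∧ (∀ i, 0 ≤ v i) ∧ ∑ i, v i = 1}
      = (Set.range fun i : Fin r => (Pi.single i 1 : Fin r → ℚ))
        ∪ {v | ∃ j : ℕ, 1 ≤ j ∧ j ≤ l / (r - 1) ∧ v = nj l r j} := by
  obtain ⟨n, rfl⟩ : ∃ n, r = n + 1 := ⟨r - 1, by omega⟩
  have hn : 1 ≤ n := by omega
  have hl2 : 2 ≤ l := by omega
  have hl0 : l ≠ 0 := by omega
  have hlQ : (0:ℚ) < (l:ℚ) := by exact_mod_cast (by omega : 0 < l)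
  have hlQ' : (l:ℚ) ≠ 0 := ne_of_gt hlQ
  set L : Fin (n+1) := Fin.last n with hLdef
  have hcond : ∀ k : Fin (n+1), ((k:ℕ) + 1 = n + 1) ↔ k = L := by
    intro k
    rw [Fin.ext_iff]
    simp only [hLdef, Fin.val_last]
    omega
  ext v
  simp only [Set.mem_setOf_eq, Set.mem_union, Set.mem_range]
  constructor
  · rintro ⟨⟨a, c, rfl⟩, hnn, hsum⟩
    set j : ℤ := c % l with hjdef
    set q : ℤ := c / l with hqdef
    have hc : (l:ℤ) * q + j = c := Int.mul_ediv_add_emod c l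
    have hj0 : 0 ≤ j := Int.emod_nonneg c (by exact_mod_cast hl0)
    have hjl : j < l := Int.emod_lt_of_pos c (by exact_mod_cast (by omega : 0 < l))
    have hcQ : (c:ℚ) = (l:ℚ) * q + j := by exact_mod_cast hc.symm
    set b : Fin (n+1) → ℤ := fun k => a k + q * (if (k:ℕ)+1 = n+1 then (l:ℤ) - n else 1)
      with hbdef
    have hv : ∀ k, ((fun i => (a i:ℚ)) + c • wgt l (n+1)) k
        = (b k : ℚ) + (j:ℚ) * wgt l (n+1) k := by
      intro k
      simp only [Pi.add_apply, Pi.smul_apply, zsmul_eq_mul, Pi.mul_apply, Pi.intCast_apply, hbdef, wgt]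
      by_cases h : (k:ℕ)+1 = n+1 <;>
        simp only [h, if_true, if_false, ite_true, ite_false] <;>
        rw [hcQ] <;> push_cast <;> field_simp <;> ring
    have hbsum : ∑ k, b k = 1 - j := by
      have h1 : ∑ k, ((b k : ℚ) + (j:ℚ) * wgt l (n+1) k) = 1 := by
        rw [← Finset.sum_congr rfl fun k _ => hv k]; exact hsum
      rw [Finset.sum_add_distrib, ← Finset.mul_sum, wgt_sum l n hl0, mul_one] at h1
      have h2 : ((∑ k, b k : ℤ) : ℚ) = ((1 - j : ℤ) : ℚ) := by push_cast; linarith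
      exact_mod_cast h2
    have hnn' : ∀ k, 0 ≤ (b k : ℚ) + (j:ℚ) * wgt l (n+1) k := fun k => hv k ▸ hnn k
    clear_value b j q
    have hwk : ∀ k, k ≠ L → wgt l (n+1) k = 1/(l:ℚ) := by
      intro k hk
      unfold wgt
      rw [if_neg (fun h => hk ((hcond k).mp h))]
    have hwL : wgt l (n+1) L = ((l:ℚ) - n)/l := by
      unfold wgt
      rw [if_pos ((hcond L).mpr rfl)]
      push_cast; ring
    rcases eq_or_lt_of_le hj0 with hj | hj
    · -- j = 0 : unit vector case
      left
      have hb0 : ∀ k, 0 ≤ b k := by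
        intro k
        have h1 := hnn' k
        rw [← hj] at h1
        simp only [Int.cast_zero, zero_mul, add_zero] at h1
        exact_mod_cast h1
      have hbs1 : ∑ k, b k = 1 := by omega
      obtain ⟨i, hi⟩ : ∃ i, 1 ≤ b i := by
        by_contra hcon
        push_neg at hcon
        have : ∑ k, b k ≤ 0 := Finset.sum_nonpos fun k _ => by have := hcon k; omega
        omega
      have hsplit : b i + ∑ k ∈ Finset.univ.erase i, b k = 1 := by
        rw [Finset.add_sum_erase _ b (Finset.mem_univ i)]; exact hbs1
      have herase_nonneg : 0 ≤ ∑ k ∈ Finset.univ.erase i, b k :=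
        Finset.sum_nonneg fun k _ => hb0 k
      have hbi : b i = 1 := by omega
      have herase0 : ∑ k ∈ Finset.univ.erase i, b k = 0 := by omega
      have hzero : ∀ k ∈ Finset.univ.erase i, b k = 0 :=
        (Finset.sum_eq_zero_iff_of_nonneg fun k _ => hb0 k).mp herase0
      refine ⟨i, ?_⟩
      funext k
      have hvk : ((fun i => (a i:ℚ)) + c • wgt l (n+1)) k = (b k : ℚ) := by
        rw [hv k, ← hj]; simp
      rw [hvk, Pi.single_apply]
      by_cases hk : k = i
      · rw [if_pos hk, hk, hbi]; norm_num
      · rw [if_neg hk, hzero k (Finset.mem_erase.mpr ⟨hk, Finset.mem_univ k⟩)]; norm_num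
    · -- j ≥ 1 : nj case
      right
      have hj1 : (1:ℤ) ≤ j := hj
      have hn1 : (1:ℤ) ≤ (n:ℤ) := by exact_mod_cast hn
      have hlZ : (2:ℤ) ≤ (l:ℤ) := by exact_mod_cast hl2
      have hbk0 : ∀ k, k ≠ L → 0 ≤ b k := by
        intro k hk
        have h1 := hnn' k
        rw [hwk k hk] at h1
        have h2 : (j:ℚ) * (1/l) < 1 := by
          rw [mul_one_div, div_lt_one hlQ]
          exact_mod_cast hjl
        have h3 : (-1 : ℚ) < (b k : ℚ) := by linarith
        have h4 : (-1 : ℤ) < b k := by exact_mod_cast h3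
        omega
      set S : ℤ := ∑ k ∈ Finset.univ.erase L, b k with hSdef
      have hS0 : 0 ≤ S := Finset.sum_nonneg fun k hk => hbk0 k (Finset.mem_erase.mp hk).1
      have hSsum : S = ∑ k ∈ Finset.univ.erase L, b k := hSdef
      clear_value S
      have hsplit : b L + S = 1 - j := by
        rw [hSsum, Finset.add_sum_erase _ b (Finset.mem_univ L)]; exact hbsum
      have hLnn := hnn' L
      rw [hwL] at hLnn
      have key : (0:ℤ) ≤ b L * l + j * ((l:ℤ) - n) := by
        have h4 : (0:ℚ) ≤ (b L:ℚ) * l + (j:ℚ) * ((l:ℚ) - n) := by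
          have h5 : 0 ≤ ((b L:ℚ) + (j:ℚ) * (((l:ℚ) - n)/l)) * l :=
            mul_nonneg hLnn (le_of_lt hlQ)
          calc (0:ℚ) ≤ ((b L:ℚ) + (j:ℚ) * (((l:ℚ) - n)/l)) * l := h5
            _ = (b L:ℚ) * l + (j:ℚ) * ((l:ℚ) - n) := by field_simp
        exact_mod_cast h4
      have hbLS : b L = 1 - j - S := by omega
      have hSl : S * l + j * n ≤ l := by nlinarith [key, hbLS]
      have hS_eq : S = 0 := by nlinarith [hSl, hS0, mul_le_mul_of_nonneg_right hj1 (by omega : (0:ℤ) ≤ n)]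
      have hjnl : j * n ≤ l := by nlinarith [hSl, hS_eq]
      have hzero : ∀ k ∈ Finset.univ.erase L, b k = 0 :=
        (Finset.sum_eq_zero_iff_of_nonneg
          (fun k hk => hbk0 k (Finset.mem_erase.mp hk).1)).mp (by rw [← hSsum]; exact hS_eq)
      have htn : ((j.toNat : ℤ)) = j := Int.toNat_of_nonneg hj0
      have htnQ : ((j.toNat : ℚ)) = (j:ℚ) := by exact_mod_cast htn
      refine ⟨j.toNat, by omega, ?_, ?_⟩
      · rw [Nat.add_sub_cancel]
        apply (Nat.le_div_iff_mul_le (by omega)).mpr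
        have : ((j.toNat * n : ℕ) : ℤ) ≤ (l:ℤ) := by push_cast; rw [htn]; exact hjnl
        exact_mod_cast this
      · funext k
        rw [hv k]
        by_cases hk : k = L
        · subst hk
          rw [hwL, show b L = 1 - j by omega]
          unfold nj
          rw [if_pos ((hcond L).mpr rfl)]
          push_cast
          rw [htnQ]
          field_simp
          ring
        · rw [hwk k hk, hzero k (Finset.mem_erase.mpr ⟨hk, Finset.mem_univ k⟩)]
          unfold nj
          rw [if_neg (fun h => hk ((hcond k).mp h))]
          rw [htnQ]
          push_cast
          ring
  · rintro (⟨i, rfl⟩ | ⟨j, hj1, hj2, rfl⟩)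
    · refine ⟨⟨fun k => if k = i then 1 else 0, 0, ?_⟩, ?_, ?_⟩
      · funext k
        simp [Pi.single_apply, apply_ite]
      · intro k
        rw [Pi.single_apply]
        split <;> norm_num
      · simp
    · have hjn : j * n ≤ l := by
        have h : j ≤ l / n := by simpa using hj2
        exact (Nat.le_div_iff_mul_le (by omega)).mp h
      refine ⟨⟨fun k => if (k:ℕ)+1 = n+1 then 1 - (j:ℤ) else 0, (j:ℤ), ?_⟩, ?_, ?_⟩
      · funext k
        simp only [Pi.add_apply, Pi.smul_apply, zsmul_eq_mul, Pi.mul_apply, Pi.intCast_apply, nj, wgt]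
        by_cases h : (k:ℕ)+1 = n+1 <;>
          simp only [h, if_true, if_false, ite_true, ite_false] <;>
          push_cast <;> field_simp <;> ring
      · intro k
        simp only [nj]
        split
        · apply div_nonneg _ (le_of_lt hlQ)
          have h : (j:ℚ) * n ≤ (l:ℚ) := by exact_mod_cast hjn
          push_cast
          linarith
        · positivity
      · exact nj_sum l n j hl0
end
end

section
/- For every j with 1 ≤ j ≤ ν and every (r−2)-element subset S ⊆ {1,…,r−1}, the r-element set B(j;S) = {n^(j−1), n^(j)} ∪ {e_ξ : ξ ∈ S} is a ℤ-basis of the lattice N; equivalently each simplex conv(B(j;S)) of the canonical triangulation of the junior simplex is basic, having |det(n^(j−1), n^(j), e_{ξ_1},…,e_{ξ_{r−2}})| = 1/l = det(N). -/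
noncomputable section

/-- The lattice `N` as a `ℤ`-submodule of `ℚ^r`. -/
def latticeN (l r : ℕ) : Submodule ℤ (Fin r → ℚ) where
  carrier := {v | memN l r v}
  add_mem' := by
    rintro v w ⟨a, c, rfl⟩ ⟨a', c', rfl⟩
    exact ⟨a + a', c + c', by funext i; simp; ring⟩
  zero_mem' := ⟨0, 0, by funext i; simp⟩
  smul_mem' := by
    rintro m v ⟨a, c, rfl⟩
    exact ⟨m • a, m * c, by funext i; simp; ring⟩

/-- For `1 ≤ j ≤ ν = ⌊l/(r−1)⌋` and every `(r−2)`-element subset `S` of the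
first `r−1` coordinate directions, the `r`-element set
`B(j;S) = {n⁽ʲ⁻¹⁾, n⁽ʲ⁾} ∪ {e ξ : ξ ∈ S}` is a `ℤ`-basis of the lattice `N`;
i.e. each simplex `conv(B(j;S))` of the canonical triangulation of the junior
simplex is basic. -/
theorem canonical_simplices_are_basic (l r : ℕ) (hr : 2 ≤ r) (hl : r ≤ l)
    (j : ℕ) (hj1 : 1 ≤ j) (hj2 : j ≤ l / (r - 1))
    (S : Finset (Fin r)) (hScard : S.card = r - 2)
    (hS : ∀ ξ ∈ S, (ξ : ℕ) + 1 ≠ r)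
    (B : Finset (Fin r → ℚ))
    (hB : B = insert (nj l r (j - 1)) (insert (nj l r j)
            (S.image fun ξ => (Pi.single ξ 1 : Fin r → ℚ)))) :
    B.card = r ∧
    LinearIndependent ℤ (fun v : (B : Set (Fin r → ℚ)) => (v : Fin r → ℚ)) ∧
    (Submodule.span ℤ (B : Set (Fin r → ℚ)) : Set (Fin r → ℚ)) = {v | memN l r v} := by
  classical
  have hlq : (l : ℚ) ≠ 0 := Nat.cast_ne_zero.mpr (by omega)
  have hjl : j * (r - 1) ≤ l :=
    le_trans (Nat.mul_le_mul_right _ hj2) (Nat.div_mul_le_self l (r - 1))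
  have hjle : j ≤ l := le_trans (Nat.le_mul_of_pos_right j (by omega)) hjl
  set ir : Fin r := ⟨r - 1, by omega⟩ with hirdef
  have hirv : ((ir : ℕ)) + 1 = r := by simp [hirdef]; omega
  have hif : ∀ i : Fin r, ((i : ℕ) + 1 = r) ↔ i = ir := by
    intro i
    constructor
    · intro h; apply Fin.ext; simp [hirdef]; omega
    · rintro rfl; exact hirv
  have hjc : ((j - 1 : ℕ) : ℚ) = (j : ℚ) - 1 := by
    have := Nat.cast_sub (R := ℚ) hj1; simpa using this
  have wgt_app : ∀ i : Fin r, wgt l r i = (if i = ir then (l : ℚ) - ((r : ℚ) - 1) else 1) / l :=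
    fun i => by rw [wgt, if_congr (hif i) rfl rfl]
  have nj_app : ∀ (m : ℕ) (i : Fin r),
      nj l r m i = (if i = ir then (l : ℚ) - (m : ℚ) * ((r : ℚ) - 1) else (m : ℚ)) / l :=
    fun m i => by rw [nj, if_congr (hif i) rfl rfl]
  set E : Fin r → (Fin r → ℚ) := fun ξ => Pi.single ξ 1 with hEdef
  have E_app : ∀ ξ i : Fin r, E ξ i = if i = ξ then 1 else 0 := fun ξ i => by
    simp [hEdef, Pi.single_apply]
  have hEinj : Function.Injective E := by
    intro a b h
    by_contra hne
    have := congrFun h a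
    simp [hEdef, Pi.single_apply, hne] at this
  have hSir : ir ∉ S := fun h => hS ir h hirv
  have hSne : ∀ ξ ∈ S, ξ ≠ ir := fun ξ hξ h => hS ξ hξ ((hif ξ).mpr h)
  set i0 : Fin r := ⟨0, by omega⟩ with hi0def
  have hi0 : i0 ≠ ir := by
    intro h
    have := congrArg Fin.val h
    simp [hi0def, hirdef] at this
    omega
  -- distinctness
  have huv : nj l r (j - 1) ≠ nj l r j := by
    intro h
    have := congrFun h i0
    rw [nj_app, nj_app, if_neg hi0, if_neg hi0, hjc, div_eq_div_iff hlq hlq] at this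
    have : (j : ℚ) - 1 = j := by
      field_simp at this
      linarith [this]
    linarith
  have hvS : nj l r j ∉ S.image E := by
    intro h
    obtain ⟨ξ, hξ, hE⟩ := Finset.mem_image.mp h
    -- S nonempty forces r ≥ 3, hence j < l
    have hr3 : 3 ≤ r := by
      have : 1 ≤ S.card := Finset.card_pos.mpr ⟨ξ, hξ⟩
      omega
    have hj2l : j * 2 ≤ l := le_trans (Nat.mul_le_mul_left j (by omega)) hjl
    have hjltl : j < l := by omega
    have := congrFun hE ξ
    rw [E_app, if_pos rfl, nj_app, if_neg (hSne ξ hξ)] at this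
    rw [eq_div_iff hlq, one_mul] at this
    have : j = l := by exact_mod_cast this.symm
    omega
  have huS : nj l r (j - 1) ∉ S.image E := by
    intro h
    obtain ⟨ξ, hξ, hE⟩ := Finset.mem_image.mp h
    have := congrFun hE ξ
    rw [E_app, if_pos rfl, nj_app, if_neg (hSne ξ hξ), hjc, eq_div_iff hlq, one_mul] at this
    have hjl' : (j : ℚ) ≤ l := by exact_mod_cast hjle
    have hl1 : (1 : ℚ) ≤ l := by
      have : (1 : ℕ) ≤ l := by omega
      exact_mod_cast this
    linarith
  have hcardB : B.card = r := by
    rw [hB, Finset.card_insert_of_notMem, Finset.card_insert_of_notMem hvS,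
      Finset.card_image_of_injective _ hEinj, hScard]
    · omega
    · simp only [Finset.mem_insert]
      push_neg
      exact ⟨huv, huS⟩
  -- span membership facts
  set sp := Submodule.span ℤ (B : Set (Fin r → ℚ)) with hspdef
  have hu : nj l r (j - 1) ∈ sp := Submodule.subset_span (by rw [hB]; simp)
  have hv : nj l r j ∈ sp := Submodule.subset_span (by rw [hB]; simp)
  have hE' : ∀ ξ ∈ S, E ξ ∈ sp := fun ξ hξ => Submodule.subset_span (by
    rw [hB]
    simp only [Finset.coe_insert, Set.mem_insert_iff, Finset.coe_image, Set.mem_image]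
    exact Or.inr (Or.inr ⟨ξ, hξ, rfl⟩))
  have nj_ir : ∀ m : ℕ, nj l r m ir = ((l : ℚ) - (m : ℚ) * ((r : ℚ) - 1)) / l :=
    fun m => by rw [nj_app, if_pos rfl]
  have nj_ne : ∀ (m : ℕ) (i : Fin r), i ≠ ir → nj l r m i = (m : ℚ) / l :=
    fun m i h => by rw [nj_app, if_neg h]
  have wgt_ir : wgt l r ir = ((l : ℚ) - ((r : ℚ) - 1)) / l := by rw [wgt_app, if_pos rfl]
  have wgt_ne : ∀ i : Fin r, i ≠ ir → wgt l r i = 1 / l := fun i h => by rw [wgt_app, if_neg h]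
  have h_eir : E ir ∈ sp := by
    have hid : E ir = (j : ℤ) • nj l r (j - 1) - ((j : ℤ) - 1) • nj l r j := by
      funext i
      simp only [Pi.sub_apply, Pi.smul_apply]
      simp only [zsmul_eq_mul, Int.cast_sub, Int.cast_natCast, Int.cast_one, E_app]
      rcases eq_or_ne i ir with rfl | h
      · rw [if_pos rfl, nj_ir, nj_ir, hjc]
        field_simp
        ring
      · rw [if_neg h, nj_ne _ _ h, nj_ne _ _ h, hjc]
        field_simp
        ring
    rw [hid]
    exact sub_mem (Submodule.smul_mem _ _ hu) (Submodule.smul_mem _ _ hv)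
  have h_wgt : wgt l r ∈ sp := by
    have hid : wgt l r = nj l r j - nj l r (j - 1) + E ir := by
      funext i
      simp only [Pi.add_apply, Pi.sub_apply, E_app]
      rcases eq_or_ne i ir with rfl | h
      · rw [if_pos rfl, nj_ir, nj_ir, wgt_ir, hjc]
        field_simp
        ring
      · rw [if_neg h, nj_ne _ _ h, nj_ne _ _ h, wgt_ne _ h, hjc]
        field_simp
        ring
    rw [hid]
    exact add_mem (sub_mem hv hu) h_eir
  have huniq : ∀ i₁ i₂ : Fin r, i₁ ≠ ir → i₁ ∉ S → i₂ ≠ ir → i₂ ∉ S → i₁ = i₂ := by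
    intro i₁ i₂ h1 h1' h2 h2'
    set T := Finset.univ \ insert ir S with hTdef
    have hcT : T.card = 1 := by
      rw [hTdef, Finset.card_sdiff_of_subset (Finset.subset_univ _),
        Finset.card_insert_of_notMem hSir, hScard]
      simp
      omega
    have hm1 : i₁ ∈ T := by simp [hTdef, h1, h1']
    have hm2 : i₂ ∈ T := by simp [hTdef, h2, h2']
    exact Finset.card_le_one.mp (le_of_eq hcT) _ hm1 _ hm2
  have h_all : ∀ i : Fin r, E i ∈ sp := by
    intro i
    by_cases hi1 : i = ir
    · rw [hi1]; exact h_eir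
    by_cases hi2 : i ∈ S
    · exact hE' i hi2
    have hid : E i = (l : ℤ) • wgt l r - ((l : ℤ) - ((r : ℤ) - 1)) • E ir - ∑ ξ ∈ S, E ξ := by
      funext k
      have hsum : (∑ ξ ∈ S, E ξ) k = if k ∈ S then 1 else 0 := by
        rw [Finset.sum_apply]
        simp only [E_app]
        rw [Finset.sum_ite_eq S k (fun _ => (1 : ℚ))]
      simp only [Pi.sub_apply, Pi.smul_apply]
      simp only [zsmul_eq_mul, Int.cast_sub, Int.cast_natCast, Int.cast_one, E_app, hsum]
      rcases eq_or_ne k ir with rfl | hk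
      · rw [if_neg hSir, if_neg (show ¬ ir = i from fun h => hi1 h.symm), if_pos rfl, wgt_ir]
        field_simp
        ring
      · rw [if_neg hk, wgt_ne _ hk]
        by_cases hkS : k ∈ S
        · rw [if_pos hkS, if_neg (fun h : k = i => hi2 (h ▸ hkS))]
          field_simp
          ring
        · rw [if_neg hkS, if_pos (huniq k i hk hkS hi1 hi2)]
          field_simp
          ring
    rw [hid]
    exact sub_mem (sub_mem (Submodule.smul_mem _ _ h_wgt) (Submodule.smul_mem _ _ h_eir))
      (Submodule.sum_mem _ fun ξ hξ => hE' ξ hξ)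
  -- span = lattice
  have hspan : sp = latticeN l r := by
    apply le_antisymm
    · rw [hspdef, Submodule.span_le, hB]
      intro x hx
      simp only [Finset.coe_insert, Set.mem_insert_iff, Finset.coe_image, Set.mem_image] at hx
      have hmemnj : ∀ m : ℕ, memN l r (nj l r m) := by
        intro m
        refine ⟨fun i => if i = ir then 1 - m else 0, m, ?_⟩
        funext i
        simp only [Pi.add_apply, Pi.smul_apply]
        simp only [zsmul_eq_mul, Int.cast_natCast]
        rcases eq_or_ne i ir with rfl | h
        · rw [nj_ir, wgt_ir, if_pos rfl]
          push_cast
          field_simp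
          ring
        · rw [nj_ne _ _ h, wgt_ne _ h, if_neg h]
          push_cast
          field_simp
          ring
      rcases hx with rfl | rfl | ⟨ξ, hξ, rfl⟩
      · exact hmemnj (j - 1)
      · exact hmemnj j
      · refine ⟨fun i => if i = ξ then 1 else 0, 0, ?_⟩
        funext i
        simp only [Pi.add_apply, Pi.smul_apply, E_app]
        simp
    · intro v hv
      obtain ⟨a, c, rfl⟩ := hv
      have hrep : (fun i => ((a i : ℚ))) + c • wgt l r
          = (∑ i : Fin r, a i • E i) + c • wgt l r := by
        congr 1
        funext k
        rw [Finset.sum_apply]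
        simp only [Pi.smul_apply, E_app, zsmul_eq_mul, mul_ite, mul_one, mul_zero]
        rw [Finset.sum_ite_eq Finset.univ k (fun i => ((a i : ℚ)))]
        simp
      rw [hrep]
      exact add_mem (Submodule.sum_mem _ fun i _ => Submodule.smul_mem _ _ (h_all i))
        (Submodule.smul_mem _ _ h_wgt)
  -- linear independence
  have htop : ⊤ ≤ Submodule.span ℚ (B : Set (Fin r → ℚ)) := by
    intro w _
    have hw : w = ∑ i : Fin r, w i • E i := by
      funext k
      rw [Finset.sum_apply]
      simp only [Pi.smul_apply, E_app, smul_eq_mul, mul_ite, mul_one, mul_zero]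
      rw [Finset.sum_ite_eq Finset.univ k w]
      simp
    have hE'' : ∀ i : Fin r, E i ∈ Submodule.span ℚ (B : Set (Fin r → ℚ)) := fun i =>
      Submodule.span_subset_span ℤ ℚ _ (h_all i)
    rw [hw]
    exact Submodule.sum_mem _ fun i _ => Submodule.smul_mem _ _ (hE'' i)
  have hcard' : Fintype.card ↥(B : Set (Fin r → ℚ)) = Module.finrank ℚ (Fin r → ℚ) := by
    simp [Module.finrank_fintype_fun_eq_card, hcardB]
  have liQ : LinearIndependent ℚ (fun v : (B : Set (Fin r → ℚ)) => (v : Fin r → ℚ)) :=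
    linearIndependent_of_top_le_span_of_card_eq_finrank
      (by rwa [Subtype.range_coe]) hcard'
  refine ⟨hcardB, ?_, ?_⟩
  · exact liQ.restrict_scalars (by intro a b h; simpa using h)
  · rw [hspan]
    rfl
end
end

section
/- If (r−1) does not divide l, then the r vectors n^(ν), e_1, …, e_{r−1} are ℤ-linearly independent and the subgroup of N that they generate has finite index [l]_{r−1} in N; equivalently |det(n^(ν), e_1,…,e_{r−1})| = [l]_{r−1}/l, so the last simplex conv({n^(ν), e_1,…,e_{r−1}}) of the canonical triangulation has multiplicity [l]_{r−1} with respect to N. -/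
noncomputable section

/-- If `(r−1)` does not divide `l`, the vectors `n⁽ᵛ⁾, e 1, …, e (r−1)`
(with `ν = ⌊l/(r−1)⌋`) are `ℤ`-linearly independent and the absolute value of
their determinant equals `[l]_{r−1}/l`, so the last simplex
`conv({n⁽ᵛ⁾, e 1, …, e (r−1)})` of the canonical triangulation has
multiplicity `[l]_{r−1}` with respect to the lattice `N` (of determinant `1/l`). -/
theorem last_simplex_multiplicity (l r : ℕ) (hr : 2 ≤ r) (hl : r ≤ l)
    (hndvd : ¬ (r - 1) ∣ l) :
    LinearIndependent ℤ (fun k : Fin r =>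
      if (k : ℕ) + 1 = r then nj l r (l / (r - 1)) else (Pi.single k 1 : Fin r → ℚ)) ∧
    |(Matrix.of fun i k : Fin r =>
        (if (k : ℕ) + 1 = r then nj l r (l / (r - 1))
          else (Pi.single k 1 : Fin r → ℚ)) i).det|
      = ((l % (r - 1) : ℕ) : ℚ) / l := by
  set M : Matrix (Fin r) (Fin r) ℚ := Matrix.of fun i k : Fin r =>
      (if (k : ℕ) + 1 = r then nj l r (l / (r - 1))
        else (Pi.single k 1 : Fin r → ℚ)) i with hM
  have hl0 : (0 : ℚ) < (l : ℚ) := by exact_mod_cast Nat.lt_of_lt_of_le (by omega) hl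
  have hmod : 0 < l % (r - 1) := Nat.pos_of_ne_zero fun h => hndvd (Nat.dvd_of_mod_eq_zero h)
  -- key cast identity
  have hkey : (l : ℚ) - (↑(l / (r - 1)) : ℚ) * ((r : ℚ) - 1) = ((l % (r - 1) : ℕ) : ℚ) := by
    have h := Nat.div_add_mod l (r - 1)
    have hc : ((r - 1) * (l / (r - 1)) + l % (r - 1) : ℕ) = (l : ℕ) := h
    have : (((r - 1 : ℕ) : ℚ)) * ((l / (r - 1) : ℕ) : ℚ) + ((l % (r - 1) : ℕ) : ℚ) = (l : ℚ) := by
      exact_mod_cast congrArg (Nat.cast : ℕ → ℚ) hc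
    have hr1 : ((r - 1 : ℕ) : ℚ) = (r : ℚ) - 1 := by
      have : (1 : ℕ) ≤ r := by omega
      push_cast [Nat.cast_sub this]
      ring
    rw [hr1] at this
    linarith
  have last : Fin r := ⟨r - 1, by omega⟩
  -- upper triangular
  have htri : M.BlockTriangular id := by
    intro i k hik
    simp only [id_eq] at hik
    have hk : (k : ℕ) + 1 ≠ r := by
      have := i.isLt
      omega
    simp only [hM, Matrix.of_apply, if_neg hk]
    exact Pi.single_eq_of_ne (by exact fun h => absurd h (by exact Fin.ne_of_gt hik)) 1
  have hdet : M.det = ((l % (r - 1) : ℕ) : ℚ) / l := by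
    rw [Matrix.det_of_upperTriangular htri]
    have := Finset.prod_eq_single (M := ℚ) (a := (⟨r - 1, by omega⟩ : Fin r))
      (f := fun i => M i i) (s := Finset.univ)
      (fun b _ hb => by
        have hb' : (b : ℕ) + 1 ≠ r := fun h => hb (by
          apply Fin.ext; simp; omega)
        simp only [hM, Matrix.of_apply, if_neg hb']
        exact Pi.single_eq_same b 1)
      (by simp)
    rw [this]
    have hlast : ((r : ℕ) - 1) + 1 = r := by omega
    simp only [hM, Matrix.of_apply, if_pos hlast, nj, if_pos hlast, hkey]
  have hdetne : M.det ≠ 0 := by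
    rw [hdet]
    positivity
  have hQ : LinearIndependent ℚ (fun k : Fin r =>
      if (k : ℕ) + 1 = r then nj l r (l / (r - 1)) else (Pi.single k 1 : Fin r → ℚ)) := by
    have h1 : LinearIndependent ℚ (fun k => M.transpose k) :=
      Matrix.linearIndependent_cols_iff_isUnit.2 ((Matrix.isUnit_iff_isUnit_det M).2
        (isUnit_iff_ne_zero.2 hdetne))
    have heq : (fun k : Fin r => M.transpose k) = (fun k : Fin r =>
        if (k : ℕ) + 1 = r then nj l r (l / (r - 1)) else (Pi.single k 1 : Fin r → ℚ)) := by
      funext k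
      funext i
      rfl
    rwa [heq] at h1
  constructor
  · exact hQ.restrict_scalars (by intro a b hab; simpa using hab)
  · rw [hdet, abs_of_nonneg (by positivity)]
end
end

section
/- The cones over the simplices of the canonical triangulation cover the positive orthant: if (r−1) divides l, then σ0 = ⋃_{j=1}^{ν} ⋃_S pos({n^(j−1), n^(j)} ∪ {e_ξ : ξ ∈ S}), the inner union being over all (r−2)-element subsets S ⊆ {1,…,r−1}; if (r−1) does not divide l, then σ0 equals this union together with pos({n^(ν), e_1, …, e_{r−1}}). -/
noncomputable section

lemma zero_mem_posR {r : ℕ} (B : Finset (Fin r → ℚ)) : (0 : Fin r → ℝ) ∈ posR B :=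
  ⟨0, fun _ => le_rfl, by simp⟩

lemma add_mem_posR {r : ℕ} {B : Finset (Fin r → ℚ)} {x y : Fin r → ℝ}
    (hx : x ∈ posR B) (hy : y ∈ posR B) : x + y ∈ posR B := by
  obtain ⟨c, hc, rfl⟩ := hx
  obtain ⟨d, hd, rfl⟩ := hy
  refine ⟨c + d, fun b => add_nonneg (hc b) (hd b), ?_⟩
  rw [← Finset.sum_add_distrib]
  exact Finset.sum_congr rfl fun b _ => by simp [add_smul]

lemma smul_cast_mem_posR {r : ℕ} {B : Finset (Fin r → ℚ)} {b : Fin r → ℚ}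
    (hb : b ∈ B) {a : ℝ} (ha : 0 ≤ a) : a • castQR b ∈ posR B := by
  classical
  refine ⟨fun v => if v = b then a else 0, fun v => by by_cases h : v = b <;> simp [h, ha], ?_⟩
  rw [Finset.sum_eq_single_of_mem b hb (fun v _ hv => by simp [hv])]
  simp

lemma sum_smul_cast_mem_posR {r : ℕ} {B : Finset (Fin r → ℚ)} {ι : Type*} [DecidableEq ι]
    (S : Finset ι) (g : ι → ℝ) (f : ι → Fin r → ℚ)
    (hg : ∀ i ∈ S, 0 ≤ g i) (hf : ∀ i ∈ S, f i ∈ B) :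
    (∑ i ∈ S, g i • castQR (f i)) ∈ posR B := by
  classical
  induction S using Finset.induction_on with
  | empty => simpa using zero_mem_posR B
  | insert _ _ h ih =>
    rw [Finset.sum_insert h]
    exact add_mem_posR
      (smul_cast_mem_posR (hf _ (Finset.mem_insert_self _ _)) (hg _ (Finset.mem_insert_self _ _)))
      (ih (fun i hi => hg i (Finset.mem_insert_of_mem hi))
          (fun i hi => hf i (Finset.mem_insert_of_mem hi)))

lemma posR_subset_orthant {r : ℕ} {B : Finset (Fin r → ℚ)}
    (hB : ∀ b ∈ B, ∀ i, 0 ≤ b i) :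
    posR B ⊆ {y : Fin r → ℝ | ∀ i, 0 ≤ y i} := by
  rintro y ⟨c, hc, rfl⟩ i
  show (0:ℝ) ≤ _
  rw [Finset.sum_apply]
  refine Finset.sum_nonneg fun b hb => ?_
  have h2 : (0:ℝ) ≤ (b i : ℝ) := by exact_mod_cast hB b hb i
  simpa [castQR] using mul_nonneg (hc b) h2

lemma nj_nonneg {l r j : ℕ} (hl : 0 < l) (hr : 1 ≤ r) (h : j * (r-1) ≤ l) :
    ∀ i : Fin r, 0 ≤ nj l r j i := by
  intro i
  unfold nj
  have hl' : (0:ℚ) < l := by exact_mod_cast hl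
  apply div_nonneg _ hl'.le
  have hc : (j:ℚ) * ((r:ℚ) - 1) ≤ l := by
    have h2 : ((j*(r-1) : ℕ) : ℚ) ≤ (l:ℚ) := by exact_mod_cast h
    push_cast [Nat.cast_sub hr] at h2
    linarith
  split
  · linarith
  · positivity

set_option maxHeartbeats 1000000 in
lemma cover_main (l r : ℕ) (hr : 2 ≤ r) (hl : r ≤ l) (y : Fin r → ℝ) (hy : ∀ i, 0 ≤ y i) :
    (∃ j, 1 ≤ j ∧ j ≤ l/(r-1) ∧ ∃ S : Finset (Fin r), S.card = r - 2 ∧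
      (∀ ξ ∈ S, (ξ:ℕ)+1 ≠ r) ∧
      y ∈ posR (insert (nj l r (j-1)) (insert (nj l r j)
        (S.image fun ξ => (Pi.single ξ 1 : Fin r → ℚ))))) ∨
    (¬ (r-1) ∣ l ∧ y ∈ posR (insert (nj l r (l/(r-1)))
        ((Finset.univ.filter fun i : Fin r => (i:ℕ)+1 ≠ r).image
          fun ξ => (Pi.single ξ 1 : Fin r → ℚ)))) := by
  classical
  have hr1 : 1 ≤ r - 1 := by omega
  have hr0 : 0 < r := by omega
  have hl0 : 0 < l := by omega
  set ν := l / (r - 1) with hν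
  have hν1 : 1 ≤ ν := by
    rw [hν, Nat.le_div_iff_mul_le (by omega : 0 < r - 1)]; omega
  have hνl : ν * (r-1) ≤ l := Nat.div_mul_le_self l (r-1)
  have hL : (0:ℝ) < l := by exact_mod_cast hl0
  have hR2 : (2:ℝ) ≤ r := by exact_mod_cast hr
  set rl : Fin r := ⟨r-1, by omega⟩ with hrl
  have hrlv : (rl:ℕ) + 1 = r := by simp [hrl]; omega
  set F : Finset (Fin r) := Finset.univ.filter (fun i : Fin r => (i:ℕ)+1 ≠ r) with hF
  have hFmem : ∀ i : Fin r, i ∈ F ↔ (i:ℕ) + 1 ≠ r := by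
    intro i; simp [hF]
  have hFne : F.Nonempty := ⟨⟨0, hr0⟩, by rw [hFmem]; simp; omega⟩
  obtain ⟨k, hkF, hkmin⟩ := F.exists_min_image y hFne
  have hkr : (k:ℕ) + 1 ≠ r := (hFmem k).mp hkF
  set m := y k with hm
  have hm0 : 0 ≤ m := hy k
  set s := y rl + ((r:ℝ)-1) * m with hs
  have hyrl : 0 ≤ y rl := hy rl
  have hs0 : 0 ≤ s := by rw [hs]; nlinarith
  have hcard_F : F.card = r - 1 := by
    have hFc : F = ({rl} : Finset (Fin r))ᶜ := by
      ext i
      simp [hF, hrl, Fin.ext_iff]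
      omega
    rw [hFc, Finset.card_compl]
    simp
  clear_value m s
  by_cases hcase : (l:ℝ) * m ≤ (ν:ℝ) * s
  · left
    obtain ⟨j, hj1, hjν, hjlow, hjhigh⟩ :
        ∃ j : ℕ, 1 ≤ j ∧ j ≤ ν ∧ ((j:ℝ)-1) * s ≤ (l:ℝ) * m ∧ (l:ℝ) * m ≤ (j:ℝ) * s := by
      rcases eq_or_lt_of_le hs0 with hse | hsp
      · have hνR : (0:ℝ) ≤ (ν:ℝ) := by positivity
        have hm0' : m = 0 := by nlinarith
        exact ⟨1, le_rfl, hν1, by rw [← hse, hm0']; norm_num, by rw [← hse, hm0']; norm_num⟩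
      · set t := (l:ℝ) * m / s with ht
        have ht0 : 0 ≤ t := by positivity
        have htν : t ≤ ν := by rw [ht, div_le_iff₀ hsp]; linarith [hcase]
        have hts : t * s = (l:ℝ) * m := div_mul_cancel₀ _ hsp.ne'
        refine ⟨max 1 ⌈t⌉₊, le_max_left _ _, max_le hν1 (Nat.ceil_le.mpr htν), ?_, ?_⟩
        · have hcast : ((max 1 ⌈t⌉₊ : ℕ):ℝ) = max 1 (⌈t⌉₊:ℝ) := by push_cast; rfl
          have hceil : (⌈t⌉₊:ℝ) < t + 1 := Nat.ceil_lt_add_one ht0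
          have hle : max 1 ((⌈t⌉₊:ℕ):ℝ) - 1 ≤ t := by
            rcases le_total ((⌈t⌉₊:ℕ):ℝ) 1 with h | h
            · rw [max_eq_left h]; linarith
            · rw [max_eq_right h]; linarith
          rw [hcast, ← hts]
          exact mul_le_mul_of_nonneg_right hle hsp.le
        · have hcast : ((max 1 ⌈t⌉₊ : ℕ):ℝ) = max 1 (⌈t⌉₊:ℝ) := by push_cast; rfl
          have hle : t ≤ max 1 ((⌈t⌉₊:ℕ):ℝ) := le_trans (Nat.le_ceil t) (le_max_right _ _)
          rw [hcast, ← hts]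
          exact mul_le_mul_of_nonneg_right hle hsp.le
    set a := (j:ℝ)*s - (l:ℝ)*m with ha
    set bb := (l:ℝ)*m - ((j:ℝ)-1)*s with hb
    have ha0 : 0 ≤ a := by rw [ha]; linarith
    have hb0 : 0 ≤ bb := by rw [hb]; linarith
    clear_value a bb
    refine ⟨j, hj1, hjν, F.erase k, ?_, ?_, ?_⟩
    · rw [Finset.card_erase_of_mem hkF, hcard_F]; omega
    · intro ξ hξ; exact (hFmem ξ).mp (Finset.mem_of_mem_erase hξ)
    · have hident : y = a • castQR (nj l r (j-1)) + bb • castQR (nj l r j)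
          + ∑ i ∈ F.erase k, (y i - m) • castQR (Pi.single i 1) := by
        funext i
        have hterm : ∀ i' ∈ F.erase k, ((y i' - m) • castQR (Pi.single i' 1)) i
            = if i = i' then y i' - m else 0 := by
          intro i' _
          simp only [Pi.smul_apply, smul_eq_mul, castQR, Pi.single_apply]
          split <;> simp
        have hsum : (∑ i' ∈ F.erase k, (y i' - m) • castQR (Pi.single i' 1)) i
            = if i ∈ F.erase k then y i - m else 0 := by
          rw [Finset.sum_apply, Finset.sum_congr rfl hterm, Finset.sum_ite_eq]
        show y i = _
        rw [Pi.add_apply, Pi.add_apply, hsum, Pi.smul_apply, Pi.smul_apply,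
          smul_eq_mul, smul_eq_mul]
        have hcastj : ((j - 1 : ℕ) : ℚ) = (j:ℚ) - 1 := by
          push_cast [Nat.cast_sub hj1]; ring
        by_cases hi : (i:ℕ) + 1 = r
        · have hirl : i = rl := Fin.ext (show (i:ℕ) = (rl:ℕ) by omega)
          have hiS : i ∉ F.erase k := fun h => ((hFmem i).mp (Finset.mem_of_mem_erase h)) hi
          rw [if_neg hiS]
          simp only [castQR, nj, if_pos hi, hcastj]
          push_cast
          rw [ha, hb, hs, hirl]
          field_simp
          ring
        · have hnj1 : castQR (nj l r (j-1)) i = ((j:ℝ) - 1)/l := by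
            simp only [castQR, nj, if_neg hi, hcastj]; push_cast; ring
          have hnj2 : castQR (nj l r j) i = (j:ℝ)/l := by
            simp only [castQR, nj, if_neg hi]; push_cast; ring
          rw [hnj1, hnj2]
          by_cases hik : i = k
          · rw [if_neg (by rw [hik]; exact Finset.notMem_erase _ _), hik, ← hm]
            rw [ha, hb, hs]
            field_simp
            ring
          · rw [if_pos (Finset.mem_erase.mpr ⟨hik, (hFmem i).mpr hi⟩)]
            have hmval : a * (((j:ℝ)-1)/l) + bb * ((j:ℝ)/l) = m := by
              rw [ha, hb]; field_simp; ring
            linarith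
      rw [hident]
      refine add_mem_posR (add_mem_posR
        (smul_cast_mem_posR (Finset.mem_insert_self _ _) ha0)
        (smul_cast_mem_posR (Finset.mem_insert_of_mem (Finset.mem_insert_self _ _)) hb0))
        (sum_smul_cast_mem_posR _ _ _ ?_ ?_)
      · intro i hi
        exact sub_nonneg.mpr (hkmin i (Finset.mem_of_mem_erase hi))
      · intro i hi
        exact Finset.mem_insert_of_mem (Finset.mem_insert_of_mem
          (Finset.mem_image_of_mem _ hi))
  · right
    have hRν : ((ν*(r-1) : ℕ):ℝ) = (ν:ℝ) * ((r:ℝ)-1) := by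
      push_cast [Nat.cast_sub (by omega : 1 ≤ r)]; ring
    have hndvd : ¬ (r-1) ∣ l := by
      intro hdvd
      have hexact : ν * (r-1) = l := Nat.div_mul_cancel hdvd
      have hLeq : (ν:ℝ) * ((r:ℝ)-1) = (l:ℝ) := by
        rw [← hRν]; exact_mod_cast congrArg (Nat.cast : ℕ → ℝ) hexact
      have hν0 : (0:ℝ) < ν := by exact_mod_cast hν1
      apply hcase
      rw [hs]
      nlinarith
    refine ⟨hndvd, ?_⟩
    have hdlt : ν * (r-1) < l := lt_of_le_of_ne hνl (fun h => hndvd ⟨ν, by rw [← h]; ring⟩)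
    set d := (l:ℝ) - (ν:ℝ)*((r:ℝ)-1) with hd
    have hd0 : 0 < d := by
      have h2 : ((ν*(r-1):ℕ):ℝ) < (l:ℝ) := by exact_mod_cast hdlt
      rw [hRν] at h2; rw [hd]; linarith
    have hmd : (ν:ℝ) * y rl ≤ m * d := by
      push_neg at hcase
      rw [hd]; rw [hs] at hcase; nlinarith
    clear_value d
    set a := (l:ℝ) * y rl / d with ha
    have ha0 : 0 ≤ a := by rw [ha]; positivity
    clear_value a
    have hident : y = a • castQR (nj l r ν)
        + ∑ i ∈ F, (y i - (ν:ℝ) * y rl / d) • castQR (Pi.single i 1) := by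
      funext i
      have hterm : ∀ i' ∈ F, ((y i' - (ν:ℝ) * y rl / d) • castQR (Pi.single i' 1)) i
          = if i = i' then y i' - (ν:ℝ) * y rl / d else 0 := by
        intro i' _
        simp only [Pi.smul_apply, smul_eq_mul, castQR, Pi.single_apply]
        split <;> simp
      have hsum : (∑ i' ∈ F, (y i' - (ν:ℝ) * y rl / d) • castQR (Pi.single i' 1)) i
          = if i ∈ F then y i - (ν:ℝ) * y rl / d else 0 := by
        rw [Finset.sum_apply, Finset.sum_congr rfl hterm, Finset.sum_ite_eq]
      show y i = _
      rw [Pi.add_apply, hsum, Pi.smul_apply, smul_eq_mul]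
      by_cases hi : (i:ℕ) + 1 = r
      · have hirl : i = rl := Fin.ext (show (i:ℕ) = (rl:ℕ) by omega)
        have hiS : i ∉ F := fun h => ((hFmem i).mp h) hi
        rw [if_neg hiS]
        simp only [castQR, nj, if_pos hi]
        push_cast
        rw [ha, hd, hirl]
        rw [hd] at hd0
        field_simp
        ring
      · rw [if_pos ((hFmem i).mpr hi)]
        have hnj2 : castQR (nj l r ν) i = (ν:ℝ)/l := by
          simp only [castQR, nj, if_neg hi]; push_cast; ring
        rw [hnj2, ha]
        field_simp
        ring
    rw [hident]
    refine add_mem_posR (smul_cast_mem_posR (Finset.mem_insert_self _ _) ha0)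
      (sum_smul_cast_mem_posR _ _ _ ?_ ?_)
    · intro i hi
      have h1 := hkmin i hi
      have h2 : (ν:ℝ) * y rl / d ≤ m := (div_le_iff₀ hd0).mpr hmd
      linarith
    · intro i hi
      exact Finset.mem_insert_of_mem (Finset.mem_image_of_mem _ hi)

/-- The cones over the simplices of the canonical triangulation cover the
positive orthant: if `(r−1) ∣ l` the cones `pos({n⁽ʲ⁻¹⁾, n⁽ʲ⁾} ∪ {e ξ : ξ ∈ S})`
(for `1 ≤ j ≤ ν` and `(r−2)`-subsets `S` of the first `r−1` directions) cover
`σ0`; otherwise one must add the cone `pos({n⁽ᵛ⁾, e 1, …, e (r−1)})`. -/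
theorem canonical_cones_cover_orthant (l r : ℕ) (hr : 2 ≤ r) (hl : r ≤ l) :
    ((r - 1) ∣ l →
      {y : Fin r → ℝ | ∀ i, 0 ≤ y i}
        = ⋃ j ∈ Finset.Icc 1 (l / (r - 1)),
            ⋃ S ∈ {S : Finset (Fin r) | S.card = r - 2 ∧ ∀ ξ ∈ S, (ξ : ℕ) + 1 ≠ r},
              posR (insert (nj l r (j - 1)) (insert (nj l r j)
                (S.image fun ξ => (Pi.single ξ 1 : Fin r → ℚ))))) ∧
    (¬ (r - 1) ∣ l →
      {y : Fin r → ℝ | ∀ i, 0 ≤ y i}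
        = (⋃ j ∈ Finset.Icc 1 (l / (r - 1)),
            ⋃ S ∈ {S : Finset (Fin r) | S.card = r - 2 ∧ ∀ ξ ∈ S, (ξ : ℕ) + 1 ≠ r},
              posR (insert (nj l r (j - 1)) (insert (nj l r j)
                (S.image fun ξ => (Pi.single ξ 1 : Fin r → ℚ)))))
          ∪ posR (insert (nj l r (l / (r - 1)))
              ((Finset.univ.filter fun i : Fin r => (i : ℕ) + 1 ≠ r).image
                fun ξ => (Pi.single ξ 1 : Fin r → ℚ)))) := by
  classical
  have hr1 : 1 ≤ r := by omega
  have hl0 : 0 < l := by omega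
  have single_nn : ∀ ξ i : Fin r, (0:ℚ) ≤ (Pi.single ξ 1 : Fin r → ℚ) i := by
    intro ξ i
    rw [Pi.single_apply]
    split <;> norm_num
  have hνl : (l / (r-1)) * (r-1) ≤ l := Nat.div_mul_le_self l (r-1)
  have cone_sub : ∀ j ∈ Finset.Icc 1 (l/(r-1)), ∀ S : Finset (Fin r),
      posR (insert (nj l r (j-1)) (insert (nj l r j)
        (S.image fun ξ => (Pi.single ξ 1 : Fin r → ℚ))))
        ⊆ {y : Fin r → ℝ | ∀ i, 0 ≤ y i} := by
    intro j hj S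
    rw [Finset.mem_Icc] at hj
    have hjm : j * (r-1) ≤ l :=
      le_trans (Nat.mul_le_mul_right _ hj.2) hνl
    apply posR_subset_orthant
    intro b hb
    simp only [Finset.mem_insert, Finset.mem_image] at hb
    rcases hb with rfl | rfl | ⟨ξ, _, rfl⟩
    · exact nj_nonneg hl0 hr1 (le_trans (Nat.mul_le_mul_right _ (by omega)) hjm)
    · exact nj_nonneg hl0 hr1 hjm
    · exact single_nn ξ
  have extra_sub : posR (insert (nj l r (l / (r - 1)))
      ((Finset.univ.filter fun i : Fin r => (i : ℕ) + 1 ≠ r).image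
        fun ξ => (Pi.single ξ 1 : Fin r → ℚ))) ⊆ {y : Fin r → ℝ | ∀ i, 0 ≤ y i} := by
    apply posR_subset_orthant
    intro b hb
    simp only [Finset.mem_insert, Finset.mem_image] at hb
    rcases hb with rfl | ⟨ξ, _, rfl⟩
    · exact nj_nonneg hl0 hr1 hνl
    · exact single_nn ξ
  constructor
  · intro hdvd
    apply Set.Subset.antisymm
    · intro y hy
      rcases cover_main l r hr hl y hy with ⟨j, hj1, hjν, S, hScard, hSr, hmem⟩ | ⟨hnd, _⟩
      · simp only [Set.mem_iUnion]
        exact ⟨j, Finset.mem_Icc.mpr ⟨hj1, hjν⟩, S, ⟨hScard, hSr⟩, hmem⟩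
      · exact absurd hdvd hnd
    · exact Set.iUnion₂_subset fun j hj => Set.iUnion₂_subset fun S _ => cone_sub j hj S
  · intro hdvd
    apply Set.Subset.antisymm
    · intro y hy
      rcases cover_main l r hr hl y hy with ⟨j, hj1, hjν, S, hScard, hSr, hmem⟩ | ⟨_, hmem⟩
      · left
        simp only [Set.mem_iUnion]
        exact ⟨j, Finset.mem_Icc.mpr ⟨hj1, hjν⟩, S, ⟨hScard, hSr⟩, hmem⟩
      · right
        exact hmem
    · exact Set.union_subset
        (Set.iUnion₂_subset fun j hj => Set.iUnion₂_subset fun S _ => cone_sub j hj S)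
        extra_sub
end
end

section
/- (Uniqueness of the maximal triangulation of the junior simplex.) Let B ⊆ s_G ∩ N be an r-element affinely independent set with conv(B) ∩ N = B (i.e. conv(B) is an elementary (r−1)-simplex all of whose vertices are lattice points of the junior simplex). Then either B = {n^(j−1), n^(j)} ∪ {e_ξ : ξ ∈ S} for some j with 1 ≤ j ≤ ν and some (r−2)-element subset S ⊆ {1,…,r−1}, or (r−1) does not divide l and B = {n^(ν), e_1, …, e_{r−1}}. -/
noncomputable section

namespace Unique

lemma nj_injective {l r : ℕ} (hr : 2 ≤ r) (hl : 0 < l) :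
    Function.Injective (nj l r) := by
  intro j j' h
  have h0 := congrFun h ⟨0, by omega⟩
  simp only [nj] at h0
  rw [if_neg (by simp; omega), if_neg (by simp; omega)] at h0
  have hl' : (l:ℚ) ≠ 0 := by positivity
  field_simp at h0
  exact_mod_cast h0

lemma single_injective (r : ℕ) :
    Function.Injective (fun ξ : Fin r => (Pi.single ξ 1 : Fin r → ℚ)) := by
  intro ξ ξ' h
  by_contra hne
  have h0 := congrFun h ξ
  simp [Pi.single_apply, hne] at h0

lemma memN_nj (l r j : ℕ) (hl : 0 < l) : memN l r (nj l r j) := by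
  have hl' : (l:ℚ) ≠ 0 := by positivity
  refine ⟨fun i => if (i:ℕ)+1 = r then 1 - (j:ℤ) else 0, j, ?_⟩
  funext i
  rw [Pi.add_apply, Pi.smul_apply]
  simp only [nj, wgt, zsmul_eq_mul]
  split_ifs with h
  · push_cast
    field_simp
    ring
  · push_cast
    field_simp
    ring

lemma cond_iff {r : ℕ} (hr : 1 ≤ r) (i : Fin r) :
    ((i:ℕ) + 1 = r) ↔ i = ⟨r-1, by omega⟩ := by
  rw [Fin.ext_iff]
  simp
  omega

lemma sum_if_eq {r : ℕ} (e : Fin r) (A B : ℚ) :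
    ∑ i : Fin r, (if i = e then A else B) = A + ((r:ℚ) - 1) * B := by
  have h : ∀ i : Fin r, (if i = e then A else B) = B + (if i = e then A - B else 0) := fun i => by
    split_ifs <;> ring
  simp_rw [h]
  rw [Finset.sum_add_distrib, Finset.sum_const,
    Finset.sum_ite_eq' Finset.univ e fun _ => A - B, if_pos (Finset.mem_univ e)]
  simp [Finset.card_univ, nsmul_eq_mul]
  ring

lemma sum_nj {l r : ℕ} (hr : 2 ≤ r) (hl : 0 < l) (j : ℕ) :
    ∑ i, nj l r j i = 1 := by
  have hl' : (l:ℚ) ≠ 0 := by positivity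
  simp only [nj]
  rw [← Finset.sum_div]
  rw [Finset.sum_congr rfl (fun i _ => by rw [if_congr (cond_iff (by omega) i) rfl rfl])]
  rw [sum_if_eq]
  field_simp
  ring


lemma classify {l r : ℕ} (hr : 2 ≤ r) (hl : r ≤ l) {v : Fin r → ℚ}
    (h1 : memN l r v) (h2 : ∀ i, 0 ≤ v i) (h3 : ∑ i, v i = 1) :
    (∃ j ≤ l/(r-1), v = nj l r j) ∨
      (∃ ξ : Fin r, (ξ:ℕ)+1 ≠ r ∧ v = Pi.single ξ 1) := by
  have hl0 : 0 < l := by omega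
  have hlQ : (0:ℚ) < l := by positivity
  have hl' : (l:ℚ) ≠ 0 := ne_of_gt hlQ
  have hr2Q : (2:ℚ) ≤ (r:ℚ) := by exact_mod_cast hr
  obtain ⟨a, c, hv⟩ := h1
  set e : Fin r := ⟨r-1, by omega⟩ with he
  have hecond : (e:ℕ)+1 = r := by simp [he]; omega
  set j : ℕ := (c % l).toNat with hjdef
  have hjc : (j : ℤ) = c % l := Int.toNat_of_nonneg (Int.emod_nonneg c (by exact_mod_cast hl0.ne'))
  have hjl : j < l := by
    have h1 := Int.emod_lt_of_pos c (show (0:ℤ) < l by exact_mod_cast hl0)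
    omega
  set q : ℤ := c / l with hqdef
  have hcjq : c = (j:ℤ) + l * q := by
    rw [hjc, hqdef]
    linarith [Int.emod_add_mul_ediv c l]
  set m : Fin r → ℤ :=
    fun i => if (i:ℕ)+1 = r then a i + c - q*((r:ℤ)-1) - 1 else a i + q with hm
  have hcQ : (c:ℚ) = (j:ℚ) + (l:ℚ) * (q:ℚ) := by exact_mod_cast hcjq
  have hvm : ∀ i, v i = (m i : ℚ) + nj l r j i := by
    intro i
    rw [hv, Pi.add_apply, Pi.smul_apply]
    simp only [nj, wgt, zsmul_eq_mul, hm]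
    split_ifs with h
    · push_cast
      rw [hcQ]
      field_simp
      ring
    · push_cast
      rw [hcQ]
      field_simp
      ring
  have hsum_m : ∑ i, (m i : ℚ) = 0 := by
    have hs : ∑ i, v i = ∑ i, ((m i : ℚ) + nj l r j i) :=
      Finset.sum_congr rfl (fun i _ => hvm i)
    rw [Finset.sum_add_distrib, sum_nj hr hl0] at hs
    rw [h3] at hs
    linarith
  have hsum_mz : ∑ i, m i = 0 := by exact_mod_cast hsum_m
  have hmnn : ∀ i, i ≠ e → 0 ≤ m i := by
    intro i hie
    have hcond : ¬((i:ℕ)+1 = r) := fun h => hie ((cond_iff (by omega) i).mp h)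
    have h2i := h2 i
    rw [hvm i] at h2i
    have hnji : nj l r j i = (j:ℚ) / l := by simp [nj, hcond]
    rw [hnji] at h2i
    have hjl' : (j:ℚ)/l < 1 := by
      rw [div_lt_one hlQ]; exact_mod_cast hjl
    have hmi : (-1:ℚ) < (m i : ℚ) := by linarith
    have : (-1:ℤ) < m i := by exact_mod_cast hmi
    omega
  have hnje : nj l r j e = ((l:ℚ) - (j:ℚ)*((r:ℚ)-1))/l := by simp [nj, hecond]
  have hme : -1 ≤ m e := by
    have h2e := h2 e
    rw [hvm e, hnje] at h2e
    have hjr : (0:ℚ) ≤ (j:ℚ)*((r:ℚ)-1) :=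
      mul_nonneg (Nat.cast_nonneg j) (by linarith)
    have hle1 : ((l:ℚ) - (j:ℚ)*((r:ℚ)-1))/l ≤ 1 := by
      rw [div_le_one hlQ]; linarith
    have hmi : (-1:ℚ) ≤ (m e : ℚ) := by linarith
    exact_mod_cast hmi
  by_cases h0 : 0 ≤ m e
  · left
    have hall : ∀ i, m i = 0 := by
      have hnn : ∀ i ∈ Finset.univ, 0 ≤ m i := by
        intro i _
        by_cases hie : i = e
        · rw [hie]; exact h0
        · exact hmnn i hie
      intro i
      exact (Finset.sum_eq_zero_iff_of_nonneg hnn).mp hsum_mz i (Finset.mem_univ i)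
    have hveq : v = nj l r j := by
      funext i; rw [hvm i, hall i]; simp
    refine ⟨j, ?_, hveq⟩
    have h2e := h2 e
    rw [hveq] at h2e
    have h2e' : (0:ℚ) ≤ ((l:ℚ) - (j:ℚ)*((r:ℚ)-1))/l := by rw [← hnje]; exact h2e
    have hnum : (0:ℚ) ≤ (l:ℚ) - (j:ℚ)*((r:ℚ)-1) := by
      by_contra hneg
      push_neg at hneg
      have := div_neg_of_neg_of_pos hneg hlQ
      linarith
    have hnat : j * (r-1) ≤ l := by
      have hq : (j:ℚ) * ((r:ℚ)-1) ≤ l := by linarith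
      have hcast : ((j * (r-1) : ℕ) : ℚ) = (j:ℚ)*((r:ℚ)-1) := by
        rw [Nat.cast_mul, Nat.cast_sub (by omega : 1 ≤ r)]; push_cast; ring
      rw [← hcast] at hq
      exact_mod_cast hq
    exact (Nat.le_div_iff_mul_le (by omega)).mpr hnat
  · right
    have hme1 : m e = -1 := by omega
    have hj0 : j = 0 := by
      have h2e := h2 e
      rw [hvm e, hnje, hme1] at h2e
      have hge1 : (1:ℚ) ≤ ((l:ℚ) - (j:ℚ)*((r:ℚ)-1))/l := by push_cast at h2e ⊢; linarith
      rw [le_div_iff₀ hlQ] at hge1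
      have hjq : (j:ℚ) * ((r:ℚ)-1) ≤ 0 := by linarith
      have hjnn : (0:ℚ) ≤ (j:ℚ) := by positivity
      have : (j:ℚ) ≤ 0 := by nlinarith
      have : (j:ℚ) = 0 := le_antisymm this hjnn
      exact_mod_cast this
    have hsum' : ∑ i ∈ Finset.univ.erase e, m i = 1 := by
      have hadd := Finset.add_sum_erase Finset.univ m (Finset.mem_univ e)
      rw [hsum_mz, hme1] at hadd
      linarith
    obtain ⟨ξ, hξe, hξ1⟩ : ∃ ξ, ξ ≠ e ∧ 1 ≤ m ξ := by
      by_contra hcon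
      push_neg at hcon
      have hle : ∑ i ∈ Finset.univ.erase e, m i ≤ 0 :=
        Finset.sum_nonpos (fun i hi => by
          have hie : i ≠ e := (Finset.mem_erase.mp hi).1
          have := hcon i hie
          omega)
      omega
    have hξmem : ξ ∈ Finset.univ.erase e := Finset.mem_erase.mpr ⟨hξe, Finset.mem_univ ξ⟩
    have h1' : m ξ + ∑ x ∈ (Finset.univ.erase e).erase ξ, m x = 1 := by
      rw [Finset.add_sum_erase _ m hξmem]; exact hsum'
    have hnn : ∀ x ∈ (Finset.univ.erase e).erase ξ, 0 ≤ m x := fun x hx =>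
      hmnn x (Finset.mem_erase.mp (Finset.mem_erase.mp hx).2).1
    have hrest0 : ∑ x ∈ (Finset.univ.erase e).erase ξ, m x = 0 := by
      have := Finset.sum_nonneg hnn
      omega
    have hmξ : m ξ = 1 := by omega
    have hrest : ∀ i, i ≠ e → i ≠ ξ → m i = 0 := by
      intro i hie hiξ
      exact (Finset.sum_eq_zero_iff_of_nonneg hnn).mp hrest0 i
        (Finset.mem_erase.mpr ⟨hiξ, Finset.mem_erase.mpr ⟨hie, Finset.mem_univ i⟩⟩)
    have hξr : (ξ:ℕ)+1 ≠ r := fun h => hξe ((cond_iff (by omega) ξ).mp h)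
    refine ⟨ξ, hξr, ?_⟩
    funext i
    rw [hvm i, hj0]
    have hnj0 : nj l r 0 i = if (i:ℕ)+1 = r then 1 else 0 := by
      simp only [nj]
      split_ifs with h
      · push_cast; field_simp; ring
      · simp
    rw [hnj0, Pi.single_apply]
    by_cases hie : i = e
    · rw [hie, if_pos hecond, if_neg (fun h : e = ξ => hξe h.symm), hme1]
      norm_num
    · have hcond : ¬((i:ℕ)+1 = r) := fun h => hie ((cond_iff (by omega) i).mp h)
      rw [if_neg hcond]
      by_cases hiξ : i = ξ
      · rw [if_pos hiξ, hiξ, hmξ]; norm_num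
      · rw [if_neg hiξ, hrest i hie hiξ]; norm_num

end Unique

/-- **Uniqueness of the maximal triangulation of the junior simplex.**
Every elementary `(r−1)`-simplex with vertices among the lattice points of the
junior simplex is either one of the simplices `conv({n⁽ʲ⁻¹⁾, n⁽ʲ⁾} ∪ {e ξ : ξ ∈ S})`,
or (when `(r−1) ∤ l`) the last simplex `conv({n⁽ᵛ⁾, e 1, …, e (r−1)})`. -/
theorem uniqueness_of_maximal_triangulation (l r : ℕ) (hr : 2 ≤ r) (hl : r ≤ l)
    (B : Finset (Fin r → ℚ)) (hcard : B.card = r)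
    (hBin : ∀ v ∈ B, memN l r v ∧ (∀ i, 0 ≤ v i) ∧ ∑ i, v i = 1)
    (haff : AffineIndependent ℚ (fun v : (B : Set (Fin r → ℚ)) => (v : Fin r → ℚ)))
    (helem : {v | v ∈ convexHull ℚ (B : Set (Fin r → ℚ)) ∧ memN l r v}
        = (B : Set (Fin r → ℚ))) :
    (∃ (j : ℕ) (S : Finset (Fin r)), 1 ≤ j ∧ j ≤ l / (r - 1) ∧
        S.card = r - 2 ∧ (∀ ξ ∈ S, (ξ : ℕ) + 1 ≠ r) ∧
        B = insert (nj l r (j - 1)) (insert (nj l r j)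
              (S.image fun ξ => (Pi.single ξ 1 : Fin r → ℚ)))) ∨
    (¬ (r - 1) ∣ l ∧
        B = insert (nj l r (l / (r - 1)))
              ((Finset.univ.filter fun i : Fin r => (i : ℕ) + 1 ≠ r).image
                fun ξ => (Pi.single ξ 1 : Fin r → ℚ))) := by
  classical
  have hl0 : 0 < l := by omega
  have hlQ : (0:ℚ) < l := by positivity
  have hl' : (l:ℚ) ≠ 0 := ne_of_gt hlQ
  have hr2Q : (2:ℚ) ≤ (r:ℚ) := by exact_mod_cast hr
  have hrQ : (0:ℚ) < (r:ℚ) - 1 := by linarith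
  have hcast_r1 : ((r - 1 : ℕ) : ℚ) = (r:ℚ) - 1 := by
    rw [Nat.cast_sub (by omega : 1 ≤ r)]; norm_num
  set ν : ℕ := l / (r-1) with hν
  have hνl : ν * (r-1) ≤ l := Nat.div_mul_le_self l (r-1)
  have hinj : Function.Injective (nj l r) := Unique.nj_injective hr hl0
  have hsinj := Unique.single_injective r
  set J : Finset ℕ := (Finset.range (ν+1)).filter (fun j => nj l r j ∈ B) with hJ
  set S : Finset (Fin r) := Finset.univ.filter
      (fun ξ => (ξ:ℕ)+1 ≠ r ∧ (Pi.single ξ 1 : Fin r → ℚ) ∈ B ∧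
        (Pi.single ξ 1 : Fin r → ℚ) ∉ J.image (nj l r)) with hS
  have hconv : ∀ w : Fin r → ℚ,
      w ∈ convexHull ℚ (B : Set (Fin r → ℚ)) → memN l r w → w ∈ B := by
    intro w h1 h2
    have hmem : w ∈ {v | v ∈ convexHull ℚ (B : Set (Fin r → ℚ)) ∧ memN l r v} := ⟨h1, h2⟩
    rw [helem] at hmem
    exact Finset.mem_coe.mp hmem
  have hcover : B = J.image (nj l r) ∪ S.image (fun ξ => (Pi.single ξ 1 : Fin r → ℚ)) := by
    apply Finset.ext
    intro v
    constructor
    · intro hvB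
      obtain ⟨h1, h2, h3⟩ := hBin v hvB
      rcases Unique.classify hr hl h1 h2 h3 with ⟨j, hj, rfl⟩ | ⟨ξ, hξ, rfl⟩
      · exact Finset.mem_union_left _ (Finset.mem_image_of_mem _
          (Finset.mem_filter.mpr ⟨Finset.mem_range.mpr (by omega), hvB⟩))
      · by_cases hin : (Pi.single ξ 1 : Fin r → ℚ) ∈ J.image (nj l r)
        · exact Finset.mem_union_left _ hin
        · exact Finset.mem_union_right _ (Finset.mem_image_of_mem _
            (Finset.mem_filter.mpr ⟨Finset.mem_univ _, hξ, hvB, hin⟩))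
    · intro hv
      rcases Finset.mem_union.mp hv with h | h
      · obtain ⟨j, hj, rfl⟩ := Finset.mem_image.mp h
        exact (Finset.mem_filter.mp hj).2
      · obtain ⟨ξ, hξ, rfl⟩ := Finset.mem_image.mp h
        exact (Finset.mem_filter.mp hξ).2.2.1
  have hdisj : Disjoint (J.image (nj l r))
      (S.image (fun ξ => (Pi.single ξ 1 : Fin r → ℚ))) := by
    rw [Finset.disjoint_right]
    intro x hxS hxJ
    obtain ⟨ξ, hξ, rfl⟩ := Finset.mem_image.mp hxS
    exact (Finset.mem_filter.mp hξ).2.2.2 hxJ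
  have hcards : J.card + S.card = r := by
    rw [hcover, Finset.card_union_of_disjoint hdisj,
      Finset.card_image_of_injective _ hinj, Finset.card_image_of_injective _ hsinj] at hcard
    exact hcard
  have hsub : S ⊆ Finset.univ.filter (fun ξ : Fin r => (ξ:ℕ)+1 ≠ r) := by
    intro ξ hξ
    exact Finset.mem_filter.mpr ⟨Finset.mem_univ _, (Finset.mem_filter.mp hξ).2.1⟩
  have hfcard : (Finset.univ.filter (fun ξ : Fin r => (ξ:ℕ)+1 ≠ r)).card = r - 1 := by
    have heq : Finset.univ.filter (fun ξ : Fin r => (ξ:ℕ)+1 ≠ r)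
        = Finset.univ.erase ⟨r-1, by omega⟩ := by
      ext i
      simp [Finset.mem_erase, Fin.ext_iff]
      omega
    rw [heq, Finset.card_erase_of_mem (Finset.mem_univ _), Finset.card_univ, Fintype.card_fin]
  have hScard_le : S.card ≤ r - 1 := hfcard ▸ Finset.card_le_card hsub
  have haff' := affineIndependent_iff.mp haff
  have hJcard : J.card ≤ 2 := by
    by_contra hcon
    push_neg at hcon
    obtain ⟨a, b, c, haJ, hbJ, hcJ, hab, hac, hbc⟩ :=
      Finset.two_lt_card_iff.mp (show 2 < J.card from hcon)
    have haB : nj l r a ∈ B := (Finset.mem_filter.mp haJ).2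
    have hbB : nj l r b ∈ B := (Finset.mem_filter.mp hbJ).2
    have hcB : nj l r c ∈ B := (Finset.mem_filter.mp hcJ).2
    set x1 : (B : Set (Fin r → ℚ)) := ⟨nj l r a, Finset.mem_coe.mpr haB⟩ with hx1
    set x2 : (B : Set (Fin r → ℚ)) := ⟨nj l r b, Finset.mem_coe.mpr hbB⟩ with hx2
    set x3 : (B : Set (Fin r → ℚ)) := ⟨nj l r c, Finset.mem_coe.mpr hcB⟩ with hx3
    have h12 : x1 ≠ x2 := fun h => hab (hinj (Subtype.ext_iff.mp h))
    have h13 : x1 ≠ x3 := fun h => hac (hinj (Subtype.ext_iff.mp h))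
    have h23 : x2 ≠ x3 := fun h => hbc (hinj (Subtype.ext_iff.mp h))
    set w := fun x : (B : Set (Fin r → ℚ)) =>
      if x = x1 then (c:ℚ) - b else if x = x2 then (a:ℚ) - c else (b:ℚ) - a with hw
    have w1 : w x1 = (c:ℚ) - b := by simp [hw]
    have w2 : w x2 = (a:ℚ) - c := by simp [hw, Ne.symm h12]
    have w3 : w x3 = (b:ℚ) - a := by simp [hw, Ne.symm h13, Ne.symm h23]
    have hn1 : x1 ∉ ({x2, x3} : Finset (B : Set (Fin r → ℚ))) := by simp [h12, h13]
    have hn2 : x2 ∉ ({x3} : Finset (B : Set (Fin r → ℚ))) := by simp [h23]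
    have hsum : ∑ x ∈ ({x1, x2, x3} : Finset (B : Set (Fin r → ℚ))), w x = 0 := by
      rw [Finset.sum_insert hn1, Finset.sum_insert hn2, Finset.sum_singleton, w1, w2, w3]
      ring
    have hcomb : ∑ x ∈ ({x1, x2, x3} : Finset (B : Set (Fin r → ℚ))),
        w x • (x : Fin r → ℚ) = 0 := by
      rw [Finset.sum_insert hn1, Finset.sum_insert hn2, Finset.sum_singleton, w1, w2, w3]
      have c1 : (x1 : Fin r → ℚ) = nj l r a := rfl
      have c2 : (x2 : Fin r → ℚ) = nj l r b := rfl
      have c3 : (x3 : Fin r → ℚ) = nj l r c := rfl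
      rw [c1, c2, c3]
      funext i
      simp only [nj, Pi.add_apply, Pi.smul_apply, smul_eq_mul, Pi.zero_apply]
      split_ifs with h
      · field_simp <;> ring
      · field_simp <;> ring
    have hkey := haff' {x1, x2, x3} w hsum hcomb x1 (by simp)
    rw [w1] at hkey
    have : (c:ℚ) = (b:ℚ) := by linarith
    exact hbc (by exact_mod_cast this.symm)
  have hJmem : ∀ j ∈ J, j ≤ ν ∧ nj l r j ∈ B := fun j hj =>
    ⟨by have := Finset.mem_range.mp (Finset.mem_filter.mp hj).1; omega,
     (Finset.mem_filter.mp hj).2⟩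
  have hJback : ∀ j, j ≤ ν → nj l r j ∈ B → j ∈ J := fun j hj hB =>
    Finset.mem_filter.mpr ⟨Finset.mem_range.mpr (by omega), hB⟩
  have hJ12 : J.card = 1 ∨ J.card = 2 := by
    generalize hn : J.card = n at hJcard hcards ⊢
    generalize hm : S.card = m at hScard_le hcards
    omega
  rcases hJ12 with hJc | hJc
  · -- J.card = 1
    obtain ⟨a, hJa⟩ := Finset.card_eq_one.mp hJc
    have haJ : a ∈ J := by rw [hJa]; simp
    obtain ⟨haν, haB⟩ := hJmem a haJ
    have hSc : S.card = r - 1 := by omega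
    have hSfull : S = Finset.univ.filter (fun ξ : Fin r => (ξ:ℕ)+1 ≠ r) :=
      Finset.eq_of_subset_of_card_le hsub (by rw [hfcard, hSc])
    have hBdecomp : B = insert (nj l r a)
        (S.image (fun ξ => (Pi.single ξ 1 : Fin r → ℚ))) := by
      rw [hcover, hJa, Finset.image_singleton]
      ext v
      simp
    have hnotin : nj l r a ∉ S.image (fun ξ => (Pi.single ξ 1 : Fin r → ℚ)) := by
      have hmem : nj l r a ∈ J.image (nj l r) := Finset.mem_image_of_mem _ haJ
      exact fun h => (Finset.disjoint_left.mp hdisj hmem) h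
    have hsingsum : ∑ ξ ∈ S, (Pi.single ξ 1 : Fin r → ℚ)
        = fun i : Fin r => if (i:ℕ)+1 = r then (0:ℚ) else 1 := by
      funext i
      rw [Finset.sum_apply]
      simp only [Pi.single_apply]
      rw [Finset.sum_ite_eq S i (fun _ => (1:ℚ))]
      rw [hSfull]
      simp only [Finset.mem_filter, Finset.mem_univ, true_and]
      by_cases h : (i:ℕ)+1 = r
      · simp [h]
      · simp [h]
    have haν' : a = ν := by
      by_contra hne
      have halt : a < ν := by omega
      have hkey : ((a+1) * (r-1) : ℕ) ≤ l :=
        le_trans (Nat.mul_le_mul_right _ (by omega)) hνl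
      have hkeyQ : ((a:ℚ)+1) * ((r:ℚ)-1) ≤ l := by
        have hc := (Nat.cast_le (α := ℚ)).mpr hkey
        rw [Nat.cast_mul, hcast_r1] at hc
        push_cast at hc
        linarith
      have hden : (0:ℚ) < (l:ℚ) - (a:ℚ) * ((r:ℚ)-1) := by nlinarith
      have hden' : (l:ℚ) - (a:ℚ) * ((r:ℚ)-1) ≠ 0 := ne_of_gt hden
      set t0 : ℚ := ((l:ℚ) - ((a:ℚ)+1) * ((r:ℚ)-1)) / ((l:ℚ) - (a:ℚ)*((r:ℚ)-1)) with ht0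
      set s0 : ℚ := 1 / ((l:ℚ) - (a:ℚ)*((r:ℚ)-1)) with hs0
      set w : (Fin r → ℚ) → ℚ := fun v => if v = nj l r a then t0 else s0 with hw
      have hSval : ∀ v ∈ S.image (fun ξ => (Pi.single ξ 1 : Fin r → ℚ)), w v = s0 := by
        intro v hv
        simp only [hw]
        rw [if_neg]
        intro h
        rw [h] at hv
        exact hnotin hv
      have hwa : w (nj l r a) = t0 := by simp [hw]
      have hwsum : ∑ v ∈ B, w v = 1 := by
        rw [hBdecomp, Finset.sum_insert hnotin, Finset.sum_congr rfl hSval,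
          Finset.sum_const, nsmul_eq_mul, hwa,
          Finset.card_image_of_injective _ hsinj, hSc, hcast_r1, ht0, hs0]
        field_simp
        ring
      have ht0nn : 0 ≤ t0 := div_nonneg (by linarith) hden.le
      have hs0nn : 0 ≤ s0 := le_of_lt (by rw [hs0]; positivity)
      have hwnn : ∀ v ∈ B, 0 ≤ w v := by
        intro v _
        simp only [hw]
        split_ifs
        · exact ht0nn
        · exact hs0nn
      have hcm : B.centerMass w id ∈ convexHull ℚ (B : Set (Fin r → ℚ)) :=
        Finset.centerMass_mem_convexHull B hwnn (by rw [hwsum]; norm_num)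
          (fun v hv => Finset.mem_coe.mpr hv)
      have hcmeq : B.centerMass w id = nj l r (a+1) := by
        rw [Finset.centerMass_eq_of_sum_1 _ _ hwsum, hBdecomp, Finset.sum_insert hnotin]
        have himg : ∑ v ∈ S.image (fun ξ => (Pi.single ξ 1 : Fin r → ℚ)), w v • id v
            = s0 • ∑ ξ ∈ S, (Pi.single ξ 1 : Fin r → ℚ) := by
          rw [Finset.sum_image (fun x _ y _ h => hsinj h), Finset.smul_sum]
          refine Finset.sum_congr rfl (fun ξ hξ => ?_)
          rw [hSval _ (Finset.mem_image_of_mem _ hξ)]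
          rfl
        rw [himg, hwa, hsingsum]
        funext i
        simp only [nj, Pi.add_apply, Pi.smul_apply, smul_eq_mul, id]
        rw [ht0, hs0]
        push_cast
        split_ifs with h
        · field_simp <;> ring
        · field_simp <;> ring
      have hBmem : nj l r (a+1) ∈ B := hconv _ (hcmeq ▸ hcm) (Unique.memN_nj l r (a+1) hl0)
      have : a+1 ∈ J := hJback _ (by omega) hBmem
      rw [hJa] at this
      simp at this
    subst haν'
    right
    have hndvd : ¬ (r-1) ∣ l := by
      intro hdvd
      have hνr : ν * (r-1) = l := by rw [hν]; exact Nat.div_mul_cancel hdvd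
      have hνrQ : (ν:ℚ) * ((r:ℚ)-1) = l := by
        rw [← hcast_r1, ← Nat.cast_mul, hνr]
      set g : (Fin r → ℚ) → ℚ := fun v =>
        if v = nj l r ν then -1 else 1/((r:ℚ)-1) with hg
      have hga : g (nj l r ν) = -1 := by simp [hg]
      have hgS : ∀ v ∈ S.image (fun ξ => (Pi.single ξ 1 : Fin r → ℚ)),
          g v = 1/((r:ℚ)-1) := by
        intro v hv
        simp only [hg]
        rw [if_neg]
        intro h
        rw [h] at hv
        exact hnotin hv
      have hsum0 : ∑ x : (B : Set (Fin r → ℚ)), g (x : Fin r → ℚ) = 0 := by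
        refine (Finset.sum_finset_coe g B).trans ?_
        rw [hBdecomp, Finset.sum_insert hnotin, Finset.sum_congr rfl hgS,
          Finset.sum_const, nsmul_eq_mul, hga,
          Finset.card_image_of_injective _ hsinj, hSc, hcast_r1]
        field_simp
        norm_num
      have hcomb0 : ∑ x : (B : Set (Fin r → ℚ)),
          g (x : Fin r → ℚ) • (x : Fin r → ℚ) = 0 := by
        refine (Finset.sum_finset_coe (fun v : Fin r → ℚ => g v • v) B).trans ?_
        rw [hBdecomp, Finset.sum_insert hnotin]
        have himg : ∑ v ∈ S.image (fun ξ => (Pi.single ξ 1 : Fin r → ℚ)), g v • v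
            = (1/((r:ℚ)-1)) • ∑ ξ ∈ S, (Pi.single ξ 1 : Fin r → ℚ) := by
          rw [Finset.sum_image (fun x _ y _ h => hsinj h), Finset.smul_sum]
          refine Finset.sum_congr rfl (fun ξ hξ => ?_)
          rw [hgS _ (Finset.mem_image_of_mem _ hξ)]
        rw [himg, hga, hsingsum]
        funext i
        simp only [nj, Pi.add_apply, Pi.smul_apply, smul_eq_mul, Pi.zero_apply]
        have hr1 : ((r:ℚ)-1) ≠ 0 := ne_of_gt hrQ
        split_ifs with h
        · rw [show (l:ℚ) - (ν:ℚ)*((r:ℚ)-1) = 0 by linarith]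
          norm_num
        · field_simp
          linarith
      have hkey := haff' Finset.univ (fun x : (B : Set (Fin r → ℚ)) => g (x : Fin r → ℚ))
        hsum0 hcomb0 ⟨nj l r ν, Finset.mem_coe.mpr haB⟩ (Finset.mem_univ _)
      simp [hg] at hkey
    refine ⟨hndvd, ?_⟩
    rw [hcover, hJa, Finset.image_singleton, hSfull]
    ext v
    simp
  · -- J.card = 2
    obtain ⟨x, y, hxy, hJxy⟩ := Finset.card_eq_two.mp hJc
    obtain ⟨a, b, hab, hJab⟩ : ∃ a b, a < b ∧ J = {a, b} := by
      rcases lt_or_gt_of_ne hxy with h | h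
      · exact ⟨x, y, h, hJxy⟩
      · exact ⟨y, x, h, by rw [hJxy, Finset.pair_comm]⟩
    have haJ : a ∈ J := by rw [hJab]; simp
    have hbJ : b ∈ J := by rw [hJab]; simp
    obtain ⟨haν, haB⟩ := hJmem a haJ
    obtain ⟨hbν, hbB⟩ := hJmem b hbJ
    have hbeq : b = a + 1 := by
      by_contra hne
      have hb2 : a + 1 < b := by omega
      have hbaQ : (0:ℚ) < (b:ℚ) - a := by
        have : (a:ℚ) < b := by exact_mod_cast hab
        linarith
      have hba1 : (0:ℚ) ≤ (b:ℚ) - a - 1 := by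
        have : (a:ℚ) + 1 < b := by exact_mod_cast hb2
        linarith
      have hseg : nj l r (a+1) ∈ segment ℚ (nj l r a) (nj l r b) := by
        refine ⟨((b:ℚ)-a-1)/((b:ℚ)-a), 1/((b:ℚ)-a),
          div_nonneg hba1 hbaQ.le, le_of_lt (by positivity), ?_, ?_⟩
        · field_simp
          ring
        · funext i
          simp only [nj, Pi.add_apply, Pi.smul_apply, smul_eq_mul]
          push_cast
          split_ifs with h
          · field_simp <;> ring
          · field_simp <;> ring
      have hconvmem : nj l r (a+1) ∈ convexHull ℚ (B : Set (Fin r → ℚ)) :=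
        segment_subset_convexHull (Finset.mem_coe.mpr haB) (Finset.mem_coe.mpr hbB) hseg
      have hmem : nj l r (a+1) ∈ B := hconv _ hconvmem (Unique.memN_nj l r (a+1) hl0)
      have : a+1 ∈ J := hJback _ (by omega) hmem
      rw [hJab] at this
      simp at this
      omega
    left
    refine ⟨b, S, by omega, hbν, by omega, ?_, ?_⟩
    · intro ξ hξ
      exact (Finset.mem_filter.mp hξ).2.1
    · rw [hcover, hJab]
      have hb1 : b - 1 = a := by omega
      rw [hb1, Finset.image_insert, Finset.image_singleton, Finset.insert_union]
      ext v
      simp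
end
end

section
/- (Existence criterion for crepant full resolutions of the series (1/l)(1,…,1,l−(r−1)).) There exists a finite family B_1,…,B_m of r-element subsets of s_G ∩ N, each of which is a ℤ-basis of the lattice N, such that σ0 = pos(B_1) ∪ … ∪ pos(B_m), if and only if l ≡ 0 (mod r−1) or l ≡ 1 (mod r−1). -/
noncomputable section

namespace CQS

/-- the junior lattice point `p_k = (k/l, …, k/l, (l-(r-1)k)/l)` -/
def P (l r k : ℕ) : Fin r → ℚ :=
  fun i => if (i : ℕ) + 1 = r then ((l : ℚ) - ((r : ℚ) - 1) * k) / l else (k : ℚ) / l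

/-- standard basis vector -/
def sgl {r : ℕ} (j : Fin r) : Fin r → ℚ := Pi.single j 1

/-- the non-last indices -/
def idxE (r : ℕ) : Finset (Fin r) := Finset.univ.filter (fun i => (i : ℕ) + 1 ≠ r)

section basic

variable {l r : ℕ}

def lst (r : ℕ) (h : 0 < r) : Fin r := ⟨r - 1, by omega⟩

lemma lst_succ {r : ℕ} (h : 0 < r) : ((lst r h : Fin r) : ℕ) + 1 = r := by
  simp [lst]; omega

lemma eq_lst_iff {r : ℕ} (h : 0 < r) {i : Fin r} : i = lst r h ↔ (i : ℕ) + 1 = r := by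
  rw [Fin.ext_iff]
  simp [lst]
  omega

lemma sgl_apply (j i : Fin r) : sgl j i = if i = j then 1 else 0 := by
  simp [sgl, Pi.single_apply]

lemma sgl_inj : Function.Injective (sgl (r := r)) := by
  intro a b h
  by_contra hne
  have := congrFun h a
  simp [sgl_apply, hne] at this

lemma card_idxE (hr : 2 ≤ r) : (idxE r).card = r - 1 := by
  have : idxE r = Finset.univ.erase ⟨r - 1, by omega⟩ := by
    ext i
    simp only [idxE, Finset.mem_filter, Finset.mem_univ, true_and, Finset.mem_erase]
    constructor
    · intro h; exact ⟨by intro hh; apply h; rw [hh]; simp; omega, trivial⟩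
    · rintro ⟨h, -⟩ hh
      exact h (by apply Fin.ext; simp; omega)
  rw [this, Finset.card_erase_of_mem (Finset.mem_univ _), Finset.card_univ, Fintype.card_fin]

lemma mem_idxE {i : Fin r} : i ∈ idxE r ↔ (i : ℕ) + 1 ≠ r := by simp [idxE]

lemma sum_split {M : Type*} [AddCommMonoid M] (hr : 2 ≤ r) (f : Fin r → M) :
    ∑ i, f i = f (lst r (by omega)) + ∑ i ∈ idxE r, f i := by
  have h : idxE r = Finset.univ.erase (lst r (by omega)) := by
    ext i
    simp only [idxE, Finset.mem_filter, Finset.mem_univ, true_and, Finset.mem_erase]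
    constructor
    · intro h; exact ⟨by intro hh; apply h; rw [hh]; simp [lst]; omega, trivial⟩
    · rintro ⟨h, -⟩ hh
      exact h (by apply Fin.ext; simp [lst]; omega)
  rw [h, Finset.add_sum_erase _ f (Finset.mem_univ _)]

lemma sum_sgl (j : Fin r) : ∑ i, sgl j i = 1 := by
  simp [sgl, Pi.single_apply]

lemma sum_P (hr : 2 ≤ r) (hl : 0 < l) (k : ℕ) : ∑ i, P l r k i = 1 := by
  rw [sum_split hr]
  have h1 : P l r k (lst r (by omega)) = ((l : ℚ) - ((r : ℚ) - 1) * k) / l := by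
    simp only [P]; rw [if_pos (lst_succ (by omega))]
  have h2 : ∑ i ∈ idxE r, P l r k i = (r - 1 : ℚ) * ((k : ℚ) / l) := by
    rw [Finset.sum_congr rfl (fun i hi => ?_), Finset.sum_const, card_idxE hr, nsmul_eq_mul]
    · congr 1
      have : (1:ℚ) ≤ r := by exact_mod_cast hr.trans' (by norm_num)
      push_cast [Nat.cast_sub (by omega : 1 ≤ r)]
      ring
    · simp only [P]; rw [if_neg (mem_idxE.1 hi)]
  rw [h1, h2]
  have hl' : (l : ℚ) ≠ 0 := by positivity
  field_simp
  ring

end basic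

section memNlemmas

variable {l r : ℕ}

lemma wgt_apply_last {i : Fin r} (hi : (i : ℕ) + 1 = r) :
    wgt l r i = ((l : ℚ) - ((r : ℚ) - 1)) / l := by simp [wgt, hi]

lemma wgt_apply {i : Fin r} (hi : (i : ℕ) + 1 ≠ r) :
    wgt l r i = 1 / l := by simp [wgt, hi]

lemma P_apply_last {k : ℕ} {i : Fin r} (hi : (i : ℕ) + 1 = r) :
    P l r k i = ((l : ℚ) - ((r : ℚ) - 1) * k) / l := by simp [P, hi]

lemma P_apply {k : ℕ} {i : Fin r} (hi : (i : ℕ) + 1 ≠ r) :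
    P l r k i = (k : ℚ) / l := by simp [P, hi]

lemma memN_zero : memN l r 0 := ⟨0, 0, by funext i; simp⟩

lemma memN_add {u v : Fin r → ℚ} (hu : memN l r u) (hv : memN l r v) :
    memN l r (u + v) := by
  obtain ⟨a, c, rfl⟩ := hu
  obtain ⟨a', c', rfl⟩ := hv
  refine ⟨a + a', c + c', by
    funext i
    simp only [Pi.add_apply, Pi.smul_apply, zsmul_eq_mul, Pi.mul_apply, Pi.intCast_apply, Pi.natCast_apply]
    push_cast
    ring⟩

lemma memN_zsmul (z : ℤ) {v : Fin r → ℚ} (h : memN l r v) : memN l r (z • v) := by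
  obtain ⟨a, c, rfl⟩ := h
  refine ⟨z • a, z * c, by
    funext i
    simp only [Pi.add_apply, Pi.smul_apply, zsmul_eq_mul, Pi.mul_apply, Pi.intCast_apply, Pi.natCast_apply]
    push_cast
    ring⟩

lemma memN_neg {v : Fin r → ℚ} (h : memN l r v) : memN l r (-v) := by
  have := memN_zsmul (-1) h; simpa using this

lemma memN_sgl (j : Fin r) : memN l r (sgl j) :=
  ⟨fun i => if i = j then 1 else 0, 0, by funext i; simp [sgl_apply]⟩

lemma memN_wgt : memN l r (wgt l r) := ⟨0, 1, by funext i; simp⟩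

lemma memN_P (hr : 2 ≤ r) (hl : 0 < l) (k : ℕ) : memN l r (P l r k) := by
  refine ⟨fun i => if (i : ℕ) + 1 = r then 1 - k else 0, k, ?_⟩
  funext i
  by_cases hi : (i : ℕ) + 1 = r
  · simp only [P_apply_last hi, Pi.add_apply, Pi.smul_apply, zsmul_eq_mul, Pi.mul_apply, Pi.intCast_apply, Pi.natCast_apply, hi, if_true,
      wgt_apply_last hi]
    have hl' : (l : ℚ) ≠ 0 := by positivity
    push_cast
    field_simp
    ring
  · simp only [P_apply hi, Pi.add_apply, Pi.smul_apply, zsmul_eq_mul, Pi.mul_apply, Pi.intCast_apply, Pi.natCast_apply, hi, if_false,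
      wgt_apply hi]
    push_cast
    ring

/-- decomposition of any lattice vector into the generators -/
lemma memN_mem_span {B : Finset (Fin r → ℚ)}
    (hs : ∀ j : Fin r, sgl j ∈ Submodule.span ℤ (B : Set (Fin r → ℚ)))
    (hw : wgt l r ∈ Submodule.span ℤ (B : Set (Fin r → ℚ)))
    {v : Fin r → ℚ} (hv : memN l r v) :
    v ∈ Submodule.span ℤ (B : Set (Fin r → ℚ)) := by
  obtain ⟨a, c, rfl⟩ := hv
  have h1 : (fun i => ((a i : ℚ))) = ∑ i : Fin r, (a i) • sgl i := by
    funext j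
    rw [Finset.sum_apply]
    have : ∀ i : Fin r, ((a i) • sgl i) j = if j = i then (a i : ℚ) else 0 := by
      intro i
      simp [sgl_apply, mul_ite]
    simp only [this]
    rw [Finset.sum_ite_eq Finset.univ j (fun i => (a i : ℚ))]
    simp
  apply Submodule.add_mem
  · rw [h1]
    exact Submodule.sum_mem _ (fun i _ => Submodule.smul_mem _ _ (hs i))
  · exact Submodule.smul_mem _ _ hw

lemma span_carrier_eq {B : Finset (Fin r → ℚ)}
    (hmem : ∀ v ∈ B, memN l r v)
    (hs : ∀ j : Fin r, sgl j ∈ Submodule.span ℤ (B : Set (Fin r → ℚ)))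
    (hw : wgt l r ∈ Submodule.span ℤ (B : Set (Fin r → ℚ))) :
    (Submodule.span ℤ (B : Set (Fin r → ℚ)) : Set (Fin r → ℚ)) = {v | memN l r v} := by
  ext v
  constructor
  · intro hv
    refine Submodule.span_induction ?_ memN_zero (fun x y _ _ hx hy => memN_add hx hy)
      (fun z x _ hx => memN_zsmul z hx) hv
    intro x hx
    exact hmem x hx
  · intro hv
    exact memN_mem_span hs hw hv

end memNlemmas
section DT

variable {l r : ℕ}

def D (l r : ℕ) (j : Fin r) (k : ℕ) : Finset (Fin r → ℚ) :=
  ((idxE r).erase j).image sgl ∪ {P l r k, P l r (k + 1)}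

def T (l r : ℕ) : Finset (Fin r → ℚ) :=
  (idxE r).image sgl ∪ {P l r (l / (r - 1))}

lemma P_ne_P (hr : 2 ≤ r) (hl : 0 < l) {k k' : ℕ} (h : k ≠ k') :
    P l r k ≠ P l r k' := by
  intro he
  have h0 : ((⟨0, by omega⟩ : Fin r) : ℕ) + 1 ≠ r := by simp; omega
  have := congrFun he ⟨0, by omega⟩
  rw [P_apply h0, P_apply h0, div_eq_div_iff (by positivity) (by positivity)] at this
  exact h (by exact_mod_cast mul_right_cancel₀ (by positivity : (l:ℚ) ≠ 0) this)

lemma sgl_ne_P (hl : 0 < l) {j : Fin r} (hj : (j : ℕ) + 1 ≠ r) {k : ℕ} (hk : k < l) :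
    sgl j ≠ P l r k := by
  intro he
  have := congrFun he j
  rw [P_apply hj] at this
  simp [sgl_apply] at this
  replace this := this.symm
  rw [div_eq_one_iff_eq (by positivity : (l:ℚ) ≠ 0)] at this
  exact absurd (by exact_mod_cast this : k = l) (by omega)

/-- `K < l` when `r ≥ 3` -/
lemma Kdiv_lt (hr : 3 ≤ r) (hl : 0 < l) : l / (r - 1) < l := by
  apply Nat.div_lt_self hl; omega

lemma sgl_erase_ne_P (hr : 2 ≤ r) (hl : r ≤ l) {j : Fin r} (hj : j ∈ idxE r)
    {i : Fin r} (hi : i ∈ (idxE r).erase j) {k : ℕ} (hk : k ≤ l / (r - 1)) :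
    sgl i ≠ P l r k := by
  rcases Nat.lt_or_ge r 3 with h3 | h3
  · -- r = 2 : the erased index set is empty
    exfalso
    have hr2 : r = 2 := by omega
    obtain ⟨hne, hiE⟩ := Finset.mem_erase.1 hi
    have hi1 : (i : ℕ) + 1 ≠ r := mem_idxE.1 hiE
    have hj1 : (j : ℕ) + 1 ≠ r := mem_idxE.1 hj
    apply hne
    apply Fin.ext
    have := i.isLt; have := j.isLt
    omega
  · exact sgl_ne_P (by omega) (mem_idxE.1 (Finset.mem_erase.1 hi).2)
      (lt_of_le_of_lt hk (Kdiv_lt h3 (by omega)))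

lemma sum_D {M : Type*} [AddCommMonoid M] (hr : 2 ≤ r) (hl : r ≤ l) {j : Fin r}
    (hj : j ∈ idxE r) {k : ℕ} (hk : k + 1 ≤ l / (r - 1)) (f : (Fin r → ℚ) → M) :
    ∑ b ∈ D l r j k, f b
      = ∑ i ∈ (idxE r).erase j, f (sgl i) + f (P l r k) + f (P l r (k + 1)) := by
  have hd : Disjoint (((idxE r).erase j).image sgl) ({P l r k, P l r (k + 1)} : Finset _) := by
    rw [Finset.disjoint_right]
    intro x hx hx'
    obtain ⟨i, hi, rfl⟩ := Finset.mem_image.1 hx'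
    rcases Finset.mem_insert.1 hx with h | h
    · exact sgl_erase_ne_P hr hl hj hi (by omega : k ≤ l / (r-1)) h
    · exact sgl_erase_ne_P hr hl hj hi hk (Finset.mem_singleton.1 h)
  rw [D, Finset.sum_union hd, Finset.sum_image (fun a _ b _ h => sgl_inj h),
    Finset.sum_pair (P_ne_P hr (by omega) (by omega)), add_assoc]

lemma card_D (hr : 2 ≤ r) (hl : r ≤ l) {j : Fin r}
    (hj : j ∈ idxE r) {k : ℕ} (hk : k + 1 ≤ l / (r - 1)) : (D l r j k).card = r := by
  have := sum_D hr hl hj hk (fun _ => (1 : ℕ))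
  simp only [Finset.sum_const, smul_eq_mul, mul_one, Finset.card_erase_of_mem hj,
    card_idxE hr] at this
  omega

lemma sum_T {M : Type*} [AddCommMonoid M] (hr : 3 ≤ r) (hl : r ≤ l) (f : (Fin r → ℚ) → M) :
    ∑ b ∈ T l r, f b = ∑ i ∈ idxE r, f (sgl i) + f (P l r (l / (r - 1))) := by
  have hd : Disjoint ((idxE r).image sgl) ({P l r (l / (r - 1))} : Finset _) := by
    rw [Finset.disjoint_right]
    intro x hx hx'
    obtain ⟨i, hi, rfl⟩ := Finset.mem_image.1 hx'
    exact sgl_ne_P (show 0 < l by omega) (mem_idxE.1 hi) (Kdiv_lt hr (show 0 < l by omega))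
      (Finset.mem_singleton.1 hx)
  rw [T, Finset.sum_union hd, Finset.sum_image (fun a _ b _ h => sgl_inj h),
    Finset.sum_singleton]

lemma card_T (hr : 3 ≤ r) (hl : r ≤ l) : (T l r).card = r := by
  have := sum_T hr hl (fun _ => (1 : ℕ))
  simp only [Finset.sum_const, smul_eq_mul, mul_one,
    card_idxE (show 2 ≤ r by omega)] at this
  omega

lemma mem_D_P {j : Fin r} {k : ℕ} : P l r k ∈ D l r j k := by
  simp [D]

lemma mem_D_P' {j : Fin r} {k : ℕ} : P l r (k + 1) ∈ D l r j k := by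
  simp [D]

lemma mem_D_sgl {j i : Fin r} (hi : i ∈ (idxE r).erase j) {k : ℕ} :
    sgl i ∈ D l r j k := by
  simp only [D, Finset.mem_union]
  exact Or.inl (Finset.mem_image_of_mem _ hi)

lemma mem_T_P : P l r (l / (r - 1)) ∈ T l r := by simp [T]

lemma mem_T_sgl {i : Fin r} (hi : i ∈ idxE r) : sgl i ∈ T l r := by
  simp only [T, Finset.mem_union]
  exact Or.inl (Finset.mem_image_of_mem _ hi)

end DT
section identities

variable {l r : ℕ}

lemma sum_sgl_idxE_apply (s : Finset (Fin r)) (i : Fin r) :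
    (∑ i' ∈ s, sgl i') i = if i ∈ s then (1 : ℚ) else 0 := by
  rw [Finset.sum_apply]
  have : ∀ i' : Fin r, sgl i' i = if i = i' then (1:ℚ) else 0 := fun i' => sgl_apply i' i
  simp only [this]
  rw [Finset.sum_ite_eq s i (fun _ => (1:ℚ))]

lemma id_er (hr : 2 ≤ r) (hl : 0 < l) (k : ℕ) :
    sgl (lst r (by omega)) = ((k : ℤ) + 1) • P l r k - (k : ℤ) • P l r (k + 1) := by
  funext i
  have hl' : (l : ℚ) ≠ 0 := Nat.cast_ne_zero.2 (by omega)
  by_cases hi : (i : ℕ) + 1 = r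
  · rw [sgl_apply, if_pos ((eq_lst_iff (by omega)).2 hi)]
    simp only [Pi.sub_apply, Pi.smul_apply, zsmul_eq_mul, Pi.mul_apply, Pi.intCast_apply,
      Pi.natCast_apply, P_apply_last hi]
    push_cast
    field_simp
    ring
  · rw [sgl_apply, if_neg (fun h => hi ((eq_lst_iff (by omega)).1 h))]
    simp only [Pi.sub_apply, Pi.smul_apply, zsmul_eq_mul, Pi.mul_apply, Pi.intCast_apply,
      Pi.natCast_apply, P_apply hi]
    push_cast
    field_simp
    ring

lemma id_w (hr : 2 ≤ r) (hl : 0 < l) (k : ℕ) :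
    wgt l r = P l r (k + 1) - P l r k + sgl (lst r (by omega)) := by
  funext i
  have hl' : (l : ℚ) ≠ 0 := Nat.cast_ne_zero.2 (by omega)
  by_cases hi : (i : ℕ) + 1 = r
  · rw [Pi.add_apply, Pi.sub_apply, sgl_apply, if_pos ((eq_lst_iff (by omega)).2 hi),
      wgt_apply_last hi, P_apply_last hi, P_apply_last hi]
    push_cast
    field_simp
    ring
  · rw [Pi.add_apply, Pi.sub_apply, sgl_apply,
      if_neg (fun h => hi ((eq_lst_iff (by omega)).1 h)), wgt_apply hi, P_apply hi, P_apply hi]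
    push_cast
    field_simp
    ring

lemma id_lw (hr : 2 ≤ r) (hl : r ≤ l) :
    (l : ℤ) • wgt l r
      = (∑ i ∈ idxE r, sgl i) + ((l : ℤ) - (r : ℤ) + 1) • sgl (lst r (by omega)) := by
  funext i
  have hl' : (l : ℚ) ≠ 0 := Nat.cast_ne_zero.2 (by omega)
  by_cases hi : (i : ℕ) + 1 = r
  · have hiE : i ∉ idxE r := fun h => (mem_idxE.1 h) hi
    rw [Pi.add_apply, Pi.smul_apply, Pi.smul_apply, zsmul_eq_mul, zsmul_eq_mul,
      wgt_apply_last hi, sum_sgl_idxE_apply, if_neg hiE, sgl_apply,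
      if_pos ((eq_lst_iff (by omega)).2 hi)]
    push_cast
    field_simp
    ring
  · have hiE : i ∈ idxE r := mem_idxE.2 hi
    rw [Pi.add_apply, Pi.smul_apply, Pi.smul_apply, zsmul_eq_mul, zsmul_eq_mul,
      wgt_apply hi, sum_sgl_idxE_apply, if_pos hiE, sgl_apply,
      if_neg (fun h => hi ((eq_lst_iff (by omega)).1 h))]
    push_cast
    field_simp
    ring

lemma idT_er (hr : 3 ≤ r) (hl : r ≤ l) {K : ℕ} (hK : (r - 1) * K + 1 = l) :
    sgl (lst r (by omega)) = (l : ℤ) • P l r K - (K : ℤ) • (∑ i ∈ idxE r, sgl i) := by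
  have hl' : (l : ℚ) ≠ 0 := Nat.cast_ne_zero.2 (by omega)
  have hKq : ((r : ℚ) - 1) * (K : ℚ) + 1 = l := by
    have : ((r - 1 : ℕ) : ℚ) * (K : ℚ) + 1 = (l : ℚ) := by exact_mod_cast hK
    rw [Nat.cast_sub (show 1 ≤ r by omega)] at this
    push_cast at this
    linarith
  funext i
  by_cases hi : (i : ℕ) + 1 = r
  · have hiE : i ∉ idxE r := fun h => (mem_idxE.1 h) hi
    rw [sgl_apply, if_pos ((eq_lst_iff (by omega)).2 hi), Pi.sub_apply, Pi.smul_apply,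
      Pi.smul_apply, zsmul_eq_mul, zsmul_eq_mul, P_apply_last hi, sum_sgl_idxE_apply,
      if_neg hiE]
    field_simp
    push_cast
    rw [← hKq]
    ring
  · have hiE : i ∈ idxE r := mem_idxE.2 hi
    rw [sgl_apply, if_neg (fun h => hi ((eq_lst_iff (by omega)).1 h)), Pi.sub_apply,
      Pi.smul_apply, Pi.smul_apply, zsmul_eq_mul, zsmul_eq_mul, P_apply hi,
      sum_sgl_idxE_apply, if_pos hiE]
    field_simp
    push_cast
    ring

lemma idT_Kw (hr : 3 ≤ r) (hl : r ≤ l) {K : ℕ} (hK : (r - 1) * K + 1 = l) :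
    (K : ℤ) • wgt l r = P l r K + ((K : ℤ) - 1) • sgl (lst r (by omega)) := by
  have hl' : (l : ℚ) ≠ 0 := Nat.cast_ne_zero.2 (by omega)
  have hKq : ((r : ℚ) - 1) * (K : ℚ) + 1 = l := by
    have : ((r - 1 : ℕ) : ℚ) * (K : ℚ) + 1 = (l : ℚ) := by exact_mod_cast hK
    rw [Nat.cast_sub (show 1 ≤ r by omega)] at this
    push_cast at this
    linarith
  funext i
  by_cases hi : (i : ℕ) + 1 = r
  · rw [Pi.add_apply, Pi.smul_apply, Pi.smul_apply, zsmul_eq_mul, zsmul_eq_mul,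
      wgt_apply_last hi, P_apply_last hi, sgl_apply, if_pos ((eq_lst_iff (by omega)).2 hi)]
    push_cast
    field_simp
    nlinarith [hKq]
  · rw [Pi.add_apply, Pi.smul_apply, Pi.smul_apply, zsmul_eq_mul, zsmul_eq_mul,
      wgt_apply hi, P_apply hi, sgl_apply, if_neg (fun h => hi ((eq_lst_iff (by omega)).1 h))]
    push_cast
    field_simp
    ring

end identities
section spans

variable {l r : ℕ}

lemma sgl_classify (hr : 2 ≤ r) (j : Fin r) : j = lst r (by omega) ∨ j ∈ idxE r := by
  by_cases hj : (j : ℕ) + 1 = r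
  · exact Or.inl ((eq_lst_iff (by omega)).2 hj)
  · exact Or.inr (mem_idxE.2 hj)

lemma span_D_eq (hr : 2 ≤ r) (hl : r ≤ l) {j : Fin r} (hj : j ∈ idxE r) {k : ℕ}
    (hk : k + 1 ≤ l / (r - 1)) :
    (Submodule.span ℤ ((D l r j k : Set (Fin r → ℚ))) : Set (Fin r → ℚ))
      = {v | memN l r v} := by
  have hl0 : 0 < l := by omega
  have hr0 : 0 < r := by omega
  set S := Submodule.span ℤ ((D l r j k : Set (Fin r → ℚ)))
  have hPk : P l r k ∈ S := Submodule.subset_span mem_D_P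
  have hPk' : P l r (k + 1) ∈ S := Submodule.subset_span mem_D_P'
  have hsglE : ∀ i ∈ (idxE r).erase j, sgl i ∈ S :=
    fun i hi => Submodule.subset_span (mem_D_sgl hi)
  have her : sgl (lst r (by omega)) ∈ S := by
    rw [id_er hr hl0 k]
    exact Submodule.sub_mem _ (Submodule.smul_mem _ _ hPk) (Submodule.smul_mem _ _ hPk')
  have hw : wgt l r ∈ S := by
    rw [id_w hr hl0 k]
    exact Submodule.add_mem _ (Submodule.sub_mem _ hPk' hPk) her
  have hsglj : sgl j ∈ S := by
    have hsum : (∑ i ∈ idxE r, sgl i) = sgl j + ∑ i ∈ (idxE r).erase j, sgl i :=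
      (Finset.add_sum_erase _ _ hj).symm
    have hlw := id_lw (l := l) hr hl
    have : sgl j = (l : ℤ) • wgt l r - ((l : ℤ) - (r : ℤ) + 1) • sgl (lst r (by omega))
        - ∑ i ∈ (idxE r).erase j, sgl i := by
      rw [hlw, hsum]; abel
    rw [this]
    exact Submodule.sub_mem _
      (Submodule.sub_mem _ (Submodule.smul_mem _ _ hw) (Submodule.smul_mem _ _ her))
      (Submodule.sum_mem _ hsglE)
  apply span_carrier_eq
  · intro v hv
    rw [D, Finset.mem_union] at hv
    rcases hv with hv | hv
    · obtain ⟨i, _, rfl⟩ := Finset.mem_image.1 hv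
      exact memN_sgl i
    · rcases Finset.mem_insert.1 hv with rfl | hv
      · exact memN_P hr hl0 k
      · rw [Finset.mem_singleton.1 hv]
        exact memN_P hr hl0 (k + 1)
  · intro j'
    rcases sgl_classify hr j' with rfl | hj'
    · exact her
    · by_cases hjj : j' = j
      · subst hjj
        exact hsglj
      · exact hsglE j' (Finset.mem_erase.2 ⟨hjj, hj'⟩)
  · exact hw

lemma span_T_eq (hr : 3 ≤ r) (hl : r ≤ l) (hmod : l % (r - 1) = 1) :
    (Submodule.span ℤ ((T l r : Set (Fin r → ℚ))) : Set (Fin r → ℚ))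
      = {v | memN l r v} := by
  have hK : (r - 1) * (l / (r - 1)) + 1 = l := by
    have := Nat.div_add_mod l (r - 1); omega
  set K := l / (r - 1) with hKdef
  set S := Submodule.span ℤ ((T l r : Set (Fin r → ℚ)))
  have hPK : P l r K ∈ S := Submodule.subset_span mem_T_P
  have hsglE : ∀ i ∈ idxE r, sgl i ∈ S := fun i hi => Submodule.subset_span (mem_T_sgl hi)
  have her : sgl (lst r (by omega)) ∈ S := by
    rw [idT_er hr hl hK]
    exact Submodule.sub_mem _ (Submodule.smul_mem _ _ hPK)
      (Submodule.smul_mem _ _ (Submodule.sum_mem _ hsglE))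
  have hsgl : ∀ j' : Fin r, sgl j' ∈ S := by
    intro j'
    rcases sgl_classify (by omega) j' with rfl | hj'
    · exact her
    · exact hsglE j' hj'
  have hlw : (l : ℤ) • wgt l r ∈ S := by
    rw [id_lw (by omega) hl]
    exact Submodule.add_mem _ (Submodule.sum_mem _ hsglE) (Submodule.smul_mem _ _ her)
  have hKw : (K : ℤ) • wgt l r ∈ S := by
    rw [idT_Kw hr hl hK]
    exact Submodule.add_mem _ hPK (Submodule.smul_mem _ _ her)
  have hw : wgt l r ∈ S := by
    have hc : (1 : ℤ) = (l : ℤ) - ((r : ℤ) - 1) * (K : ℤ) := by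
      have : ((r : ℤ) - 1) * (K : ℤ) + 1 = l := by
        have := hK
        push_cast [← this, Nat.cast_sub (show 1 ≤ r by omega)]
        ring
      linarith
    have : wgt l r = (l : ℤ) • wgt l r - ((r : ℤ) - 1) • ((K : ℤ) • wgt l r) := by
      rw [smul_smul, ← sub_smul, ← hc, one_smul]
    rw [this]
    exact Submodule.sub_mem _ hlw (Submodule.smul_mem _ _ hKw)
  apply span_carrier_eq
  · intro v hv
    rw [T, Finset.mem_union] at hv
    rcases hv with hv | hv
    · obtain ⟨i, _, rfl⟩ := Finset.mem_image.1 hv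
      exact memN_sgl i
    · rw [Finset.mem_singleton.1 hv]
      exact memN_P (by omega) (by omega) K
  · exact hsgl
  · exact hw

lemma eq_sum_sgl (v : Fin r → ℚ) : v = ∑ i, v i • sgl i := by
  funext j
  rw [Finset.sum_apply]
  have : ∀ i : Fin r, (v i • sgl i) j = if j = i then v i else 0 := by
    intro i
    simp [sgl_apply, mul_ite]
  simp only [this]
  rw [Finset.sum_ite_eq Finset.univ j v]
  simp

lemma linindep_of_span {B : Finset (Fin r → ℚ)} (hB : B.card = r)
    (hsp : (Submodule.span ℤ (B : Set (Fin r → ℚ)) : Set (Fin r → ℚ)) = {v | memN l r v}) :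
    LinearIndependent ℤ (fun v : (B : Set (Fin r → ℚ)) => (v : Fin r → ℚ)) := by
  have hsub : (Submodule.span ℤ (B : Set (Fin r → ℚ)) : Set (Fin r → ℚ))
      ⊆ (Submodule.span ℚ (B : Set (Fin r → ℚ)) : Set (Fin r → ℚ)) :=
    Submodule.span_subset_span ℤ ℚ _
  have hQtop : ⊤ ≤ Submodule.span ℚ (B : Set (Fin r → ℚ)) := by
    intro v _
    have hs : ∀ i : Fin r, sgl i ∈ Submodule.span ℚ (B : Set (Fin r → ℚ)) := by
      intro i
      apply hsub
      rw [hsp]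
      exact memN_sgl i
    have : v = ∑ i, v i • sgl i := eq_sum_sgl v
    rw [this]
    exact Submodule.sum_mem _ (fun i _ => Submodule.smul_mem _ _ (hs i))
  have hQ : LinearIndependent ℚ (fun v : (B : Set (Fin r → ℚ)) => (v : Fin r → ℚ)) := by
    apply linearIndependent_of_top_le_span_of_card_eq_finrank
    · rw [Subtype.range_coe]
      exact hQtop
    · rw [Module.finrank_fintype_fun_eq_card, Fintype.card_fin]
      have h2 : Fintype.card (B : Set (Fin r → ℚ)) = B.card := Fintype.card_coe B
      omega
  exact hQ.restrict_scalars (by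
    intro a b h
    simpa [zsmul_eq_mul] using h)

end spans
section forwardlemmas

variable {l r : ℕ}

lemma P_zero_eq (hr : 2 ≤ r) (hl : 0 < l) : P l r 0 = sgl (lst r (by omega)) := by
  funext i
  have hl' : (l : ℚ) ≠ 0 := Nat.cast_ne_zero.2 (by omega)
  by_cases hi : (i : ℕ) + 1 = r
  · rw [P_apply_last hi, sgl_apply, if_pos ((eq_lst_iff (by omega)).2 hi)]
    push_cast
    field_simp
    ring
  · rw [P_apply hi, sgl_apply, if_neg (fun h => hi ((eq_lst_iff (by omega)).1 h))]
    push_cast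
    simp

lemma le_K_iff (hr : 2 ≤ r) {k : ℕ} : k ≤ l / (r - 1) ↔ (r - 1) * k ≤ l := by
  rw [Nat.le_div_iff_mul_le (by omega : 0 < r - 1), mul_comm]

/-- a nonnegative vector with a coordinate `≥ 1` and total sum `1` is a basis vector -/
lemma classify_junior (hr : 2 ≤ r) (hl : r ≤ l) {v : Fin r → ℚ}
    (hv : memN l r v) (hnn : ∀ i, 0 ≤ v i) (hsum : ∑ i, v i = 1) :
    (∃ j ∈ idxE r, v = sgl j) ∨ ∃ k : ℕ, k ≤ l / (r - 1) ∧ v = P l r k := by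
  have hl0 : 0 < l := by omega
  have hlq : (l : ℚ) ≠ 0 := Nat.cast_ne_zero.2 (by omega)
  have hlz : ((l : ℤ)) ≠ 0 := by exact_mod_cast (show l ≠ 0 by omega)
  obtain ⟨a, c, hvd⟩ := hv
  set k0 : ℤ := c % l with hk0def
  set q : ℤ := c / l with hqdef
  have hc : c = l * q + k0 := (Int.mul_ediv_add_emod c l).symm
  have hk0nn : 0 ≤ k0 := Int.emod_nonneg c hlz
  have hk0lt : k0 < l := Int.emod_lt_of_pos c (by exact_mod_cast hl0)
  set a' : Fin r → ℤ := fun i => a i + q * (if (i : ℕ) + 1 = r then (l : ℤ) - r + 1 else 1)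
    with ha'def
  have hva' : ∀ i, v i = (a' i : ℚ) + (k0 : ℚ) * wgt l r i := by
    intro i
    have hvi : v i = (a i : ℚ) + (c : ℚ) * wgt l r i := by
      rw [hvd]
      simp [Pi.smul_apply, zsmul_eq_mul]
    have hcq : (c : ℚ) = (l : ℚ) * (q : ℚ) + (k0 : ℚ) := by exact_mod_cast congrArg Int.cast hc
    by_cases hi : (i : ℕ) + 1 = r
    · rw [hvi, wgt_apply_last hi, hcq, ha'def]
      simp only [hi, if_true]
      push_cast
      field_simp
      ring
    · rw [hvi, wgt_apply hi, hcq, ha'def]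
      simp only [hi, if_false]
      push_cast
      field_simp
      ring
  -- a fact used repeatedly: the sum over the erased set is nonnegative
  have herase : ∀ j : Fin r, v j ≤ 1 := by
    intro j
    have h1 : ∑ i ∈ Finset.univ.erase j, v i + v j = 1 := by
      rw [Finset.sum_erase_add _ _ (Finset.mem_univ j)]
      exact hsum
    have h2 : (0:ℚ) ≤ ∑ i ∈ Finset.univ.erase j, v i :=
      Finset.sum_nonneg (fun i _ => hnn i)
    linarith
  by_cases hk0 : k0 = 0
  -- integral case : v is a standard basis vector
  · have hvint : ∀ i, v i = (a' i : ℚ) := by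
      intro i; rw [hva' i, hk0]; simp
    have ha'nn : ∀ i, 0 ≤ a' i := by
      intro i
      have := hnn i
      rw [hvint i] at this
      exact_mod_cast this
    have hex : ∃ j, 1 ≤ a' j := by
      by_contra h
      push_neg at h
      have : ∀ i, a' i = 0 := fun i => le_antisymm (by have := h i; omega) (ha'nn i)
      have : ∑ i, v i = 0 := Finset.sum_eq_zero (fun i _ => by rw [hvint i, this i]; simp)
      rw [hsum] at this
      norm_num at this
    obtain ⟨j, hj⟩ := hex
    have hvj : v j = 1 := by
      have h1 : (1:ℚ) ≤ v j := by
        rw [hvint j]; exact_mod_cast hj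
      linarith [herase j]
    have hrest : ∀ i, i ≠ j → v i = 0 := by
      intro i hij
      have h1 : ∑ i' ∈ Finset.univ.erase j, v i' + v j = 1 := by
        rw [Finset.sum_erase_add _ _ (Finset.mem_univ j)]; exact hsum
      have h2 : ∑ i' ∈ Finset.univ.erase j, v i' = 0 := by linarith
      have h3 := (Finset.sum_eq_zero_iff_of_nonneg (fun i' _ => hnn i')).1 h2
      exact h3 i (Finset.mem_erase.2 ⟨hij, Finset.mem_univ i⟩)
    have hveq : v = sgl j := by
      funext i
      rw [sgl_apply]
      by_cases hij : i = j
      · rw [if_pos hij, hij, hvj]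
      · rw [if_neg hij, hrest i hij]
    rcases sgl_classify hr j with hj' | hj'
    · right
      refine ⟨0, Nat.zero_le _, ?_⟩
      rw [P_zero_eq hr hl0, hveq, hj']
    · exact Or.inl ⟨j, hj', hveq⟩
  -- fractional case : v = P k
  · obtain ⟨k, hkc⟩ : ∃ k : ℕ, (k : ℤ) = k0 := ⟨k0.toNat, Int.toNat_of_nonneg hk0nn⟩
    have hk1 : 1 ≤ k := by omega
    have hkl : k < l := by omega
    have hkq : (0:ℚ) < (k : ℚ) / l := by
      apply div_pos
      · exact_mod_cast Nat.cast_pos.2 (by omega)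
      · exact_mod_cast Nat.cast_pos.2 hl0
    have hkq1 : (k : ℚ) / l < 1 := by
      rw [div_lt_one (by exact_mod_cast Nat.cast_pos.2 hl0)]
      exact_mod_cast hkl
    have hvi : ∀ i : Fin r, (i : ℕ) + 1 ≠ r → v i = (a' i : ℚ) + (k : ℚ) / l := by
      intro i hi
      rw [hva' i, wgt_apply hi]
      rw [show ((k0 : ℚ)) = ((k : ℚ)) by exact_mod_cast congrArg Int.cast hkc.symm]
      ring
    have ha'z : ∀ i : Fin r, (i : ℕ) + 1 ≠ r → a' i = 0 := by
      intro i hi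
      have hnn' : 0 ≤ (a' i : ℚ) + (k:ℚ)/l := by rw [← hvi i hi]; exact hnn i
      have hlow : 0 ≤ a' i := by
        have : (-1 : ℚ) < (a' i : ℚ) := by linarith
        have : (-1 : ℤ) < a' i := by exact_mod_cast this
        omega
      have hup : a' i ≤ 0 := by
        by_contra hcon
        have h1 : 1 ≤ a' i := by omega
        have h2 : (1:ℚ) < v i := by
          rw [hvi i hi]
          have : (1:ℚ) ≤ (a' i : ℚ) := by exact_mod_cast h1
          linarith
        linarith [herase i]
      omega
    have hvik : ∀ i : Fin r, (i : ℕ) + 1 ≠ r → v i = (k : ℚ) / l := by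
      intro i hi
      rw [hvi i hi, ha'z i hi]
      simp
    -- the last coordinate
    have hlast : v (lst r (by omega)) = 1 - ((r:ℚ) - 1) * ((k:ℚ)/l) := by
      have h1 := sum_split hr v
      rw [hsum] at h1
      have h2 : ∑ i ∈ idxE r, v i = ((r:ℚ) - 1) * ((k:ℚ)/l) := by
        rw [Finset.sum_congr rfl (fun i hi => hvik i (mem_idxE.1 hi)), Finset.sum_const,
          card_idxE hr, nsmul_eq_mul]
        congr 1
        push_cast [Nat.cast_sub (show 1 ≤ r by omega)]
        ring
      rw [h2] at h1
      linarith
    have hkK : (r - 1) * k ≤ l := by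
      have h0 := hnn (lst r (by omega))
      rw [hlast] at h0
      have h1 : ((r:ℚ) - 1) * ((k:ℚ)/l) ≤ 1 := by linarith
      have hlpos : (0:ℚ) < l := by exact_mod_cast Nat.cast_pos.2 hl0
      rw [← mul_div_assoc, div_le_one hlpos] at h1
      have h3 : (((r-1) * k : ℕ) : ℚ) ≤ (l : ℚ) := by
        push_cast [Nat.cast_sub (show 1 ≤ r by omega)]
        linarith
      exact_mod_cast h3
    refine Or.inr ⟨k, (le_K_iff hr).2 hkK, ?_⟩
    funext i
    by_cases hi : (i : ℕ) + 1 = r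
    · have : i = lst r (by omega) := (eq_lst_iff (by omega)).2 hi
      rw [this, P_apply_last (by rw [lst_succ]), hlast]
      field_simp
    · rw [hvik i hi, P_apply hi]

end forwardlemmas
section caseA

variable {l r : ℕ}

lemma sum_smul_sgl_apply (s : Finset (Fin r)) (G : Fin r → ℤ) (co : Fin r) :
    (∑ i ∈ s, G i • sgl i) co = if co ∈ s then (G co : ℚ) else 0 := by
  rw [Finset.sum_apply]
  have : ∀ i ∈ s, (G i • sgl i) co = if co = i then (G i : ℚ) else 0 := by
    intro i _
    simp [sgl_apply, mul_ite]
  rw [Finset.sum_congr rfl this, Finset.sum_ite_eq s co (fun i => (G i : ℚ))]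

/-- If all of `e_1, …, e_{r-1}` occur in a spanning junior set `B` of cardinality `r`,
then `l ≡ 1 (mod r-1)`. -/
lemma caseA (hr3 : 3 ≤ r) (hl : r ≤ l) {B : Finset (Fin r → ℚ)} (hcard : B.card = r)
    (hclass : ∀ v ∈ B, (∃ j ∈ idxE r, v = sgl j) ∨ ∃ k : ℕ, k ≤ l / (r - 1) ∧ v = P l r k)
    (hsub : ∀ j ∈ idxE r, sgl j ∈ B)
    (hspan : (Submodule.span ℤ (B : Set (Fin r → ℚ)) : Set (Fin r → ℚ))
        = {v | memN l r v}) :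
    l % (r - 1) = 1 := by
  have hr : 2 ≤ r := by omega
  have hl0 : 0 < l := by omega
  have hlq : (l : ℚ) ≠ 0 := Nat.cast_ne_zero.2 (by omega)
  set E' : Finset (Fin r → ℚ) := (idxE r).image sgl with hE'def
  have hE'sub : E' ⊆ B := by
    intro v hv
    obtain ⟨i, hi, rfl⟩ := Finset.mem_image.1 hv
    exact hsub i hi
  have hcardE' : E'.card = r - 1 := by
    rw [hE'def, Finset.card_image_of_injective _ sgl_inj, card_idxE hr]
  have hss : E' ⊂ B := by
    rw [Finset.ssubset_iff_subset_ne]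
    refine ⟨hE'sub, fun h => ?_⟩
    rw [h, hcard] at hcardE'
    omega
  obtain ⟨v0, hv0B, hv0E⟩ := Finset.exists_of_ssubset hss
  obtain ⟨k, hkK, rfl⟩ : ∃ k : ℕ, k ≤ l / (r - 1) ∧ v0 = P l r k := by
    rcases hclass v0 hv0B with ⟨j, hj, rfl⟩ | h
    · exact absurd (Finset.mem_image_of_mem sgl hj) hv0E
    · exact h
  -- B is exactly E' ∪ {P k}
  have hBeq : E' ∪ {P l r k} = B := by
    apply Finset.eq_of_subset_of_card_le
    · intro v hv
      rcases Finset.mem_union.1 hv with hv | hv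
      · exact hE'sub hv
      · rw [Finset.mem_singleton.1 hv]; exact hv0B
    · rw [Finset.card_union_of_disjoint (Finset.disjoint_singleton_right.2 hv0E),
        hcardE', hcard, Finset.card_singleton]
      omega
  -- representation of a lattice vector u in terms of the elements of B
  have hrep : ∀ u : Fin r → ℚ, memN l r u → ∃ n g : ℤ,
      (n : ℚ) + (g : ℚ) * ((k : ℚ) / l) = u ⟨0, by omega⟩ ∧
      (g : ℚ) * (((l : ℚ) - ((r : ℚ) - 1) * k) / l) = u (lst r (by omega)) := by
    intro u hu
    have : u ∈ Submodule.span ℤ (B : Set (Fin r → ℚ)) := by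
      rw [← SetLike.mem_coe, hspan]; exact hu
    obtain ⟨f, -, hf⟩ := Submodule.mem_span_finset.1 this
    rw [← hBeq] at hf
    rw [Finset.sum_union (Finset.disjoint_singleton_right.2 hv0E), Finset.sum_singleton,
      hE'def, Finset.sum_image (fun a _ b _ h => sgl_inj h)] at hf
    refine ⟨f (sgl ⟨0, by omega⟩), f (P l r k), ?_, ?_⟩
    · have h0 := congrFun hf ⟨0, by omega⟩
      have hmem0 : (⟨0, by omega⟩ : Fin r) ∈ idxE r := mem_idxE.2 (by simp; omega)
      rw [Pi.add_apply, sum_smul_sgl_apply, if_pos hmem0, Pi.smul_apply, zsmul_eq_mul,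
        P_apply (mem_idxE.1 hmem0)] at h0
      exact h0
    · have h1 := congrFun hf (lst r (by omega))
      have hmem1 : (lst r (by omega) : Fin r) ∉ idxE r := by
        intro h
        exact (mem_idxE.1 h) (lst_succ (by omega))
      rw [Pi.add_apply, sum_smul_sgl_apply, if_neg hmem1, Pi.smul_apply, zsmul_eq_mul,
        P_apply_last (lst_succ (by omega))] at h1
      rw [← h1]; ring
  -- apply to e_r and to w
  obtain ⟨n, g, He1, He2⟩ := hrep (sgl (lst r (by omega))) (memN_sgl _)
  obtain ⟨n', g', Hw1, Hw2⟩ := hrep (wgt l r) memN_wgt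
  rw [sgl_apply, if_neg (by
    intro h
    have := congrArg (fun x : Fin r => (x : ℕ)) h
    simp [lst] at this
    omega)] at He1
  rw [sgl_apply, if_pos rfl] at He2
  rw [wgt_apply (by simp; omega)] at Hw1
  rw [wgt_apply_last (lst_succ (by omega))] at Hw2
  -- clear denominators and cast to ℤ
  have hrq : ((r : ℚ) - 1) = ((r - 1 : ℕ) : ℚ) := by
    push_cast [Nat.cast_sub (show 1 ≤ r by omega)]; ring
  have Z1 : (n : ℤ) * l + g * k = 0 := by
    have : ((n : ℤ) * l + g * k : ℤ) = ((0 : ℤ)) := by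
      have := He1
      field_simp at this
      exact_mod_cast this
    exact this
  have Z2 : (g : ℤ) * ((l : ℤ) - ((r : ℤ) - 1) * k) = l := by
    have h2 := He2
    rw [hrq] at h2
    field_simp at h2
    push_cast at h2 ⊢
    have h2' : ((g * ((l:ℤ) - ((r:ℤ)-1)*k) : ℤ) : ℚ) = ((l:ℤ):ℚ) := by
      push_cast
      rw [hrq]
      linarith
    exact_mod_cast h2'
  have Z3 : (n' : ℤ) * l + g' * k = 1 := by
    have h3 := Hw1
    field_simp at h3
    exact_mod_cast h3
  have Z4 : (g' : ℤ) * ((l : ℤ) - ((r : ℤ) - 1) * k) = (l : ℤ) - ((r : ℤ) - 1) := by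
    have h4 := Hw2
    rw [hrq] at h4
    field_simp at h4
    push_cast at h4 ⊢
    have h4' : ((g' * ((l:ℤ) - ((r:ℤ)-1)*k) : ℤ) : ℚ) = (((l:ℤ) - ((r:ℤ)-1) : ℤ) : ℚ) := by
      push_cast
      rw [hrq]
      linarith
    exact_mod_cast h4'
  set DD : ℤ := (l : ℤ) - ((r : ℤ) - 1) * k with hDDdef
  have hlZ : ((l : ℤ)) ≠ 0 := by exact_mod_cast (show l ≠ 0 by omega)
  have hDD0 : 0 ≤ DD := by
    have : (r - 1) * k ≤ l := (le_K_iff hr).1 hkK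
    have hcast : (((r - 1) * k : ℕ) : ℤ) ≤ (l : ℤ) := by exact_mod_cast this
    push_cast [Nat.cast_sub (show 1 ≤ r by omega)] at hcast
    omega
  have E5 : (k : ℤ) = (-n) * DD := by
    apply mul_left_cancel₀ hlZ
    linear_combination DD * Z1 - (k : ℤ) * Z2
  have E6 : (k : ℤ) - 1 = (-n') * DD := by
    apply mul_left_cancel₀ hlZ
    linear_combination DD * Z3 - (k : ℤ) * Z4 + hDDdef
  have E7 : DD * ((-n) - (-n')) = 1 := by linear_combination E6 - E5
  have hDD1 : DD = 1 := by
    have hdvd : DD ∣ 1 := ⟨(-n) - (-n'), E7.symm⟩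
    have hle : DD ≤ 1 := Int.le_of_dvd one_pos hdvd
    have : DD ≠ 0 := by
      intro h
      rw [h] at E7
      simp at E7
    omega
  -- conclude l = (r-1)k + 1 and hence l % (r-1) = 1
  have hlk : l = (r - 1) * k + 1 := by
    have : (l : ℤ) = ((r : ℤ) - 1) * k + 1 := by omega
    have h2 : ((l : ℕ) : ℤ) = (((r - 1) * k + 1 : ℕ) : ℤ) := by
      push_cast [Nat.cast_sub (show 1 ≤ r by omega)]
      omega
    exact_mod_cast h2
  rw [hlk, Nat.mul_add_mod]
  exact Nat.mod_eq_of_lt (by omega)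

end caseA
section forward

variable {l r : ℕ}

lemma forward_dir (hr : 2 ≤ r) (hl : r ≤ l)
    {m : ℕ} {B : Fin m → Finset (Fin r → ℚ)}
    (hcard : ∀ i, (B i).card = r)
    (hmem : ∀ i, ∀ v ∈ B i, memN l r v ∧ (∀ k, 0 ≤ v k) ∧ ∑ k, v k = 1)
    (hspan : ∀ i, (Submodule.span ℤ ((B i : Set (Fin r → ℚ))) : Set (Fin r → ℚ))
        = {v | memN l r v})
    (hcover : {y : Fin r → ℝ | ∀ k, 0 ≤ y k} = ⋃ i, posR (B i)) :
    l % (r - 1) = 0 ∨ l % (r - 1) = 1 := by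
  by_contra hcon
  push_neg at hcon
  obtain ⟨hs0, hs1⟩ := hcon
  have hr3 : 3 ≤ r := by
    rcases Nat.lt_or_ge r 3 with h | h
    · exfalso
      have : r = 2 := by omega
      subst this
      simp [Nat.mod_one] at hs0
    · exact h
  have hl0 : 0 < l := by omega
  set K : ℕ := l / (r - 1) with hKdef
  have hdm : (r - 1) * K + l % (r - 1) = l := Nat.div_add_mod l (r - 1)
  have hs2 : 2 ≤ l % (r - 1) := by omega
  have hKl : (r - 1) * K < l := by omega
  -- real setup
  have hlR : (0:ℝ) < (l:ℝ) := by exact_mod_cast hl0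
  have hrR : (0:ℝ) < (r:ℝ) - 1 := by
    have : (1:ℝ) < (r:ℝ) := by exact_mod_cast (by omega : 1 < r)
    linarith
  have hKlR : (K:ℝ) / l < 1 / ((r:ℝ) - 1) := by
    rw [div_lt_div_iff₀ hlR hrR]
    have : (((r-1) * K : ℕ) : ℝ) < ((l : ℕ) : ℝ) := by exact_mod_cast hKl
    push_cast [Nat.cast_sub (show 1 ≤ r by omega)] at this
    linarith
  have hK0R : (0:ℝ) ≤ (K:ℝ)/l := by positivity
  set tst : ℝ := ((K:ℝ)/l + 1/((r:ℝ)-1))/2 with htstdef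
  have htpos : 0 ≤ tst := by
    have : (0:ℝ) < 1/((r:ℝ)-1) := by positivity
    rw [htstdef]; linarith
  have htlt : tst < 1/((r:ℝ)-1) := by rw [htstdef]; linarith
  have hKt : (K:ℝ)/l < tst := by rw [htstdef]; linarith
  set qst : Fin r → ℝ := fun i => if (i:ℕ) + 1 = r then 1 - ((r:ℝ)-1)*tst else tst
    with hqstdef
  have hq_orth : qst ∈ {y : Fin r → ℝ | ∀ k, 0 ≤ y k} := by
    intro co
    rw [hqstdef]
    by_cases hco : (co:ℕ) + 1 = r
    · simp only [hco, if_true]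
      have h2 : ((r:ℝ)-1) * tst < ((r:ℝ)-1) * (1/((r:ℝ)-1)) :=
        mul_lt_mul_of_pos_left htlt hrR
      rw [mul_one_div, div_self (ne_of_gt hrR)] at h2
      linarith
    · simp only [hco, if_false]
      exact htpos
  rw [hcover] at hq_orth
  obtain ⟨i0, hqi⟩ := Set.mem_iUnion.1 hq_orth
  obtain ⟨c, hc0, hcsum⟩ := hqi
  have hclass : ∀ v ∈ B i0, (∃ j ∈ idxE r, v = sgl j) ∨ ∃ k : ℕ, k ≤ l / (r-1) ∧ v = P l r k :=
    fun v hv => classify_junior hr hl (hmem i0 v hv).1 (hmem i0 v hv).2.1 (hmem i0 v hv).2.2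
  by_cases hall : ∀ j ∈ idxE r, sgl j ∈ B i0
  · exact hs1 (caseA hr3 hl (hcard i0) hclass hall (hspan i0))
  · push_neg at hall
    obtain ⟨jst, hjstE, hjstB⟩ := hall
    have hbound : ∀ v ∈ B i0, v jst ≤ (K:ℚ)/l := by
      intro v hv
      rcases hclass v hv with ⟨j, hjE, rfl⟩ | ⟨k, hkK, rfl⟩
      · rw [sgl_apply, if_neg (fun h => hjstB (by rw [h]; exact hv))]
        positivity
      · rw [P_apply (mem_idxE.1 hjstE), hKdef]
        gcongr
    have hqtot : ∑ co, qst co = 1 := by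
      rw [sum_split hr qst]
      have h1 : qst (lst r (by omega)) = 1 - ((r:ℝ)-1)*tst := by
        simp only [hqstdef]
        rw [if_pos (lst_succ (by omega))]
      have h2 : ∑ i ∈ idxE r, qst i = ((r:ℝ)-1) * tst := by
        rw [Finset.sum_congr rfl (fun i hi => show qst i = tst by
          simp only [hqstdef]
          rw [if_neg (mem_idxE.1 hi)]), Finset.sum_const, card_idxE hr, nsmul_eq_mul]
        push_cast [Nat.cast_sub (show 1 ≤ r by omega)]
        ring
      rw [h1, h2]
      ring
    have hbtot : ∀ b ∈ B i0, ((∑ co, (b co : ℝ)) = 1) := by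
      intro b hb
      have h := (hmem i0 b hb).2.2
      have h2 : ((∑ co, b co : ℚ) : ℝ) = 1 := by rw [h]; norm_num
      rw [Rat.cast_sum] at h2
      exact h2
    have hcs1 : ∑ b ∈ B i0, c b = 1 := by
      have step1 : ∑ b ∈ B i0, c b = ∑ b ∈ B i0, ∑ co, c b * (b co : ℝ) := by
        refine Finset.sum_congr rfl (fun b hb => ?_)
        rw [← Finset.mul_sum, hbtot b hb, mul_one]
      rw [step1, Finset.sum_comm]
      calc ∑ co, ∑ b ∈ B i0, c b * (b co : ℝ) = ∑ co, qst co := by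
            refine Finset.sum_congr rfl (fun co _ => ?_)
            rw [hcsum, Finset.sum_apply]
            exact (Finset.sum_congr rfl (fun b _ => by simp [castQR, smul_eq_mul])).symm
        _ = 1 := hqtot
    have hineq : tst ≤ (K:ℝ)/l := by
      have h0 : qst jst = tst := by
        simp only [hqstdef]
        rw [if_neg (mem_idxE.1 hjstE)]
      have h1 : tst = ∑ b ∈ B i0, c b * (b jst : ℝ) := by
        rw [← h0, hcsum, Finset.sum_apply]
        exact Finset.sum_congr rfl (fun b _ => by simp [castQR, smul_eq_mul])
      have h2 : ∑ b ∈ B i0, c b * (b jst : ℝ) ≤ ∑ b ∈ B i0, c b * ((K:ℝ)/l) := by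
        refine Finset.sum_le_sum (fun b hb => ?_)
        refine mul_le_mul_of_nonneg_left ?_ (hc0 b)
        have hcast : ((b jst : ℚ):ℝ) ≤ (((K:ℚ)/(l:ℚ) : ℚ):ℝ) := by
          exact_mod_cast hbound b hb
        push_cast at hcast
        exact hcast
      rw [← Finset.sum_mul, hcs1, one_mul] at h2
      linarith
    linarith

end forward
section cover

variable {l r : ℕ}

lemma sgl_nonneg (j : Fin r) : ∀ i, 0 ≤ sgl j i := by
  intro i
  rw [sgl_apply]
  split_ifs <;> norm_num

lemma P_nonneg (hr : 2 ≤ r) (hl0 : 0 < l) {k : ℕ} (hk : (r - 1) * k ≤ l) :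
    ∀ i, 0 ≤ P l r k i := by
  intro i
  have hlq : (0:ℚ) < l := by exact_mod_cast hl0
  by_cases hi : (i : ℕ) + 1 = r
  · rw [P_apply_last hi]
    apply div_nonneg _ (le_of_lt hlq)
    have : (((r-1) * k : ℕ) : ℚ) ≤ (l : ℚ) := by exact_mod_cast hk
    push_cast [Nat.cast_sub (show 1 ≤ r by omega)] at this
    linarith
  · rw [P_apply hi]
    positivity

lemma elem_D (hr : 2 ≤ r) (hl : r ≤ l) {j : Fin r} {k : ℕ}
    (hk : k + 1 ≤ l / (r - 1)) :
    ∀ v ∈ D l r j k, memN l r v ∧ (∀ i, 0 ≤ v i) ∧ ∑ i, v i = 1 := by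
  have hl0 : 0 < l := by omega
  intro v hv
  rw [D, Finset.mem_union] at hv
  rcases hv with hv | hv
  · obtain ⟨i, _, rfl⟩ := Finset.mem_image.1 hv
    exact ⟨memN_sgl i, sgl_nonneg i, sum_sgl i⟩
  · have hP : ∀ k' : ℕ, k' ≤ l / (r-1) → (memN l r (P l r k') ∧ (∀ i, 0 ≤ P l r k' i) ∧
        ∑ i, P l r k' i = 1) :=
      fun k' hk' => ⟨memN_P hr hl0 k', P_nonneg hr hl0 ((le_K_iff hr).1 hk'),
        sum_P hr hl0 k'⟩
    rcases Finset.mem_insert.1 hv with rfl | hv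
    · exact hP k (by omega)
    · rw [Finset.mem_singleton.1 hv]
      exact hP (k+1) hk

lemma elem_T (hr3 : 3 ≤ r) (hl : r ≤ l) :
    ∀ v ∈ T l r, memN l r v ∧ (∀ i, 0 ≤ v i) ∧ ∑ i, v i = 1 := by
  have hr : 2 ≤ r := by omega
  have hl0 : 0 < l := by omega
  intro v hv
  rw [T, Finset.mem_union] at hv
  rcases hv with hv | hv
  · obtain ⟨i, _, rfl⟩ := Finset.mem_image.1 hv
    exact ⟨memN_sgl i, sgl_nonneg i, sum_sgl i⟩
  · rw [Finset.mem_singleton.1 hv]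
    exact ⟨memN_P hr hl0 _, P_nonneg hr hl0 ((le_K_iff hr).1 le_rfl), sum_P hr hl0 _⟩

lemma castQR_sgl (j i : Fin r) : castQR (sgl j) i = if i = j then (1:ℝ) else 0 := by
  rw [castQR, sgl_apply]
  split_ifs <;> norm_num

lemma castQR_P {k : ℕ} {i : Fin r} (hi : (i : ℕ) + 1 ≠ r) :
    castQR (P l r k) i = (k:ℝ)/l := by
  rw [castQR, P_apply hi]
  push_cast
  ring

lemma castQR_P_last {k : ℕ} {i : Fin r} (hi : (i : ℕ) + 1 = r) :
    castQR (P l r k) i = ((l:ℝ) - ((r:ℝ)-1)*(k:ℝ))/l := by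
  rw [castQR, P_apply_last hi]
  push_cast
  ring

lemma cover_D (hr : 2 ≤ r) (hl : r ≤ l) {j : Fin r} (hj : j ∈ idxE r) {a : ℕ}
    (ha : a + 1 ≤ l / (r - 1)) {y : Fin r → ℝ}
    (hmin : ∀ i ∈ idxE r, y j ≤ y i)
    (hα : 0 ≤ ((a:ℝ)+1) * y (lst r (by omega)) - ((l:ℝ) - ((r:ℝ)-1)*((a:ℝ)+1)) * y j)
    (hβ : 0 ≤ ((l:ℝ) - ((r:ℝ)-1)*(a:ℝ)) * y j - (a:ℝ) * y (lst r (by omega))) :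
    y ∈ posR (D l r j a) := by
  have hl0 : 0 < l := by omega
  have hlR : (0:ℝ) < l := by exact_mod_cast hl0
  set t := y j with htdef
  set z := y (lst r (by omega)) with hzdef
  set α : ℝ := ((a:ℝ)+1) * z - ((l:ℝ) - ((r:ℝ)-1)*((a:ℝ)+1)) * t with hαdef
  set β : ℝ := ((l:ℝ) - ((r:ℝ)-1)*(a:ℝ)) * t - (a:ℝ) * z with hβdef
  set c : (Fin r → ℚ) → ℝ := fun v => if v = P l r a then α else if v = P l r (a+1) then β
    else ∑ i ∈ (idxE r).erase j, (if v = sgl i then (y i - t) else 0) with hcdef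
  have hca : c (P l r a) = α := by rw [hcdef]; dsimp only; rw [if_pos rfl]
  have hPne : P l r (a+1) ≠ P l r a := P_ne_P hr hl0 (by omega)
  have hcb : c (P l r (a+1)) = β := by
    rw [hcdef]
    dsimp only
    rw [if_neg hPne, if_pos rfl]
  have hcs : ∀ i ∈ (idxE r).erase j, c (sgl i) = y i - t := by
    intro i hi
    rw [hcdef]
    dsimp only
    rw [if_neg (sgl_erase_ne_P hr hl hj hi (show a ≤ l/(r-1) by omega)),
      if_neg (sgl_erase_ne_P hr hl hj hi (show a + 1 ≤ l/(r-1) by omega))]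
    simp only [sgl_inj.eq_iff]
    rw [Finset.sum_ite_eq ((idxE r).erase j) i (fun i' => y i' - t), if_pos hi]
  refine ⟨c, ?_, ?_⟩
  · intro b
    rw [hcdef]
    dsimp only
    split_ifs with h1 h2
    · exact hα
    · exact hβ
    · refine Finset.sum_nonneg (fun i hi => ?_)
      split_ifs with h3
      · have := hmin i (Finset.mem_of_mem_erase hi)
        linarith
      · exact le_refl 0
  · rw [sum_D hr hl hj ha, hca, hcb]
    rw [Finset.sum_congr rfl (fun i hi => by rw [hcs i hi])]
    funext co
    rw [Pi.add_apply, Pi.add_apply, Finset.sum_apply, Pi.smul_apply, Pi.smul_apply,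
      smul_eq_mul, smul_eq_mul]
    have hterm : ∀ i ∈ (idxE r).erase j, ((y i - t) • castQR (sgl i)) co
        = if co = i then y i - t else 0 := by
      intro i hi
      rw [Pi.smul_apply, smul_eq_mul, castQR_sgl]
      split_ifs <;> ring
    rw [Finset.sum_congr rfl hterm, Finset.sum_ite_eq ((idxE r).erase j) co (fun i => y i - t)]
    by_cases hco : (co : ℕ) + 1 = r
    · have hcol : co = lst r (by omega) := (eq_lst_iff (by omega)).2 hco
      have hnotin : co ∉ (idxE r).erase j := by
        intro h
        exact (mem_idxE.1 (Finset.mem_of_mem_erase h)) hco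
      rw [if_neg hnotin, castQR_P_last hco, castQR_P_last hco, hcol, ← hzdef,
        hαdef, hβdef]
      push_cast
      field_simp
      ring
    · rw [castQR_P hco, castQR_P hco]
      by_cases hcoj : co = j
      · have hnotin : co ∉ (idxE r).erase j := by
          rw [hcoj]; exact Finset.notMem_erase j _
        rw [if_neg hnotin, hcoj, ← htdef, hαdef, hβdef]
        push_cast
        field_simp
        ring
      · have hin : co ∈ (idxE r).erase j := Finset.mem_erase.2 ⟨hcoj, mem_idxE.2 hco⟩
        rw [if_pos hin, hαdef, hβdef]
        push_cast
        field_simp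
        ring

lemma cover_T (hr3 : 3 ≤ r) (hl : r ≤ l) (h1 : l % (r - 1) = 1) {y : Fin r → ℝ}
    (hy : ∀ co, 0 ≤ y co)
    (hbig : ∀ i ∈ idxE r, ((l / (r-1) : ℕ) : ℝ) * y (lst r (by omega)) ≤ y i) :
    y ∈ posR (T l r) := by
  have hr : 2 ≤ r := by omega
  have hl0 : 0 < l := by omega
  have hlR : (0:ℝ) < l := by exact_mod_cast hl0
  have hKr : (r - 1) * (l / (r - 1)) + 1 = l := by
    have := Nat.div_add_mod l (r - 1); omega
  set K : ℕ := l / (r - 1) with hKdef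
  have hcast : (l:ℝ) - ((r:ℝ)-1)*(K:ℝ) = 1 := by
    have : (((r-1) * K + 1 : ℕ) : ℝ) = (l : ℝ) := by exact_mod_cast hKr
    push_cast [Nat.cast_sub (show 1 ≤ r by omega)] at this
    linarith
  set z := y (lst r (by omega)) with hzdef
  set c : (Fin r → ℚ) → ℝ := fun v => if v = P l r K then (l:ℝ) * z
    else ∑ i ∈ idxE r, (if v = sgl i then (y i - (K:ℝ) * z) else 0) with hcdef
  have hcP : c (P l r K) = (l:ℝ) * z := by rw [hcdef]; dsimp only; rw [if_pos rfl]
  have hcs : ∀ i ∈ idxE r, c (sgl i) = y i - (K:ℝ) * z := by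
    intro i hi
    rw [hcdef]
    dsimp only
    rw [if_neg (sgl_ne_P (show 0 < l by omega) (mem_idxE.1 hi) (Kdiv_lt hr3 (by omega)))]
    simp only [sgl_inj.eq_iff]
    rw [Finset.sum_ite_eq (idxE r) i (fun i' => y i' - (K:ℝ)*z), if_pos hi]
  refine ⟨c, ?_, ?_⟩
  · intro b
    rw [hcdef]
    dsimp only
    split_ifs with hb
    · have := hy (lst r (by omega))
      positivity
    · refine Finset.sum_nonneg (fun i hi => ?_)
      split_ifs with h3
      · have := hbig i hi
        linarith
      · exact le_refl 0
  · rw [sum_T hr3 hl, hcP]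
    rw [Finset.sum_congr rfl (fun i hi => by rw [hcs i hi])]
    funext co
    rw [Pi.add_apply, Finset.sum_apply, Pi.smul_apply, smul_eq_mul]
    have hterm : ∀ i ∈ idxE r, ((y i - (K:ℝ)*z) • castQR (sgl i)) co
        = if co = i then y i - (K:ℝ)*z else 0 := by
      intro i hi
      rw [Pi.smul_apply, smul_eq_mul, castQR_sgl]
      split_ifs <;> ring
    rw [Finset.sum_congr rfl hterm, Finset.sum_ite_eq (idxE r) co (fun i => y i - (K:ℝ)*z)]
    by_cases hco : (co : ℕ) + 1 = r
    · have hcol : co = lst r (by omega) := (eq_lst_iff (by omega)).2 hco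
      have hnotin : co ∉ idxE r := fun h => (mem_idxE.1 h) hco
      rw [if_neg hnotin, castQR_P_last hco, hcol, ← hzdef, hcast]
      field_simp
      ring
    · have hin : co ∈ idxE r := mem_idxE.2 hco
      rw [if_pos hin, castQR_P hco]
      field_simp
      rw [← hKdef]
      ring

end cover
section fam

variable {l r : ℕ}

def fam (l r : ℕ) (hr : 2 ≤ r) (hl : r ≤ l) :
    Fin ((r - 1) * (l / (r - 1)) + 1) → Finset (Fin r → ℚ) := fun i =>
  if h : (i : ℕ) < (r - 1) * (l / (r - 1)) then
    D l r ⟨(i : ℕ) / (l / (r - 1)), by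
      have hK : 0 < l / (r - 1) := Nat.div_pos (by omega) (by omega)
      rw [Nat.div_lt_iff_lt_mul hK]
      calc (i : ℕ) < (r - 1) * (l / (r - 1)) := h
        _ ≤ r * (l / (r - 1)) := Nat.mul_le_mul_right _ (by omega)⟩
      ((i : ℕ) % (l / (r - 1)))
  else if l % (r - 1) = 1 then T l r else D l r ⟨0, by omega⟩ 0

lemma fam_spec (hr : 2 ≤ r) (hl : r ≤ l) (hs : l % (r - 1) = 0 ∨ l % (r - 1) = 1)
    (i : Fin ((r - 1) * (l / (r - 1)) + 1)) :
    (∃ (j : Fin r) (k : ℕ), j ∈ idxE r ∧ k + 1 ≤ l / (r - 1) ∧ fam l r hr hl i = D l r j k)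
    ∨ (3 ≤ r ∧ l % (r - 1) = 1 ∧ fam l r hr hl i = T l r) := by
  have hK : 0 < l / (r - 1) := Nat.div_pos (by omega) (by omega)
  unfold fam
  by_cases h : (i : ℕ) < (r - 1) * (l / (r - 1))
  · rw [dif_pos h]
    left
    refine ⟨_, _, ?_, ?_, rfl⟩
    · rw [mem_idxE]
      simp only [Fin.val_mk]
      have hlt : (i : ℕ) / (l / (r - 1)) < r - 1 := by
        rw [Nat.div_lt_iff_lt_mul hK]
        calc (i : ℕ) < (r - 1) * (l / (r - 1)) := h
          _ = (r - 1) * (l / (r - 1)) := rfl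
      omega
    · have := Nat.mod_lt (i : ℕ) hK
      omega
  · rw [dif_neg h]
    by_cases h1 : l % (r - 1) = 1
    · rw [if_pos h1]
      right
      refine ⟨?_, h1, rfl⟩
      rcases Nat.lt_or_ge r 3 with h3 | h3
      · exfalso
        have : r = 2 := by omega
        subst this
        simp [Nat.mod_one] at h1
      · exact h3
    · rw [if_neg h1]
      left
      exact ⟨⟨0, by omega⟩, 0, mem_idxE.2 (by simp only [Fin.val_mk]; omega), by omega, rfl⟩

lemma fam_surj_D (hr : 2 ≤ r) (hl : r ≤ l) {j : Fin r} {k : ℕ} (hj : j ∈ idxE r)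
    (hk : k + 1 ≤ l / (r - 1)) :
    ∃ i, fam l r hr hl i = D l r j k := by
  set K : ℕ := l / (r - 1) with hKdef
  have hK : 0 < K := Nat.div_pos (by omega) (by omega)
  have hj' : (j : ℕ) ≤ r - 2 := by
    have h1 := mem_idxE.1 hj
    have h2 := j.isLt
    omega
  have hb1 : (j : ℕ) * K ≤ (r - 2) * K := Nat.mul_le_mul_right _ hj'
  have hb2 : (r - 2) * K + K = (r - 1) * K := by
    have : (r - 2) + 1 = r - 1 := by omega
    rw [← this, Nat.succ_mul]
  have hlt : (j : ℕ) * K + k < (r - 1) * K := by omega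
  refine ⟨⟨(j : ℕ) * K + k, by rw [← hKdef]; omega⟩, ?_⟩
  unfold fam
  rw [dif_pos (by simp only [Fin.val_mk]; rw [← hKdef]; exact hlt)]
  have hdiv : ((j : ℕ) * K + k) / K = (j : ℕ) := by
    rw [mul_comm, Nat.mul_add_div hK, Nat.div_eq_of_lt (by omega), add_zero]
  have hmod : ((j : ℕ) * K + k) % K = k := by
    rw [mul_comm, Nat.mul_add_mod, Nat.mod_eq_of_lt (by omega)]
  exact congrArg₂ (D l r)
    (Fin.ext (by simp only [Fin.val_mk]; rw [← hKdef, hdiv]))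
    (by simp only [Fin.val_mk]; rw [← hKdef, hmod])

lemma fam_surj_T (hr : 2 ≤ r) (hl : r ≤ l) (h1 : l % (r - 1) = 1) :
    ∃ i, fam l r hr hl i = T l r := by
  refine ⟨⟨(r - 1) * (l / (r - 1)), by omega⟩, ?_⟩
  unfold fam
  rw [dif_neg (by simp only [Fin.val_mk]; omega), if_pos h1]

lemma fam_elem (hr : 2 ≤ r) (hl : r ≤ l) (hs : l % (r - 1) = 0 ∨ l % (r - 1) = 1) :
    ∀ i, ∀ v ∈ fam l r hr hl i, memN l r v ∧ (∀ co, 0 ≤ v co) ∧ ∑ co, v co = 1 := by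
  intro i v hv
  rcases fam_spec hr hl hs i with ⟨j, k, hj, hk, he⟩ | ⟨hr3, h1, he⟩
  · rw [he] at hv
    exact elem_D hr hl hk v hv
  · rw [he] at hv
    exact elem_T hr3 hl v hv

end fam
section main

variable {l r : ℕ}

lemma cover_eq (hr : 2 ≤ r) (hl : r ≤ l) (hs : l % (r - 1) = 0 ∨ l % (r - 1) = 1) :
    {y : Fin r → ℝ | ∀ k, 0 ≤ y k} = ⋃ i, posR (fam l r hr hl i) := by
  have hl0 : 0 < l := by omega
  have hlR : (0:ℝ) < l := by exact_mod_cast hl0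
  ext y
  simp only [Set.mem_setOf_eq, Set.mem_iUnion]
  constructor
  · intro hy
    set K : ℕ := l / (r - 1) with hKdef
    have hK1 : 0 < K := Nat.div_pos (by omega) (by omega)
    obtain ⟨j, hjE, hjmin⟩ := (idxE r).exists_min_image y
      ⟨⟨0, by omega⟩, mem_idxE.2 (by simp only [Fin.val_mk]; omega)⟩
    set t := y j with htd
    set z := y (lst r (by omega)) with hzd
    set f : ℕ → ℝ := fun a => ((l:ℝ) - ((r:ℝ)-1)*(a:ℝ)) * t - (a:ℝ) * z with hf
    have ht0 : 0 ≤ t := hy j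
    have hz0 : 0 ≤ z := hy _
    have hr1 : (1:ℝ) ≤ (r:ℝ) - 1 := by
      have : (2:ℝ) ≤ r := by exact_mod_cast hr
      linarith
    have hfdec : ∀ a : ℕ, f (a+1) ≤ f a := by
      intro a
      simp only [hf]
      push_cast
      nlinarith
    have hf0 : 0 ≤ f 0 := by
      simp only [hf]
      push_cast
      nlinarith
    by_cases hcase : f K ≤ 0
    · have hcross : ∀ n : ℕ, n ≤ K → f n ≤ 0 →
          ∃ a, a + 1 ≤ K ∧ 0 ≤ f a ∧ f (a+1) ≤ 0 := by
        intro n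
        induction n with
        | zero => exact fun _ h0 => ⟨0, hK1, hf0, le_trans (hfdec 0) h0⟩
        | succ n ih =>
          intro hn hle
          by_cases h : 0 ≤ f n
          · exact ⟨n, hn, h, hle⟩
          · exact ih (by omega) (le_of_lt (not_le.1 h))
      obtain ⟨a, ha, hfa, hfa1⟩ := hcross K le_rfl hcase
      obtain ⟨i, hi⟩ := fam_surj_D hr hl hjE ha
      refine ⟨i, ?_⟩
      rw [hi]
      refine cover_D hr hl hjE ha hjmin ?_ ?_
      · show 0 ≤ ((a:ℝ)+1) * z - ((l:ℝ) - ((r:ℝ)-1)*((a:ℝ)+1)) * t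
        have : f (a+1) = ((l:ℝ) - ((r:ℝ)-1)*((a:ℝ)+1)) * t - ((a:ℝ)+1) * z := by
          simp only [hf]
          push_cast
          ring
        linarith [hfa1, this.symm.trans_le hfa1]
      · show 0 ≤ ((l:ℝ) - ((r:ℝ)-1)*(a:ℝ)) * t - (a:ℝ) * z
        have : f a = ((l:ℝ) - ((r:ℝ)-1)*(a:ℝ)) * t - (a:ℝ) * z := by simp only [hf]
        linarith [this ▸ hfa]
    · push_neg at hcase
      have h1 : l % (r - 1) = 1 := by
        rcases hs with h0 | h1
        · exfalso
          have hKr : (r-1) * K = l := by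
            have h := Nat.div_add_mod l (r-1)
            rw [← hKdef] at h
            omega
          have hLK : (l:ℝ) - ((r:ℝ)-1)*(K:ℝ) = 0 := by
            have : (((r-1) * K : ℕ):ℝ) = (l:ℝ) := by exact_mod_cast hKr
            push_cast [Nat.cast_sub (show 1 ≤ r by omega)] at this
            linarith
          have hfK : f K = ((l:ℝ) - ((r:ℝ)-1)*(K:ℝ)) * t - (K:ℝ) * z := by simp only [hf]
          rw [hLK] at hfK
          have hKz : (0:ℝ) ≤ (K:ℝ) * z := mul_nonneg (Nat.cast_nonneg K) hz0
          nlinarith [hcase, hfK]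
        · exact h1
      have hr3 : 3 ≤ r := by
        rcases Nat.lt_or_ge r 3 with h | h
        · exfalso
          have : r = 2 := by omega
          subst this
          simp [Nat.mod_one] at h1
        · exact h
      obtain ⟨i, hi⟩ := fam_surj_T hr hl h1
      refine ⟨i, ?_⟩
      rw [hi]
      refine cover_T hr3 hl h1 hy ?_
      intro i' hi'
      show ((l / (r-1) : ℕ) : ℝ) * z ≤ y i'
      have hKr : (r-1)*K + 1 = l := by
        have h := Nat.div_add_mod l (r-1)
        rw [← hKdef] at h
        omega
      have hLK1 : (l:ℝ) - ((r:ℝ)-1)*(K:ℝ) = 1 := by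
        have : (((r-1)*K + 1 : ℕ):ℝ) = (l:ℝ) := by exact_mod_cast hKr
        push_cast [Nat.cast_sub (show 1 ≤ r by omega)] at this
        linarith
      have hfK : f K = ((l:ℝ) - ((r:ℝ)-1)*(K:ℝ)) * t - (K:ℝ) * z := by simp only [hf]
      rw [hLK1] at hfK
      have h2 := hjmin i' hi'
      have h3 : 0 < 1 * t - (K:ℝ)*z := hfK ▸ hcase
      rw [← hKdef]
      linarith
  · rintro ⟨i, c, hc0, rfl⟩ co
    rw [Finset.sum_apply]
    refine Finset.sum_nonneg (fun b hb => ?_)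
    rw [Pi.smul_apply, smul_eq_mul]
    have hbn := (fam_elem hr hl hs i b hb).2.1 co
    have h2 : (0:ℝ) ≤ ((b co : ℚ) : ℝ) := by exact_mod_cast hbn
    exact mul_nonneg (hc0 b) h2

end main

end CQS

/-- **Existence criterion for crepant full resolutions of the series
`(1/l)(1,…,1,l−(r−1))`.**  The positive orthant can be covered by cones over
`r`-element subsets of `s_G ∩ N` which are `ℤ`-bases of the lattice `N`
(i.e. the junior simplex admits a basic triangulation) if and only if
`l ≡ 0` or `l ≡ 1 (mod r−1)`. -/
theorem basic_cover_iff_residue_condition (l r : ℕ) (hr : 2 ≤ r) (hl : r ≤ l) :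
    (∃ (m : ℕ) (B : Fin m → Finset (Fin r → ℚ)),
        (∀ i, (B i).card = r) ∧
        (∀ i, ∀ v ∈ B i, memN l r v ∧ (∀ k, 0 ≤ v k) ∧ ∑ k, v k = 1) ∧
        (∀ i, LinearIndependent ℤ
            (fun v : ((B i : Set (Fin r → ℚ))) => (v : Fin r → ℚ))) ∧
        (∀ i, (Submodule.span ℤ ((B i : Set (Fin r → ℚ))) : Set (Fin r → ℚ))
            = {v | memN l r v}) ∧
        {y : Fin r → ℝ | ∀ k, 0 ≤ y k} = ⋃ i, posR (B i))
      ↔ (l % (r - 1) = 0 ∨ l % (r - 1) = 1) := by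
  constructor
  · rintro ⟨m, B, hcard, hmem, hLI, hspan, hcover⟩
    exact CQS.forward_dir hr hl hcard hmem hspan hcover
  · intro hs
    refine ⟨_, CQS.fam l r hr hl, ?_, CQS.fam_elem hr hl hs, ?_, ?_,
      CQS.cover_eq hr hl hs⟩
    · intro i
      rcases CQS.fam_spec hr hl hs i with ⟨j, k, hj, hk, he⟩ | ⟨hr3, h1, he⟩
      · rw [he]
        exact CQS.card_D hr hl hj hk
      · rw [he]
        exact CQS.card_T hr3 hl
    · intro i
      rcases CQS.fam_spec hr hl hs i with ⟨j, k, hj, hk, he⟩ | ⟨hr3, h1, he⟩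
      · rw [he]
        exact CQS.linindep_of_span (CQS.card_D hr hl hj hk) (CQS.span_D_eq hr hl hj hk)
      · rw [he]
        exact CQS.linindep_of_span (CQS.card_T hr3 hl) (CQS.span_T_eq hr3 hl h1)
    · intro i
      rcases CQS.fam_spec hr hl hs i with ⟨j, k, hj, hk, he⟩ | ⟨hr3, h1, he⟩
      · rw [he]
        exact CQS.span_D_eq hr hl hj hk
      · rw [he]
        exact CQS.span_T_eq hr3 hl h1
end
end

section
/- For the singularity of type (1/l)(1,…,1,l−(r−1)), the Hilbert basis of the positive orthant consists exactly of the lattice points of the junior simplex if and only if l ≡ 0 (mod r−1) or l ≡ 1 (mod r−1): Hlb_N(σ0) = s_G ∩ N ⇔ [l]_{r−1} ∈ {0,1}. -/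
noncomputable section

namespace HilbAux

/-- residue of the last coordinate -/
def g (l r k : ℕ) : ℕ := (k * (l - (r - 1))) % l

/-- the minimal point of the orthant with first coordinates `k/l` -/
def fk (l r k : ℕ) : Fin r → ℚ :=
  fun i => (if (i : ℕ) + 1 = r then ((g l r k : ℚ)) else (k : ℚ)) / l

lemma memN_def {l r : ℕ} {v : Fin r → ℚ} : memN l r v ↔
    ∃ (a : Fin r → ℤ) (c : ℤ), ∀ i, v i = (a i : ℚ) + (c : ℚ) * wgt l r i := by
  constructor
  · rintro ⟨a, c, rfl⟩
    exact ⟨a, c, fun i => by simp [Pi.add_apply, Pi.smul_apply, zsmul_eq_mul]⟩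
  · rintro ⟨a, c, h⟩
    exact ⟨a, c, funext fun i => by simp [Pi.add_apply, Pi.smul_apply, zsmul_eq_mul, h i]⟩

lemma memN_sub {l r : ℕ} {x y : Fin r → ℚ} (hx : memN l r x) (hy : memN l r y) :
    memN l r (x - y) := by
  rw [memN_def] at hx hy ⊢
  obtain ⟨a, c, ha⟩ := hx
  obtain ⟨b, d, hb⟩ := hy
  exact ⟨a - b, c - d, fun i => by simp [Pi.sub_apply, ha i, hb i]; ring⟩

lemma sum_ite_last {r : ℕ} (A B : ℚ) (hr : 1 ≤ r) :
    (∑ i : Fin r, if (i : ℕ) + 1 = r then A else B) = A + ((r : ℚ) - 1) * B := by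
  obtain ⟨n, rfl⟩ : ∃ n, r = n + 1 := ⟨r - 1, by omega⟩
  rw [Fin.sum_univ_castSucc]
  have h1 : ∀ i : Fin n, (if ((i.castSucc : ℕ) + 1 = n + 1) then A else B) = B := by
    intro i
    rw [if_neg]
    have := i.isLt
    simp only [Fin.coe_castSucc]
    omega
  rw [Finset.sum_congr rfl (fun i _ => h1 i), if_pos (by simp), Finset.sum_const]
  simp only [Finset.card_univ, Fintype.card_fin, nsmul_eq_mul]
  push_cast
  ring

lemma sum_wgt {l r : ℕ} (hr : 2 ≤ r) (hl : r ≤ l) : ∑ i, wgt l r i = 1 := by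
  unfold wgt
  have h : ∀ i : Fin r, (if (i : ℕ) + 1 = r then (l : ℚ) - ((r : ℚ) - 1) else 1) / l
      = (if (i : ℕ) + 1 = r then ((l : ℚ) - ((r : ℚ) - 1)) / l else 1 / l) := by
    intro i; split <;> rfl
  rw [Finset.sum_congr rfl (fun i _ => h i), sum_ite_last _ _ (by omega)]
  have hl0 : (l : ℚ) ≠ 0 := Nat.cast_ne_zero.mpr (by omega)
  field_simp
  ring

lemma memN_sum_int {l r : ℕ} (hr : 2 ≤ r) (hl : r ≤ l) {x : Fin r → ℚ} (hx : memN l r x) :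
    ∃ z : ℤ, (∑ i, x i) = (z : ℚ) := by
  rw [memN_def] at hx
  obtain ⟨a, c, h⟩ := hx
  refine ⟨(∑ i, a i) + c, ?_⟩
  rw [Finset.sum_congr rfl (fun i _ => h i), Finset.sum_add_distrib, ← Finset.mul_sum,
    sum_wgt hr hl]
  push_cast
  ring

lemma sum_ge_one {l r : ℕ} (hr : 2 ≤ r) (hl : r ≤ l) {x : Fin r → ℚ} (hx : memN l r x)
    (h0 : ∀ i, 0 ≤ x i) (hne : x ≠ 0) : 1 ≤ ∑ i, x i := by
  obtain ⟨z, hz⟩ := memN_sum_int hr hl hx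
  obtain ⟨i, hi⟩ : ∃ i, x i ≠ 0 := Function.ne_iff.mp hne
  have hpos : 0 < ∑ i, x i :=
    Finset.sum_pos' (fun j _ => h0 j) ⟨i, Finset.mem_univ i, lt_of_le_of_ne (h0 i) (Ne.symm hi)⟩
  rw [hz] at hpos ⊢
  exact_mod_cast (by exact_mod_cast hpos : (0 : ℤ) < z)

lemma sum_fk {l r : ℕ} (hr : 2 ≤ r) (k : ℕ) :
    ∑ i, fk l r k i = ((g l r k : ℚ) + ((r : ℚ) - 1) * k) / l := by
  unfold fk
  have h : ∀ i : Fin r, (if (i : ℕ) + 1 = r then ((g l r k : ℚ)) else (k : ℚ)) / l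
      = (if (i : ℕ) + 1 = r then ((g l r k : ℚ)) / l else (k : ℚ) / l) := by
    intro i; split <;> rfl
  rw [Finset.sum_congr rfl (fun i _ => h i), sum_ite_last _ _ (by omega)]
  ring

lemma fk_nonneg {l r : ℕ} (k : ℕ) : ∀ i, 0 ≤ fk l r k i := by
  intro i
  unfold fk
  apply div_nonneg _ (by positivity)
  split <;> positivity


lemma cast_n {l r : ℕ} (hr : 2 ≤ r) (hl : r ≤ l) :
    (l : ℚ) - ((r : ℚ) - 1) = ((l - (r - 1) : ℕ) : ℚ) := by
  have h1 : r - 1 ≤ l := by omega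
  push_cast [Nat.cast_sub h1, Nat.cast_sub (by omega : 1 ≤ r)]
  ring

lemma memN_fk {l r : ℕ} (hr : 2 ≤ r) (hl : r ≤ l) (k : ℕ) : memN l r (fk l r k) := by
  rw [memN_def]
  set n : ℕ := l - (r - 1) with hn
  refine ⟨fun i => if (i : ℕ) + 1 = r then -(((k * n) / l : ℕ) : ℤ) else 0, k, fun i => ?_⟩
  by_cases hi : (i : ℕ) + 1 = r
  · simp only [fk, g, wgt, hi, if_pos, ← hn]
    rw [cast_n hr hl, ← hn]
    set D : ℕ := (k * n) / l with hD
    have hid : l * D + (k * n) % l = k * n := Nat.div_add_mod _ _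
    have hidQ : (l : ℚ) * D + (((k * n) % l : ℕ) : ℚ) = (k : ℚ) * n := by exact_mod_cast hid
    have hl0 : (l : ℚ) ≠ 0 := Nat.cast_ne_zero.mpr (by omega)
    push_cast
    field_simp
    linarith [hidQ]
  · simp only [fk, wgt, hi, if_neg, if_false]
    push_cast
    ring


lemma struct {l r : ℕ} (hr : 2 ≤ r) (hl : r ≤ l) {x : Fin r → ℚ} (hx : memN l r x)
    (h0 : ∀ i, 0 ≤ x i) (h1 : ∀ i, x i < 1) (hne : x ≠ 0) :
    ∃ k : ℕ, 0 < k ∧ k < l ∧ x = fk l r k := by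
  have hl0 : (0 : ℤ) < l := by exact_mod_cast (by omega : 0 < l)
  have hlQ : (0 : ℚ) < l := by exact_mod_cast (by omega : 0 < l)
  rw [memN_def] at hx
  obtain ⟨a, c, hc⟩ := hx
  set n : ℕ := l - (r - 1) with hn
  -- integer-part extraction
  have key : ∀ (z R : ℤ), 0 ≤ R → R < l → 0 ≤ (z : ℚ) + R / l → (z : ℚ) + R / l < 1 →
      (z : ℚ) + R / l = (R : ℚ) / l := by
    intro z R hR0 hRl hge hlt
    have hd0 : (0 : ℚ) ≤ (R : ℚ) / l := div_nonneg (by exact_mod_cast hR0) hlQ.le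
    have hd1 : (R : ℚ) / l < 1 := by
      rw [div_lt_one hlQ]; exact_mod_cast hRl
    have hz1 : (-1 : ℚ) < (z : ℚ) := by linarith
    have hz2 : (z : ℚ) < 1 := by linarith
    have hz : z = 0 := by
      have a1 : (-1 : ℤ) < z := by exact_mod_cast hz1
      have a2 : z < 1 := by exact_mod_cast hz2
      omega
    rw [hz]; push_cast; ring
  set K : ℤ := c % l with hK
  have hK0 : 0 ≤ K := Int.emod_nonneg c (by omega)
  have hKl : K < l := Int.emod_lt_of_pos c hl0
  -- non-last coordinates
  have hnl : ∀ i : Fin r, (i : ℕ) + 1 ≠ r → x i = (K : ℚ) / l := by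
    intro i hi
    have hx1 : x i = ((a i + c / l : ℤ) : ℚ) + (K : ℚ) / l := by
      rw [hc i]
      unfold wgt
      rw [if_neg hi]
      have hcast : (c : ℚ) = (l : ℚ) * ((c / l : ℤ) : ℚ) + (K : ℚ) := by
        exact_mod_cast (Int.mul_ediv_add_emod c l).symm
      push_cast
      rw [hcast]
      field_simp
      ring
    rw [hx1]
    exact key _ _ hK0 hKl (hx1 ▸ h0 i) (hx1 ▸ h1 i)
  -- last coordinate
  set R : ℤ := (c * n) % l with hR
  have hR0 : 0 ≤ R := Int.emod_nonneg _ (by omega)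
  have hRl : R < l := Int.emod_lt_of_pos _ hl0
  have hlast : ∀ i : Fin r, (i : ℕ) + 1 = r → x i = (R : ℚ) / l := by
    intro i hi
    have hx1 : x i = ((a i + (c * n) / l : ℤ) : ℚ) + (R : ℚ) / l := by
      rw [hc i]
      unfold wgt
      rw [if_pos hi, cast_n hr hl, ← hn]
      have hcast : ((c * (n : ℤ)) : ℚ) = (l : ℚ) * (((c * n) / l : ℤ) : ℚ) + (R : ℚ) := by
        exact_mod_cast (Int.mul_ediv_add_emod (c * n) l).symm
      push_cast
      push_cast at hcast
      field_simp

      linarith [hcast]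
    rw [hx1]
    exact key _ _ hR0 hRl (hx1 ▸ h0 i) (hx1 ▸ h1 i)
  -- identify R with g of K.toNat
  set k : ℕ := K.toNat with hkdef
  have hkK : (k : ℤ) = K := Int.toNat_of_nonneg hK0
  have hRg : R = ((g l r k : ℕ) : ℤ) := by
    have e1 : R = (K * n) % l := by
      rw [hR, Int.mul_emod, Int.mul_emod K n l]
      conv_rhs => rw [hK]
      rw [Int.emod_emod_of_dvd c dvd_rfl]
    rw [e1, ← hkK]
    unfold g
    rw [← hn]
    push_cast
    rfl
  refine ⟨k, ?_, by omega, ?_⟩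
  · -- k positive
    by_contra h
    have hk0 : K = 0 := by omega
    apply hne
    funext i
    by_cases hi : (i : ℕ) + 1 = r
    · rw [hlast i hi]
      have hRz : R = 0 := by
        rw [hR, Int.mul_emod, ← hK, hk0]
        simp
      simp [hRz]
    · rw [hnl i hi, hk0]; simp
  · funext i
    by_cases hi : (i : ℕ) + 1 = r
    · rw [hlast i hi, hRg]
      simp [fk, hi]
    · rw [hnl i hi, ← hkK]
      simp [fk, hi]


lemma g_q {l r : ℕ} (hr : 2 ≤ r) (hl : r ≤ l) : g l r (l / (r - 1)) = l % (r - 1) := by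
  set m := r - 1 with hm
  set q := l / m with hq
  set t := l % m with htd
  have hm1 : 1 ≤ m := by omega
  have hdm : m * q + t = l := Nat.div_add_mod l m
  have htm : t < m := Nat.mod_lt _ (by omega)
  have hq1 : 1 ≤ q := by
    rcases Nat.eq_zero_or_pos q with h | h
    · rw [h] at hdm; omega
    · exact h
  have key : q * (l - m) = t + (q - 1) * l := by
    have hml : m ≤ l := by omega
    zify [hml, hq1]
    have hZ : (m : ℤ) * q + t = l := by exact_mod_cast hdm
    linear_combination (-1 : ℤ) * hZ
  unfold g
  rw [← hm, key, Nat.add_mul_mod_self_right]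
  exact Nat.mod_eq_of_lt (by omega)

lemma gcd_l_sub {l r : ℕ} (hr : 2 ≤ r) (hl : r ≤ l) :
    Nat.gcd l (l - (r - 1)) = Nat.gcd l (r - 1) := by
  set m := r - 1 with hm
  have hml : m ≤ l := by omega
  apply Nat.dvd_antisymm
  · apply Nat.dvd_gcd (Nat.gcd_dvd_left _ _)
    have h := Nat.dvd_sub (Nat.gcd_dvd_left l (l - m)) (Nat.gcd_dvd_right l (l - m))
    rwa [show l - (l - m) = m by omega] at h
  · apply Nat.dvd_gcd (Nat.gcd_dvd_left _ _)
    exact Nat.dvd_sub (Nat.gcd_dvd_left l m) (Nat.gcd_dvd_right l m)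

lemma g_pos_of_one {l r k : ℕ} (hr : 2 ≤ r) (hl : r ≤ l) (ht : l % (r - 1) = 1)
    (hk0 : 0 < k) (hkl : k < l) : 0 < g l r k := by
  set m := r - 1 with hm
  rcases Nat.eq_zero_or_pos (g l r k) with h | h
  · exfalso
    have hdvd : l ∣ k * (l - m) := Nat.dvd_of_mod_eq_zero h
    have hg1 : Nat.gcd l m = 1 := by
      have h2 : Nat.gcd m l = Nat.gcd (l % m) m := Nat.gcd_rec m l
      rw [ht] at h2
      rw [Nat.gcd_comm, h2, Nat.gcd_one_left]
    have hcop : Nat.Coprime l (l - m) := by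
      unfold Nat.Coprime
      rw [gcd_l_sub hr hl, ← hm, hg1]
    have : l ∣ k := (Nat.Coprime.dvd_of_dvd_mul_right hcop) hdvd
    have := Nat.le_of_dvd hk0 this
    omega
  · exact h

lemma exists_lt_t {l r : ℕ} (hr : 2 ≤ r) (hl : r ≤ l) (ht : 2 ≤ l % (r - 1)) :
    ∃ k, 0 < k ∧ k < l ∧ g l r k < l % (r - 1) := by
  set m := r - 1 with hm
  set t := l % m with htd
  set n := l - m with hn
  have hm1 : 1 ≤ m := by omega
  have htm : t < m := Nat.mod_lt _ (by omega)
  have hml : m ≤ l := by omega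
  set d := Nat.gcd l m with hd
  have hdt : d ∣ t := (Nat.dvd_mod_iff (Nat.gcd_dvd_right l m)).mpr (Nat.gcd_dvd_left l m)
  have hdle : d ≤ t := Nat.le_of_dvd (by omega) hdt
  by_cases hcase : d = t
  · -- k = l / t via explicit divisors
    have htl : t ∣ l := hcase ▸ Nat.gcd_dvd_left l m
    have htm' : t ∣ m := hcase ▸ Nat.gcd_dvd_right l m
    obtain ⟨A, hA⟩ := htl
    obtain ⟨B, hB⟩ := htm'
    have hA0 : 0 < A := by
      rcases Nat.eq_zero_or_pos A with h | h
      · rw [h, Nat.mul_zero] at hA; omega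
      · exact h
    have hBA : B ≤ A := Nat.le_of_mul_le_mul_left (by omega : t * B ≤ t * A) (by omega)
    refine ⟨A, hA0, ?_, ?_⟩
    · -- A < l
      have : 2 * A ≤ t * A := Nat.mul_le_mul_right A ht
      omega
    · -- g l r A = 0 < t
      have hAn : A * n = l * (A - B) := by
        have hAZ : (l : ℤ) = t * A := by exact_mod_cast hA
        have hBZ : (m : ℤ) = t * B := by exact_mod_cast hB
        zify [hml, hBA, hn]
        linear_combination (B : ℤ) * hAZ - (A : ℤ) * hBZ
      have : g l r A = 0 := by
        unfold g
        rw [← hm, ← hn, hAn, Nat.mul_mod_right]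
      omega
  · -- d < t : Bezout
    have hdlt : d < t := lt_of_le_of_ne hdle hcase
    have hd0 : 0 < d := Nat.gcd_pos_of_pos_left m (by omega)
    have hgn : Nat.gcd l n = d := gcd_l_sub hr hl
    have hbez : (d : ℤ) = l * Nat.gcdA l n + n * Nat.gcdB l n := by
      rw [← hgn]; exact Nat.gcd_eq_gcd_ab l n
    have hl0 : (0 : ℤ) < (l : ℤ) := by exact_mod_cast (by omega : 0 < l)
    set K : ℤ := Nat.gcdB l n % l with hK
    have hK0 : 0 ≤ K := Int.emod_nonneg _ (by omega)
    have hKl : K < l := Int.emod_lt_of_pos _ hl0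
    set k : ℕ := K.toNat with hk
    have hkK : (k : ℤ) = K := Int.toNat_of_nonneg hK0
    have hmod : ((k * n : ℕ) : ℤ) % l = d := by
      push_cast
      rw [hkK, hK, Int.mul_emod, Int.emod_emod_of_dvd _ dvd_rfl, ← Int.mul_emod]
      have : (Nat.gcdB l n) * n = d - l * Nat.gcdA l n := by linear_combination -hbez
      rw [mul_comm (Nat.gcdB l n) (n : ℤ)] at this ⊢
      rw [this]
      rw [Int.sub_emod, Int.mul_emod_right, sub_zero, Int.emod_emod_of_dvd _ dvd_rfl]
      exact Int.emod_eq_of_lt (by exact_mod_cast Nat.zero_le d) (by exact_mod_cast (by omega : d < l))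
    have hcast : (((k * n) % l : ℕ) : ℤ) = (d : ℤ) := by
      rw [← hmod]
      push_cast
      ring
    have hgk : g l r k = d := by
      unfold g
      rw [← hm, ← hn]
      exact_mod_cast hcast
    have hk0 : 0 < k := by
      rcases Nat.eq_zero_or_pos k with h | h
      · exfalso
        rw [h] at hmod
        simp at hmod
        omega
      · exact h
    exact ⟨k, hk0, by omega, by omega⟩

lemma witness {l r : ℕ} (hr : 2 ≤ r) (hl : r ≤ l) (ht : 2 ≤ l % (r - 1)) :
    ∃ k, 0 < k ∧ k < l ∧ g l r k < l % (r - 1) ∧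
      (∀ j, 0 < j → j < k → l % (r - 1) ≤ g l r j) ∧ l < (r - 1) * k := by
  obtain ⟨k0, h1, h2, h3⟩ := exists_lt_t hr hl ht
  have hP : ∃ k, 0 < k ∧ g l r k < l % (r - 1) := ⟨k0, h1, h3⟩
  obtain ⟨k, hkk0, hk0, hgk, hmin⟩ : ∃ k, k ≤ k0 ∧ 0 < k ∧ g l r k < l % (r - 1) ∧
      ∀ j, 0 < j → j < k → l % (r - 1) ≤ g l r j := by
    refine ⟨Nat.find hP, Nat.find_le ⟨h1, h3⟩, (Nat.find_spec hP).1, (Nat.find_spec hP).2, ?_⟩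
    intro j hj0 hjk
    have := Nat.find_min hP hjk
    push_neg at this
    exact this hj0
  refine ⟨k, hk0, by omega, hgk, hmin, ?_⟩
  by_contra hle
  push_neg at hle
  rcases eq_or_lt_of_le hle with heq | hlt
  · have h0 : l % (r - 1) = 0 := by rw [← heq, Nat.mul_mod_right]
    omega
  · have hk1 : 1 ≤ k := hk0
    have hdm : (r - 1) * (l / (r - 1)) + l % (r - 1) = l := Nat.div_add_mod l (r - 1)
    have key : k * (l - (r - 1)) = (l - (r - 1) * k) + (k - 1) * l := by
      zify [show r - 1 ≤ l by omega, hk1, le_of_lt hlt]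
      ring
    have hg : g l r k = l - (r - 1) * k := by
      unfold g
      rw [key, Nat.add_mul_mod_self_right]
      have hj1 : 1 ≤ (r - 1) * k := Nat.mul_pos (by omega) hk1
      exact Nat.mod_eq_of_lt (by omega)
    have hklm : k ≤ l / (r - 1) := by
      have h5 : (r - 1) * k < (r - 1) * (l / (r - 1) + 1) := by
        have h6 : (r - 1) * (l / (r - 1) + 1) = (r - 1) * (l / (r - 1)) + (r - 1) := by ring
        have htm : l % (r - 1) < r - 1 := Nat.mod_lt _ (by omega)
        omega
      have := Nat.lt_of_mul_lt_mul_left h5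
      omega
    have h6 : (r - 1) * k ≤ (r - 1) * (l / (r - 1)) := Nat.mul_le_mul_left _ hklm
    omega


lemma fk_apply_ne {l r k : ℕ} {i : Fin r} (hi : (i : ℕ) + 1 ≠ r) :
    fk l r k i = (k : ℚ) / l := by simp [fk, hi]

lemma fk_apply_eq {l r k : ℕ} {i : Fin r} (hi : (i : ℕ) + 1 = r) :
    fk l r k i = ((g l r k : ℕ) : ℚ) / l := by simp [fk, hi]

lemma decomp {l r : ℕ} (hr : 2 ≤ r) (hl : r ≤ l) (ht : l % (r - 1) ≤ 1)
    {x : Fin r → ℚ} (hx : memN l r x) (h0 : ∀ i, 0 ≤ x i) (hs : (2 : ℚ) ≤ ∑ i, x i) :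
    ∃ a b : Fin r → ℚ, memN l r a ∧ (∀ i, 0 ≤ a i) ∧ a ≠ 0 ∧
      memN l r b ∧ (∀ i, 0 ≤ b i) ∧ b ≠ 0 ∧ x = a + b := by
  have hlQ : (0 : ℚ) < l := by exact_mod_cast (by omega : 0 < l)
  have hl0Q : (l : ℚ) ≠ 0 := ne_of_gt hlQ
  have hi0 : ((⟨0, by omega⟩ : Fin r) : ℕ) + 1 ≠ r := by simp; omega
  by_cases hcase : ∀ i, x i < 1
  · -- fractional case
    have hne : x ≠ 0 := by
      intro h
      rw [h] at hs
      simp at hs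
      linarith
    obtain ⟨k, hk0, hkl, rfl⟩ := struct hr hl hx h0 hcase hne
    -- Σ ≥ 2 gives (r-1)*k > l
    have hsum := sum_fk (l := l) hr k
    rw [hsum] at hs
    rw [le_div_iff₀ hlQ] at hs
    have hcast : ((r : ℚ) - 1) = ((r - 1 : ℕ) : ℚ) := by
      push_cast [Nat.cast_sub (by omega : 1 ≤ r)]; ring
    rw [hcast] at hs
    have hsN : 2 * l ≤ g l r k + (r - 1) * k := by exact_mod_cast hs
    have hgl : g l r k < l := Nat.mod_lt _ (by omega)
    have hlrk : l < (r - 1) * k := by omega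
    set q := l / (r - 1) with hq
    have hq1 : 1 ≤ q := (Nat.one_le_div_iff (by omega)).mpr (by omega)
    have hql : (r - 1) * q ≤ l := by
      rw [hq, mul_comm]
      exact Nat.div_mul_le_self l (r - 1)
    have hqk : q < k := Nat.lt_of_mul_lt_mul_left (a := r - 1) (by omega)
    have hgq : g l r q = l % (r - 1) := g_q hr hl
    have hgqk : g l r q ≤ g l r k := by
      rcases Nat.le_one_iff_eq_zero_or_eq_one.mp ht with h | h
      · omega
      · have := g_pos_of_one hr hl h hk0 hkl
        omega
    refine ⟨fk l r q, fk l r k - fk l r q, memN_fk hr hl q, fk_nonneg q, ?_,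
      memN_sub (memN_fk hr hl k) (memN_fk hr hl q), ?_, ?_, by funext i; simp⟩
    · -- fk q ≠ 0
      apply Function.ne_iff.mpr
      refine ⟨⟨0, by omega⟩, ?_⟩
      rw [fk_apply_ne hi0]
      have : (0 : ℚ) < (q : ℚ) / l := by positivity
      simp only [Pi.zero_apply]
      linarith
    · -- difference nonneg
      intro i
      simp only [Pi.sub_apply]
      by_cases hi : (i : ℕ) + 1 = r
      · rw [fk_apply_eq hi, fk_apply_eq hi]
        rw [div_sub_div_same]
        apply div_nonneg _ (le_of_lt hlQ)
        rw [sub_nonneg]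
        exact_mod_cast hgqk
      · rw [fk_apply_ne hi, fk_apply_ne hi]
        rw [div_sub_div_same]
        apply div_nonneg _ (le_of_lt hlQ)
        rw [sub_nonneg]
        exact_mod_cast le_of_lt hqk
    · -- difference ≠ 0
      apply Function.ne_iff.mpr
      refine ⟨⟨0, by omega⟩, ?_⟩
      simp only [Pi.sub_apply, Pi.zero_apply]
      rw [fk_apply_ne hi0, fk_apply_ne hi0, div_sub_div_same]
      have h1 : (0 : ℚ) < ((k : ℚ) - q) / l := by
        apply div_pos _ hlQ
        rw [sub_pos]
        exact_mod_cast hqk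
      linarith
  · -- some coordinate ≥ 1
    push_neg at hcase
    obtain ⟨i, hi1⟩ := hcase
    set a : Fin r → ℚ := fun j => if j = i then 1 else 0 with hadef
    have hamem : memN l r a := by
      rw [memN_def]
      refine ⟨fun j => if j = i then 1 else 0, 0, fun j => ?_⟩
      by_cases h : j = i <;> simp [hadef, h]
    have hsa : ∑ j, a j = 1 := by
      rw [hadef]
      simp
    refine ⟨a, x - a, hamem, ?_, ?_, memN_sub hx hamem, ?_, ?_, by funext j; simp⟩
    · intro j; rw [hadef]; dsimp only; split <;> norm_num
    · apply Function.ne_iff.mpr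
      exact ⟨i, by rw [hadef]; simp⟩
    · intro j
      simp only [Pi.sub_apply]
      rw [hadef]
      dsimp only
      split
      · next h => rw [h]; linarith [hi1]
      · simp [h0 j]
    · apply Function.ne_iff.mpr
      by_contra hcon
      push_neg at hcon
      have hxa : ∀ j, x j = a j := by
        intro j
        have := hcon j
        simp only [Pi.sub_apply, Pi.zero_apply] at this
        linarith
      have hsx : ∑ j, x j = 1 := by
        rw [Finset.sum_congr rfl (fun j _ => hxa j), hsa]
      linarith


end HilbAux

open HilbAux in
/-- For the singularity of type `(1/l)(1,…,1,l−(r−1))`, the Hilbert basis of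
the positive orthant (w.r.t. the lattice `N`) consists exactly of the lattice
points of the junior simplex if and only if `l ≡ 0` or `l ≡ 1 (mod r−1)`. -/
theorem hilbert_basis_eq_junior_iff (l r : ℕ) (hr : 2 ≤ r) (hl : r ≤ l) :
    ({x : Fin r → ℚ | memN l r x ∧ (∀ i, 0 ≤ x i) ∧ x ≠ 0 ∧
        ¬ ∃ a b : Fin r → ℚ, memN l r a ∧ (∀ i, 0 ≤ a i) ∧ a ≠ 0 ∧
            memN l r b ∧ (∀ i, 0 ≤ b i) ∧ b ≠ 0 ∧ x = a + b}
      = {x : Fin r → ℚ | memN l r x ∧ (∀ i, 0 ≤ x i) ∧ ∑ i, x i = 1})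
    ↔ (l % (r - 1) = 0 ∨ l % (r - 1) = 1) := by
  have hlQ : (0 : ℚ) < l := by exact_mod_cast (by omega : 0 < l)
  have hl0Q : (l : ℚ) ≠ 0 := ne_of_gt hlQ
  obtain ⟨i0, hi0⟩ : ∃ i : Fin r, (i : ℕ) + 1 ≠ r := ⟨⟨0, by omega⟩, by simp; omega⟩
  obtain ⟨iL, hiL⟩ : ∃ i : Fin r, (i : ℕ) + 1 = r := ⟨⟨r - 1, by omega⟩, by simp; omega⟩
  have hcast : ((r : ℚ) - 1) = ((r - 1 : ℕ) : ℚ) := by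
    push_cast [Nat.cast_sub (by omega : 1 ≤ r)]; ring
  constructor
  · intro hEq
    by_contra hcon
    push_neg at hcon
    have ht2 : 2 ≤ l % (r - 1) := by omega
    obtain ⟨k, hk0, hkl, hgkt, hmin, hlk⟩ := witness hr hl ht2
    have hmem : memN l r (fk l r k) := memN_fk hr hl k
    have hxlt : ∀ i, fk l r k i < 1 := by
      intro i
      by_cases hi : (i : ℕ) + 1 = r
      · rw [fk_apply_eq hi, div_lt_one hlQ]
        exact_mod_cast Nat.mod_lt _ (by omega : 0 < l)
      · rw [fk_apply_ne hi, div_lt_one hlQ]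
        exact_mod_cast hkl
    have hne : fk l r k ≠ 0 := by
      apply Function.ne_iff.mpr
      refine ⟨i0, ?_⟩
      rw [fk_apply_ne hi0]
      have : (0 : ℚ) < (k : ℚ) / l := by
        apply div_pos _ hlQ
        exact_mod_cast hk0
      simp only [Pi.zero_apply]
      linarith
    have hirr : ¬ ∃ a b : Fin r → ℚ, memN l r a ∧ (∀ i, 0 ≤ a i) ∧ a ≠ 0 ∧
        memN l r b ∧ (∀ i, 0 ≤ b i) ∧ b ≠ 0 ∧ fk l r k = a + b := by
      rintro ⟨a, b, ha, ha0, hane, hb, hb0, hbne, hab⟩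
      have halt : ∀ i, a i < 1 := by
        intro i
        have h1 : fk l r k i = a i + b i := congrFun hab i
        have h2 := hb0 i
        have h3 := hxlt i
        linarith
      have hblt : ∀ i, b i < 1 := by
        intro i
        have h1 : fk l r k i = a i + b i := congrFun hab i
        have h2 := ha0 i
        have h3 := hxlt i
        linarith
      obtain ⟨j, hj0, hjl, haj⟩ := struct hr hl ha ha0 halt hane
      obtain ⟨j', hj'0, hj'l, hbj⟩ := struct hr hl hb hb0 hblt hbne
      have h1 : (k : ℚ) / l = (j : ℚ) / l + (j' : ℚ) / l := by
        have h := congrFun hab i0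
        rw [haj, hbj] at h
        simp only [Pi.add_apply] at h
        simp only [fk_apply_ne hi0] at h
        exact h
      have hjj' : j + j' = k := by
        rw [← add_div, div_eq_div_iff hl0Q hl0Q] at h1
        have : (k : ℚ) = (j : ℚ) + j' := by
          have := mul_right_cancel₀ hl0Q h1
          exact this
        exact_mod_cast this.symm
      have h2 : ((g l r k : ℕ) : ℚ) / l = ((g l r j : ℕ) : ℚ) / l + ((g l r j' : ℕ) : ℚ) / l := by
        have h := congrFun hab iL
        rw [haj, hbj] at h
        simp only [Pi.add_apply] at h
        simp only [fk_apply_eq hiL] at h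
        exact h
      have hgg : g l r j + g l r j' = g l r k := by
        rw [← add_div, div_eq_div_iff hl0Q hl0Q] at h2
        have : ((g l r k : ℕ) : ℚ) = ((g l r j : ℕ) : ℚ) + ((g l r j' : ℕ) : ℚ) := by
          have := mul_right_cancel₀ hl0Q h2
          exact this
        exact_mod_cast this.symm
      have hjk : j < k := by omega
      have := hmin j hj0 hjk
      omega
    have hin : fk l r k ∈ {x : Fin r → ℚ | memN l r x ∧ (∀ i, 0 ≤ x i) ∧ x ≠ 0 ∧
        ¬ ∃ a b : Fin r → ℚ, memN l r a ∧ (∀ i, 0 ≤ a i) ∧ a ≠ 0 ∧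
            memN l r b ∧ (∀ i, 0 ≤ b i) ∧ b ≠ 0 ∧ x = a + b} :=
      ⟨hmem, fk_nonneg k, hne, hirr⟩
    rw [hEq] at hin
    obtain ⟨-, -, hsum⟩ := hin
    rw [sum_fk hr k] at hsum
    rw [div_eq_one_iff_eq hl0Q, hcast] at hsum
    have hN : g l r k + (r - 1) * k = l := by exact_mod_cast hsum
    omega
  · intro ht
    have ht1 : l % (r - 1) ≤ 1 := by omega
    ext x
    simp only [Set.mem_setOf_eq]
    constructor
    · rintro ⟨hmem, h0, hne, hirr⟩
      refine ⟨hmem, h0, ?_⟩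
      by_contra hsum
      obtain ⟨z, hz⟩ := memN_sum_int hr hl hmem
      have h1 : (1 : ℚ) ≤ ∑ i, x i := sum_ge_one hr hl hmem h0 hne
      have h2 : (2 : ℚ) ≤ ∑ i, x i := by
        rw [hz] at h1 hsum ⊢
        have hz1 : (1 : ℤ) ≤ z := by exact_mod_cast h1
        have hz2 : z ≠ 1 := by
          intro h
          rw [h] at hsum
          simp at hsum
        exact_mod_cast (by omega : (2 : ℤ) ≤ z)
      exact hirr (decomp hr hl ht1 hmem h0 h2)
    · rintro ⟨hmem, h0, hsum⟩
      have hne : x ≠ 0 := by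
        intro h
        rw [h] at hsum
        simp at hsum
      refine ⟨hmem, h0, hne, ?_⟩
      rintro ⟨a, b, ha, ha0, hane, hb, hb0, hbne, hab⟩
      have hsa := sum_ge_one hr hl ha ha0 hane
      have hsb := sum_ge_one hr hl hb hb0 hbne
      have hsplit : ∑ i, x i = ∑ i, a i + ∑ i, b i := by
        rw [hab, ← Finset.sum_add_distrib]
        exact Finset.sum_congr rfl (fun i _ => rfl)
      linarith
end
end
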